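/- arXiv:1401.1745 — 6 statements merged into one kernel-verified Lean document; each statement's English description precedes it below -/
import Mathlib

section
/- Let X be a finite simple graph that belongs to a symmetric association scheme {A_0, A_1, …, A_d}. If X admits perfect state transfer from a vertex u to a vertex v at time τ, then there exist λ ∈ ℂ with |λ| = 1 and an index m ∈ {1, …, d} such that U(τ) = λ·A_m, and A_m is a permutation matrix of order two with no fixed points (i.e., A_m is a symmetric 0–1 permutation matrix with zero diagonal, so A_m² = I). -/
open Matrix

/-- The transition matrix `U(t) = exp(itA)` of the continuous-time quantum walk on `G`. -/
noncomputable def transitionMatrix {V : Type*} [Fintype V] [DecidableEq V]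
    (G : SimpleGraph V) (t : ℝ) : Matrix V V ℂ :=
  letI := Classical.decRel G.Adj
  NormedSpace.exp ((Complex.I * (t : ℂ)) • G.adjMatrix ℂ)

/-- `G` admits perfect state transfer from `u` to `v` at time `t`. -/
def HasPST {V : Type*} [Fintype V] [DecidableEq V]
    (G : SimpleGraph V) (u v : V) (t : ℝ) : Prop :=
  u ≠ v ∧ ∃ μ : ℂ, transitionMatrix G t *ᵥ (Pi.single u 1 : V → ℂ)
      = μ • (Pi.single v 1 : V → ℂ)

/-- A symmetric association scheme with `d` classes. -/
structure IsAssocScheme {V : Type*} [Fintype V] [DecidableEq V] {d : ℕ}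
    (A : Fin (d+1) → Matrix V V ℝ) : Prop where
  entries : ∀ i u v, A i u v = 0 ∨ A i u v = 1
  ident : A 0 = 1
  symm : ∀ i, (A i).IsSymm
  total : ∑ i, A i = Matrix.of fun _ _ => 1
  inter : ∀ i j, ∃ p : Fin (d+1) → ℕ, A i * A j = ∑ k, (p k : ℝ) • A k

/-- `T` is a symmetric 0-1 permutation matrix of order two with no fixed points. -/
def IsPermOrderTwoNoFixed {V : Type*} [Fintype V] [DecidableEq V] (T : Matrix V V ℝ) : Prop :=
  (∀ u v, T u v = 0 ∨ T u v = 1) ∧ T.IsSymm ∧ (∀ u, T u u = 0) ∧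
  T * T = 1 ∧ (∀ u, ∃! v, T u v = 1)

namespace IsAssocScheme

variable {V : Type*} [Fintype V] [DecidableEq V] {d : ℕ}
    {A : Fin (d+1) → Matrix V V ℝ} (hS : IsAssocScheme A)

include hS

lemma nonneg (i : Fin (d+1)) (w x : V) : 0 ≤ A i w x := by
  rcases hS.entries i w x with h | h <;> rw [h] <;> norm_num

lemma total_apply (w x : V) : ∑ i, A i w x = 1 := by
  have := congrArg (fun M : Matrix V V ℝ => M w x) hS.total
  simpa [Matrix.sum_apply] using this

lemma uniq_class (w x : V) : ∃! i, A i w x = 1 := by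
  have htot := hS.total_apply w x
  have hex : ∃ i, A i w x = 1 := by
    by_contra h
    push_neg at h
    have : ∀ i, A i w x = 0 := fun i => (hS.entries i w x).resolve_right (h i)
    simp [this] at htot
  obtain ⟨i, hi⟩ := hex
  refine ⟨i, hi, fun j hj => ?_⟩
  by_contra hij
  have h2 : (2:ℝ) ≤ ∑ k, A k w x := by
    have hsub : ({j, i} : Finset (Fin (d+1))) ⊆ Finset.univ := Finset.subset_univ _
    have := Finset.sum_le_sum_of_subset_of_nonneg hsub
      (fun k _ _ => hS.nonneg k w x)
    rw [Finset.sum_pair hij, hj, hi] at this; linarith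
  rw [htot] at h2; linarith

lemma diag_zero {i : Fin (d+1)} (hi : i ≠ 0) (z : V) : A i z z = 0 := by
  have h0 : A 0 z z = 1 := by rw [hS.ident]; simp
  obtain ⟨k, hk, hku⟩ := hS.uniq_class z z
  rcases hS.entries i z z with h | h
  · exact h
  · exact absurd ((hku i h).trans (hku 0 h0).symm) hi

lemma rowsum_const (i : Fin (d+1)) : ∃ r : ℝ, ∀ z, ∑ w, A i z w = r := by
  obtain ⟨p, hp⟩ := hS.inter i i
  refine ⟨(p 0 : ℝ), fun z => ?_⟩
  have h1 : (A i * A i) z z = ∑ w, A i z w := by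
    rw [Matrix.mul_apply]
    refine Finset.sum_congr rfl fun w _ => ?_
    rw [(hS.symm i).apply z w]
    rcases hS.entries i z w with h | h <;> rw [h] <;> ring
  have h2 : (A i * A i) z z = (p 0 : ℝ) := by
    rw [hp, Matrix.sum_apply]
    rw [Finset.sum_eq_single 0]
    · simp [hS.ident]
    · intro k _ hk
      simp [hS.diag_zero hk]
    · simp
  rw [← h1, h2]

end IsAssocScheme

/-- If a graph `G` belonging to a symmetric association scheme
`{A 0, …, A d}` admits perfect state transfer from `u` to `v` at time `τ`, then
`U(τ) = λ • A m` for some unimodular `λ ∈ ℂ` and some class index `m ≠ 0`, and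
`A m` is a permutation matrix of order two with no fixed points. -/
theorem stmt_0 {V : Type*} [Fintype V] [DecidableEq V] {d : ℕ}
    (G : SimpleGraph V) [DecidableRel G.Adj]
    (A : Fin (d+1) → Matrix V V ℝ)
    (hScheme : IsAssocScheme A)
    (hMem : ∃ coeff : Fin (d+1) → ℝ, G.adjMatrix ℝ = ∑ i, coeff i • A i)
    (u v : V) (τ : ℝ)
    (hpst : HasPST G u v τ) :
    ∃ (lam : ℂ) (m : Fin (d+1)), ‖lam‖ = 1 ∧ m ≠ 0 ∧
      transitionMatrix G τ = lam • (A m).map (fun x : ℝ => (x : ℂ)) ∧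
      IsPermOrderTwoNoFixed (A m) := by
  classical
  obtain ⟨huv, μ, hμ⟩ := hpst
  obtain ⟨coeff, hcoeff⟩ := hMem
  set f := Complex.ofRealHom with hf
  set K : Fin (d+1) → Matrix V V ℂ := fun i => (A i).map f with hKdef
  set B : Matrix V V ℂ := (Complex.I * (τ:ℂ)) • G.adjMatrix ℂ with hBdef
  have hTM : transitionMatrix G τ = NormedSpace.exp B := by
    unfold transitionMatrix
    congr 1
    rw [hBdef]
    congr 1
    ext w x
    by_cases h : G.Adj w x <;> simp [h]
  have hKapp : ∀ (i : Fin (d+1)) (w x : V), K i w x = ((A i w x : ℝ) : ℂ) :=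
    fun _ _ _ => rfl
  set S : Submodule ℂ (Matrix V V ℂ) := Submodule.span ℂ (Set.range K) with hSdef
  have hmapsum : ∀ (cR : Fin (d+1) → ℝ),
      (∑ k, cR k • A k).map f = ∑ k, ((cR k : ℝ) : ℂ) • K k := by
    intro cR
    ext w x
    simp only [Matrix.map_apply, Matrix.sum_apply, Matrix.smul_apply, smul_eq_mul,
      map_sum, hf, Complex.ofRealHom_eq_coe, Complex.ofReal_mul]
    rfl
  have hgen : ∀ i j, K i * K j ∈ S := by
    intro i j
    obtain ⟨p, hp⟩ := hScheme.inter i j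
    have hKij : K i * K j = ∑ k, ((p k : ℝ) : ℂ) • K k := by
      rw [hKdef]
      show (A i).map f * (A j).map f = _
      rw [← Matrix.map_mul, hp, hmapsum]
    rw [hKij]
    exact sum_mem fun k _ => S.smul_mem _ (Submodule.subset_span ⟨k, rfl⟩)
  have hmulK : ∀ i, ∀ y ∈ S, K i * y ∈ S := by
    intro i y hy
    induction hy using Submodule.span_induction with
    | mem z hz => obtain ⟨j, rfl⟩ := hz; exact hgen i j
    | zero => rw [mul_zero]; exact S.zero_mem
    | add y z _ _ ihy ihz => rw [mul_add]; exact S.add_mem ihy ihz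
    | smul a y _ ih => rw [mul_smul_comm]; exact S.smul_mem a ih
  have hmulS : ∀ x ∈ S, ∀ y ∈ S, x * y ∈ S := by
    intro x hx y hy
    induction hx using Submodule.span_induction with
    | mem z hz => obtain ⟨i, rfl⟩ := hz; exact hmulK i y hy
    | zero => rw [zero_mul]; exact S.zero_mem
    | add x z _ _ ihx ihz => rw [add_mul]; exact S.add_mem ihx ihz
    | smul a x _ ih => rw [smul_mul_assoc]; exact S.smul_mem a ih
  have hadjC : G.adjMatrix ℂ = ∑ k, ((coeff k : ℝ) : ℂ) • K k := by
    rw [← hmapsum coeff, ← hcoeff]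
    ext w x
    by_cases h : G.Adj w x <;> simp [h, Matrix.map_apply]
  have hBmem : B ∈ S := by
    rw [hBdef, hadjC]
    exact S.smul_mem _ (sum_mem fun k _ => S.smul_mem _ (Submodule.subset_span ⟨k, rfl⟩))
  have hone : (1 : Matrix V V ℂ) ∈ S := by
    have h1 : K 0 = 1 := by
      rw [hKdef]
      show (A 0).map f = 1
      rw [hScheme.ident]
      exact Matrix.map_one _ (map_zero f) (map_one f)
    rw [← h1]
    exact Submodule.subset_span ⟨0, rfl⟩
  have hpow : ∀ n : ℕ, B ^ n ∈ S := by
    intro n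
    induction n with
    | zero => rw [pow_zero]; exact hone
    | succ n ih => rw [pow_succ]; exact hmulS _ ih _ hBmem
  have hexpS : NormedSpace.exp B ∈ S := by
    have hs : HasSum (fun n : ℕ => ((n.factorial : ℂ)⁻¹) • B ^ n) (NormedSpace.exp B) := by
      letI : SeminormedRing (Matrix V V ℂ) := Matrix.linftyOpSemiNormedRing
      letI : NormedRing (Matrix V V ℂ) := Matrix.linftyOpNormedRing
      letI : NormedAlgebra ℂ (Matrix V V ℂ) := Matrix.linftyOpNormedAlgebra
      exact NormedSpace.exp_series_hasSum_exp' B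
    have hC : IsClosed (S : Set (Matrix V V ℂ)) := S.closed_of_finiteDimensional
    exact hC.mem_of_tendsto hs.tendsto_sum_nat
      (Filter.Eventually.of_forall fun n => sum_mem fun k _ => S.smul_mem _ (hpow k))
  obtain ⟨c, hc⟩ := (Submodule.mem_span_range_iff_exists_fun ℂ).mp hexpS
  have hUentry : ∀ (w x : V) (i : Fin (d+1)), A i w x = 1 →
      NormedSpace.exp B w x = c i := by
    intro w x i hi
    obtain ⟨i', _, hiu⟩ := hScheme.uniq_class w x
    rw [← hc, Matrix.sum_apply, Finset.sum_eq_single i]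
    · rw [Matrix.smul_apply, hKapp, hi, smul_eq_mul]; norm_num
    · intro j _ hj
      have hj0 : A j w x = 0 := by
        rcases hScheme.entries j w x with h | h
        · exact h
        · exact absurd ((hiu j h).trans (hiu i hi).symm) hj
      rw [Matrix.smul_apply, hKapp, hj0, smul_eq_mul]; norm_num
    · simp
  have hcol : ∀ w, NormedSpace.exp B w u = if w = v then μ else 0 := by
    intro w
    rw [hTM] at hμ
    have := congrFun hμ w
    simp only [Matrix.mulVec_single, mul_one, Pi.smul_apply, Pi.single_apply,
      smul_eq_mul, MulOpposite.op_one, one_smul, Matrix.col_apply] at this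
    rw [this]
    by_cases h : w = v <;> simp [h]
  obtain ⟨m, hm1, hmu⟩ := hScheme.uniq_class v u
  have hm0 : m ≠ 0 := by
    rintro rfl
    rw [hScheme.ident, Matrix.one_apply_ne (Ne.symm huv)] at hm1
    exact zero_ne_one hm1
  have hcm : c m = μ := by
    have h1 := hUentry v u m hm1
    have h2 := hcol v
    rw [if_pos rfl] at h2
    rw [← h1, h2]
  have hci0 : ∀ i, i ≠ m → (∃ a b, A i a b = 1) → c i = 0 := by
    rintro i him ⟨a, b, hab⟩
    obtain ⟨r, hr⟩ := hScheme.rowsum_const i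
    have hru : (1:ℝ) ≤ ∑ w, A i u w := by
      rw [hr u, ← hr a]
      calc (1:ℝ) = A i a b := hab.symm
      _ ≤ ∑ w, A i a w :=
        Finset.single_le_sum (fun w _ => hScheme.nonneg i a w) (Finset.mem_univ b)
    have hex : ∃ w, A i u w = 1 := by
      by_contra h
      push_neg at h
      have hz : ∀ w, A i u w = 0 := fun w => (hScheme.entries i u w).resolve_right (h w)
      rw [Finset.sum_congr rfl fun w _ => hz w] at hru
      norm_num at hru
    obtain ⟨w, hw⟩ := hex
    have hwu : A i w u = 1 := by rw [(hScheme.symm i).apply u w]; exact hw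
    have hwv : w ≠ v := by rintro rfl; exact him (hmu i hwu)
    have h1 := hUentry w u i hwu
    rw [hcol w, if_neg hwv] at h1
    exact h1.symm
  have hU : NormedSpace.exp B = μ • K m := by
    ext w x
    rw [Matrix.smul_apply, hKapp, smul_eq_mul]
    obtain ⟨i, hi, hiu⟩ := hScheme.uniq_class w x
    by_cases him : i = m
    · subst him
      rw [hUentry w x i hi, hcm, hi]
      norm_num
    · have hmz : A m w x = 0 := by
        rcases hScheme.entries m w x with h | h
        · exact h
        · exact absurd (hiu m h) (by simpa [eq_comm] using him)
      rw [hUentry w x i hi, hci0 i him ⟨w, x, hi⟩, hmz]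
      norm_num
  have hadjH : (G.adjMatrix ℂ)ᴴ = G.adjMatrix ℂ := by
    ext w x
    rw [Matrix.conjTranspose_apply]
    have hsym : G.Adj x w ↔ G.Adj w x := G.adj_comm x w
    by_cases h : G.Adj w x <;> simp [h, hsym]
  have hBH : Bᴴ = -B := by
    rw [hBdef, Matrix.conjTranspose_smul, hadjH,
      show star (Complex.I * (τ:ℂ)) = -(Complex.I * (τ:ℂ)) by
        simp [Complex.star_def, _root_.map_mul, Complex.conj_I, Complex.conj_ofReal],
      neg_smul]
  have hunit : NormedSpace.exp B * (NormedSpace.exp B)ᴴ = 1 := by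
    rw [← Matrix.exp_conjTranspose, hBH,
      ← Matrix.exp_add_of_commute B (-B) ((Commute.refl B).neg_right),
      add_neg_cancel, NormedSpace.exp_zero]
  have hKmH : (K m)ᴴ = K m := by
    ext w x
    have hsym := (hScheme.symm m).apply w x
    rw [Matrix.conjTranspose_apply, hKapp, hKapp, hsym]
    simp [Complex.star_def, Complex.conj_ofReal]
  have hq : ((Complex.normSq μ : ℝ) : ℂ) • (K m * K m) = 1 := by
    have h := hunit
    rw [hU, Matrix.conjTranspose_smul, hKmH, smul_mul_assoc, mul_smul_comm,
      smul_smul, Complex.star_def, Complex.mul_conj] at h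
    exact h
  have hμ0 : μ ≠ 0 := by
    intro h
    have h2 := congrArg (fun M : Matrix V V ℂ => M u u) hq
    simp [h, Matrix.one_apply_eq] at h2
  have hcolm : ∀ w, A m w u = if w = v then 1 else 0 := by
    intro w
    have h1 := hcol w
    rw [hU, Matrix.smul_apply, hKapp, smul_eq_mul] at h1
    by_cases hwv : w = v
    · rw [if_pos hwv] at h1 ⊢
      have h2 : ((A m w u : ℝ) : ℂ) = 1 :=
        mul_left_cancel₀ hμ0 (h1.trans (mul_one μ).symm)
      exact_mod_cast h2
    · rw [if_neg hwv] at h1 ⊢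
      rcases mul_eq_zero.mp h1 with h | h
      · exact absurd h hμ0
      · exact_mod_cast h
  have hsum1 : ∀ z, ∑ w, A m z w = 1 := by
    obtain ⟨r, hr⟩ := hScheme.rowsum_const m
    have hu1 : ∑ w, A m u w = 1 := by
      have heach : ∀ w, A m u w = if w = v then 1 else 0 := fun w => by
        rw [(hScheme.symm m).apply w u]; exact hcolm w
      simp [heach]
    intro z
    rw [hr z, ← hr u, hu1]
  have hKKuu : (K m * K m) u u = 1 := by
    rw [Matrix.mul_apply]
    have heach : ∀ w, K m u w * K m w u = ((A m u w : ℝ) : ℂ) := fun w => by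
      rw [hKapp, hKapp, (hScheme.symm m).apply u w]
      rcases hScheme.entries m u w with h | h <;> rw [h] <;> norm_num
    rw [Finset.sum_congr rfl fun w _ => heach w]
    rw [← Complex.ofReal_sum, hsum1 u, Complex.ofReal_one]
  have hnsq : Complex.normSq μ = 1 := by
    have h2 := congrArg (fun M : Matrix V V ℂ => M u u) hq
    simp only [Matrix.smul_apply, smul_eq_mul, Matrix.one_apply_eq] at h2
    rw [hKKuu, mul_one] at h2
    exact_mod_cast h2
  have habs : ‖μ‖ = 1 := by
    rw [Complex.norm_def, hnsq, Real.sqrt_one]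
  have hKm2 : K m * K m = 1 := by
    have h := hq
    rw [hnsq] at h
    simpa using h
  have hAm2 : A m * A m = 1 := by
    ext w x
    have h2 := congrArg (fun M : Matrix V V ℂ => M w x) hKm2
    have hmap : K m * K m = (A m * A m).map f := by
      rw [hKdef]
      show (A m).map f * (A m).map f = _
      rw [← Matrix.map_mul]
    rw [hmap] at h2
    simp only [Matrix.map_apply, Matrix.one_apply, hf,
      Complex.ofRealHom_eq_coe] at h2 ⊢
    by_cases hwx : w = x
    · rw [if_pos hwx] at h2 ⊢; exact_mod_cast h2
    · rw [if_neg hwx] at h2 ⊢; exact_mod_cast h2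
  have hperm : ∀ z, ∃! w, A m z w = 1 := by
    intro z
    have hz := hsum1 z
    have hex : ∃ w, A m z w = 1 := by
      by_contra h
      push_neg at h
      have h0 : ∀ w, A m z w = 0 := fun w => (hScheme.entries m z w).resolve_right (h w)
      simp [h0] at hz
    obtain ⟨w, hw⟩ := hex
    refine ⟨w, hw, fun y hy => ?_⟩
    by_contra hyw
    have h2 : (2:ℝ) ≤ ∑ x, A m z x := by
      have := Finset.sum_le_sum_of_subset_of_nonneg
        (Finset.subset_univ ({y, w} : Finset V)) (fun k _ _ => hScheme.nonneg m z k)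
      rw [Finset.sum_pair hyw, hy, hw] at this; linarith
    rw [hz] at h2; linarith
  exact ⟨μ, m, habs, hm0, hTM.trans hU,
    hScheme.entries m, hScheme.symm m, fun z => hScheme.diag_zero hm0 z, hAm2, hperm⟩
end

section
/- Let X be a distance-regular graph of diameter d that admits perfect state transfer from a vertex u to a vertex v at time τ. Then X is antipodal with fibres of size 2, i.e., every vertex of X has exactly one vertex at distance d from it; moreover dist(u, v) = d, the distance-d matrix A_d is a permutation matrix of order two with no fixed points, and U(τ) = λ·A_d for some λ ∈ ℂ with |λ| = 1. -/
open Matrix Nat Finset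

set_option linter.unusedSectionVars false
set_option maxHeartbeats 2000000

section Aux
variable {V : Type*} [Fintype V] [DecidableEq V] {G : SimpleGraph V}

/-- entries of the matrix exponential as a series -/
lemma PSTaux.entry_exp (M : Matrix V V ℂ) (w x : V) :
    NormedSpace.exp M w x = ∑' n : ℕ, ((n ! : ℂ)⁻¹ * (M ^ n) w x) := by
  letI : SeminormedRing (Matrix V V ℂ) := Matrix.linftyOpSemiNormedRing
  letI : NormedRing (Matrix V V ℂ) := Matrix.linftyOpNormedRing
  letI : NormedAlgebra ℂ (Matrix V V ℂ) := Matrix.linftyOpNormedAlgebra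
  have hs : Summable (fun n : ℕ => ((n ! : ℂ)⁻¹) • M ^ n) :=
    NormedSpace.expSeries_summable' (𝕂 := ℂ) M
  have key : NormedSpace.exp M = ∑' n : ℕ, ((n ! : ℂ)⁻¹) • M ^ n := by
    rw [NormedSpace.exp_eq_tsum ℂ]
  have h1 : (∑' n : ℕ, ((n ! : ℂ)⁻¹) • M ^ n) w = ∑' n : ℕ, (((n ! : ℂ)⁻¹) • M ^ n) w :=
    tsum_apply hs
  rw [key, h1, tsum_apply (Pi.summable.mp hs w)]
  exact tsum_congr fun n => rfl

lemma PSTaux.getVert_dist_le (hconn : G.Connected) {p q : V} (W : G.Walk p q) :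
    ∀ l k, k ≤ l → l ≤ W.length → G.dist (W.getVert k) (W.getVert l) ≤ l - k := by
  intro l
  induction l with
  | zero => intro k hk _; interval_cases k; simp [SimpleGraph.dist_self]
  | succ l' ih =>
    intro k hk hl
    rcases Nat.eq_or_lt_of_le hk with rfl | hlt
    · simp [SimpleGraph.dist_self]
    · have h1 : G.dist (W.getVert k) (W.getVert l') ≤ l' - k := ih k (by omega) (by omega)
      have h2 : G.Adj (W.getVert l') (W.getVert (l' + 1)) := W.adj_getVert_succ (by omega)
      calc G.dist (W.getVert k) (W.getVert (l' + 1))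
          ≤ G.dist (W.getVert k) (W.getVert l') + G.dist (W.getVert l') (W.getVert (l'+1)) :=
            hconn.dist_triangle
        _ ≤ (l' - k) + 1 := Nat.add_le_add h1 (le_of_eq (SimpleGraph.dist_eq_one_iff_adj.mpr h2))
        _ = l' + 1 - k := by omega

/-- On a geodesic from `p` to `q`, there are vertices at prescribed positions. -/
lemma PSTaux.geodesic_points (hconn : G.Connected) (p q : V) (k l : ℕ)
    (hkl : k ≤ l) (hl : l ≤ G.dist p q) :
    ∃ m m', G.dist p m = k ∧ G.dist m m' = l - k ∧ G.dist m' q = G.dist p q - l := by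
  obtain ⟨W, hW⟩ := hconn.exists_walk_length_eq_dist p q
  refine ⟨W.getVert k, W.getVert l, ?_, ?_, ?_⟩ <;>
  · have e0 : W.getVert 0 = p := W.getVert_zero
    have eL : W.getVert W.length = q := W.getVert_length
    have h1 : G.dist (W.getVert 0) (W.getVert k) ≤ k - 0 :=
      PSTaux.getVert_dist_le hconn W k 0 (by omega) (by omega)
    have h2 : G.dist (W.getVert k) (W.getVert l) ≤ l - k :=
      PSTaux.getVert_dist_le hconn W l k hkl (by omega)
    have h3 : G.dist (W.getVert l) (W.getVert W.length) ≤ W.length - l :=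
      PSTaux.getVert_dist_le hconn W W.length l (by omega) (by omega)
    rw [e0] at h1; rw [eL] at h3
    have t1 : G.dist p q ≤ G.dist p (W.getVert k) + G.dist (W.getVert k) q := hconn.dist_triangle
    have t2 : G.dist (W.getVert k) q
        ≤ G.dist (W.getVert k) (W.getVert l) + G.dist (W.getVert l) q := hconn.dist_triangle
    omega

lemma PSTaux.sum_helper (s t : Finset V) (f g : V → ℂ) (hcard : s.card = t.card)
    (hval : ∀ y ∈ s, ∀ z ∈ t, f y = g z) : ∑ y ∈ s, f y = ∑ z ∈ t, g z := by
  rcases s.eq_empty_or_nonempty with rfl | ⟨y0, hy0⟩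
  · rw [Finset.card_empty, eq_comm, Finset.card_eq_zero] at hcard
    simp [hcard]
  · have ht : t.Nonempty := by
      rw [← Finset.card_pos, ← hcard, Finset.card_pos]; exact ⟨y0, hy0⟩
    obtain ⟨z0, hz0⟩ := ht
    calc ∑ y ∈ s, f y = ∑ _y ∈ s, g z0 := Finset.sum_congr rfl fun y hy => hval y hy z0 hz0
      _ = s.card • g z0 := by rw [Finset.sum_const]
      _ = t.card • g z0 := by rw [hcard]
      _ = ∑ _z ∈ t, g z0 := by rw [Finset.sum_const]
      _ = ∑ z ∈ t, g z := Finset.sum_congr rfl fun z hz => by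
            rw [← hval y0 hy0 z hz, hval y0 hy0 z0 hz0]

lemma PSTaux.natCard_eq_filter_card (P : V → Prop) [DecidablePred P] :
    Nat.card {w : V // P w} = (Finset.univ.filter P).card := by
  rw [Nat.card_eq_fintype_card, Fintype.card_subtype]

end Aux

section DRGAux
variable {V : Type*} [Fintype V] [DecidableEq V] {G : SimpleGraph V} [DecidableRel G.Adj]
variable {d : ℕ} {b c : ℕ → ℕ}

namespace PSTaux

/-- degree of every vertex is `b 0` -/
lemma deg_eq (hb : ∀ i, i ≤ d - 1 → ∀ u v : V, G.dist u v = i →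
      Nat.card {w : V // G.Adj v w ∧ G.dist u w = i + 1} = b i) (w : V) :
    (G.neighborFinset w).card = b 0 := by
  have h := hb 0 (Nat.zero_le _) w w (SimpleGraph.dist_self)
  rw [natCard_eq_filter_card] at h
  rw [← h]
  congr 1
  ext y
  simp only [SimpleGraph.mem_neighborFinset, Finset.mem_filter, Finset.mem_univ, true_and,
    zero_add]
  constructor
  · intro hadj; exact ⟨hadj, SimpleGraph.dist_eq_one_iff_adj.mpr hadj⟩
  · rintro ⟨hadj, _⟩; exact hadj

lemma c_count (hc : ∀ i, 1 ≤ i → i ≤ d → ∀ u v : V, G.dist u v = i →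
      Nat.card {w : V // G.Adj v w ∧ G.dist u w = i - 1} = c i)
    {i : ℕ} (hi1 : 1 ≤ i) (hid : i ≤ d) {x w : V} (hxw : G.dist x w = i) :
    ((G.neighborFinset w).filter (fun y => G.dist x y = i - 1)).card = c i := by
  have h := hc i hi1 hid x w hxw
  rw [natCard_eq_filter_card] at h
  rw [← h]
  congr 1
  ext y
  simp [SimpleGraph.mem_neighborFinset, and_comm]

lemma b_count (hb : ∀ i, i ≤ d - 1 → ∀ u v : V, G.dist u v = i →
      Nat.card {w : V // G.Adj v w ∧ G.dist u w = i + 1} = b i)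
    {i : ℕ} (hid : i ≤ d - 1) {x w : V} (hxw : G.dist x w = i) :
    ((G.neighborFinset w).filter (fun y => G.dist x y = i + 1)).card = b i := by
  have h := hb i hid x w hxw
  rw [natCard_eq_filter_card] at h
  rw [← h]
  congr 1
  ext y
  simp [SimpleGraph.mem_neighborFinset, and_comm]

lemma b_count_top (hle : ∀ u v : V, G.dist u v ≤ d)
    {i : ℕ} (hid : ¬ (i ≤ d - 1)) {x w : V} (hxw : G.dist x w = i) :
    ((G.neighborFinset w).filter (fun y => G.dist x y = i + 1)).card = 0 := by
  have hi : i ≤ d := hxw ▸ hle x w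
  rw [Finset.card_eq_zero, Finset.filter_eq_empty_iff]
  intro y _
  have := hle x y
  omega

/-- neighbours partition into three distance classes -/
lemma neighbor_partition (hconn : G.Connected) {i : ℕ} (hi1 : 1 ≤ i) {x w : V}
    (hxw : G.dist x w = i) :
    (G.neighborFinset w).card
      = ((G.neighborFinset w).filter (fun y => G.dist x y = i - 1)).card
      + ((G.neighborFinset w).filter (fun y => G.dist x y = i)).card
      + ((G.neighborFinset w).filter (fun y => G.dist x y = i + 1)).card := by
  classical
  set s := G.neighborFinset w
  have key : ∀ y ∈ s, G.dist x y = i - 1 ∨ G.dist x y = i ∨ G.dist x y = i + 1 := by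
    intro y hy
    rw [SimpleGraph.mem_neighborFinset] at hy
    have h1 : G.dist w y = 1 := SimpleGraph.dist_eq_one_iff_adj.mpr hy
    have h2 : G.dist y w = 1 := SimpleGraph.dist_comm ▸ h1
    have t1 : G.dist x y ≤ G.dist x w + G.dist w y := hconn.dist_triangle
    have t2 : G.dist x w ≤ G.dist x y + G.dist y w := hconn.dist_triangle
    omega
  have h1 := Finset.card_filter_add_card_filter_not
    (s := s) (p := fun y => G.dist x y = i - 1)
  have h2 := Finset.card_filter_add_card_filter_not
    (s := s.filter (fun y => ¬ G.dist x y = i - 1)) (p := fun y => G.dist x y = i)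
  rw [Finset.filter_filter, Finset.filter_filter] at h2
  have e1 : s.filter (fun y => ¬G.dist x y = i - 1 ∧ G.dist x y = i)
      = s.filter (fun y => G.dist x y = i) := by
    apply Finset.filter_congr; intro y _; constructor
    · rintro ⟨_, h⟩; exact h
    · intro h; exact ⟨by omega, h⟩
  have e2 : s.filter (fun y => ¬G.dist x y = i - 1 ∧ ¬ G.dist x y = i)
      = s.filter (fun y => G.dist x y = i + 1) := by
    apply Finset.filter_congr; intro y hy
    have := key y hy
    constructor
    · rintro ⟨h1', h2'⟩; omega
    · intro h; constructor <;> omega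
  rw [e1, e2] at h2
  omega

end PSTaux
end DRGAux

section DRGAux2
variable {V : Type*} [Fintype V] [DecidableEq V] {G : SimpleGraph V} [DecidableRel G.Adj]
variable {d : ℕ} {b c : ℕ → ℕ}
namespace PSTaux

lemma pow_dist (hconn : G.Connected) (hle : ∀ u v : V, G.dist u v ≤ d)
    (hc : ∀ i, 1 ≤ i → i ≤ d → ∀ u v : V, G.dist u v = i →
      Nat.card {w : V // G.Adj v w ∧ G.dist u w = i - 1} = c i)
    (hb : ∀ i, i ≤ d - 1 → ∀ u v : V, G.dist u v = i →
      Nat.card {w : V // G.Adj v w ∧ G.dist u w = i + 1} = b i) :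
    ∀ (n : ℕ) (w x w' x' : V), G.dist w x = G.dist w' x' →
      ((G.adjMatrix ℂ) ^ n) w x = ((G.adjMatrix ℂ) ^ n) w' x' := by
  intro n
  induction n with
  | zero =>
    intro w x w' x' hd
    simp only [pow_zero, Matrix.one_apply]
    by_cases hwx : w = x
    · subst hwx
      rw [SimpleGraph.dist_self, eq_comm, hconn.dist_eq_zero_iff] at hd
      simp [hd]
    · have : w' ≠ x' := by
        intro he; subst he
        rw [SimpleGraph.dist_self, hconn.dist_eq_zero_iff] at hd
        exact hwx hd
      simp [hwx, this]
  | succ n ih =>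
    intro w x w' x' hd
    rw [_root_.pow_succ', SimpleGraph.adjMatrix_mul_apply, SimpleGraph.adjMatrix_mul_apply]
    set i := G.dist w x with hi
    have hxw : G.dist x w = i := by rw [SimpleGraph.dist_comm]
    have hxw' : G.dist x' w' = i := by rw [SimpleGraph.dist_comm]; omega
    rcases Nat.eq_zero_or_pos i with hi0 | hi1
    · have hwx : w = x := hconn.dist_eq_zero_iff.mp (by omega)
      have hwx' : w' = x' := hconn.dist_eq_zero_iff.mp (by omega)
      subst hwx; subst hwx'
      apply sum_helper _ _ _ _ (by rw [deg_eq hb, deg_eq hb])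
      intro y hy z hz
      rw [SimpleGraph.mem_neighborFinset] at hy hz
      apply ih
      rw [SimpleGraph.dist_comm (u := y), SimpleGraph.dist_comm (u := z),
        SimpleGraph.dist_eq_one_iff_adj.mpr hy, SimpleGraph.dist_eq_one_iff_adj.mpr hz]
    · have hid : i ≤ d := by rw [hi]; exact hle w x
      have split : ∀ (xx a : V), G.dist xx a = i → ∀ (F : V → ℂ),
          ∑ y ∈ G.neighborFinset a, F y
            = ∑ y ∈ (G.neighborFinset a).filter (fun y => G.dist xx y = i - 1), F y
            + ∑ y ∈ (G.neighborFinset a).filter (fun y => G.dist xx y = i), F y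
            + ∑ y ∈ (G.neighborFinset a).filter (fun y => G.dist xx y = i + 1), F y := by
        intro xx a ha F
        have key : ∀ y ∈ G.neighborFinset a,
            G.dist xx y = i - 1 ∨ G.dist xx y = i ∨ G.dist xx y = i + 1 := by
          intro y hy
          rw [SimpleGraph.mem_neighborFinset] at hy
          have h1 : G.dist a y = 1 := SimpleGraph.dist_eq_one_iff_adj.mpr hy
          have h2 : G.dist y a = 1 := SimpleGraph.dist_comm ▸ h1
          have t1 : G.dist xx y ≤ G.dist xx a + G.dist a y := hconn.dist_triangle
          have t2 : G.dist xx a ≤ G.dist xx y + G.dist y a := hconn.dist_triangle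
          omega
        rw [← Finset.sum_filter_add_sum_filter_not (G.neighborFinset a)
          (fun y => G.dist xx y = i - 1) F]
        rw [← Finset.sum_filter_add_sum_filter_not
          ((G.neighborFinset a).filter (fun y => ¬ G.dist xx y = i - 1))
          (fun y => G.dist xx y = i) F]
        rw [Finset.filter_filter, Finset.filter_filter]
        have e1 : (G.neighborFinset a).filter (fun y => ¬G.dist xx y = i - 1 ∧ G.dist xx y = i)
            = (G.neighborFinset a).filter (fun y => G.dist xx y = i) := by
          apply Finset.filter_congr; intro y _
          constructor
          · rintro ⟨_, h⟩; exact h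
          · intro h; exact ⟨by omega, h⟩
        have e2 : (G.neighborFinset a).filter (fun y => ¬G.dist xx y = i - 1 ∧ ¬ G.dist xx y = i)
            = (G.neighborFinset a).filter (fun y => G.dist xx y = i + 1) := by
          apply Finset.filter_congr; intro y hy
          have := key y hy
          constructor
          · rintro ⟨h1', h2'⟩; omega
          · intro h; constructor <;> omega
        rw [e1, e2, add_assoc]
      rw [split x w hxw, split x' w' hxw']
      congr 1
      congr 1
      · apply sum_helper _ _ _ _ (by rw [c_count hc hi1 hid hxw, c_count hc hi1 hid hxw'])
        intro y hy z hz
        apply ih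
        rw [Finset.mem_filter] at hy hz
        rw [SimpleGraph.dist_comm (u := y), SimpleGraph.dist_comm (u := z), hy.2, hz.2]
      · have hcard0 : ((G.neighborFinset w).filter (fun y => G.dist x y = i)).card
            = ((G.neighborFinset w').filter (fun y => G.dist x' y = i)).card := by
          have p1 := neighbor_partition (G := G) hconn hi1 hxw
          have p2 := neighbor_partition (G := G) hconn hi1 hxw'
          have d1 := deg_eq hb w
          have d2 := deg_eq hb w'
          have c1 := c_count hc hi1 hid hxw
          have c2 := c_count hc hi1 hid hxw'
          by_cases hble : i ≤ d - 1
          · have b1 := b_count hb hble hxw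
            have b2 := b_count hb hble hxw'
            omega
          · have b1 := b_count_top hle hble hxw
            have b2 := b_count_top hle hble hxw'
            omega
        apply sum_helper _ _ _ _ hcard0
        intro y hy z hz
        apply ih
        rw [Finset.mem_filter] at hy hz
        rw [SimpleGraph.dist_comm (u := y), SimpleGraph.dist_comm (u := z), hy.2, hz.2]
      · have hcard1 : ((G.neighborFinset w).filter (fun y => G.dist x y = i + 1)).card
            = ((G.neighborFinset w').filter (fun y => G.dist x' y = i + 1)).card := by
          by_cases hble : i ≤ d - 1
          · rw [b_count hb hble hxw, b_count hb hble hxw']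
          · rw [b_count_top hle hble hxw, b_count_top hle hble hxw']
        apply sum_helper _ _ _ _ hcard1
        intro y hy z hz
        apply ih
        rw [Finset.mem_filter] at hy hz
        rw [SimpleGraph.dist_comm (u := y), SimpleGraph.dist_comm (u := z), hy.2, hz.2]

end PSTaux
end DRGAux2

section DRGAux3
variable {V : Type*} [Fintype V] [DecidableEq V] {G : SimpleGraph V} [DecidableRel G.Adj]
variable {d : ℕ} {b c : ℕ → ℕ}
namespace PSTaux

/-- every distance `i ≤ d` is realised by some pair -/
lemma dist_realized (hconn : G.Connected) {p q : V} (hpq : G.dist p q = d)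
    {i : ℕ} (hid : i ≤ d) : ∃ x y : V, G.dist x y = i := by
  obtain ⟨m, m', h1, _, _⟩ := geodesic_points hconn p q i i le_rfl (by omega)
  exact ⟨p, m, h1⟩

/-- `c i` is positive for `1 ≤ i ≤ d` -/
lemma c_pos (hconn : G.Connected) {p q : V} (hpq : G.dist p q = d)
    (hc : ∀ i, 1 ≤ i → i ≤ d → ∀ u v : V, G.dist u v = i →
      Nat.card {w : V // G.Adj v w ∧ G.dist u w = i - 1} = c i)
    {i : ℕ} (hi1 : 1 ≤ i) (hid : i ≤ d) : 1 ≤ c i := by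
  obtain ⟨x, y, hxy⟩ := dist_realized hconn hpq hid
  obtain ⟨m, m', h1, h2, h3⟩ := geodesic_points hconn x y (i-1) i (by omega) (by omega)
  rw [hxy] at h3
  have hsub : i - (i-1) = 1 := by omega
  rw [hsub] at h2
  have hm' : m' = y := hconn.dist_eq_zero_iff.mp (by omega)
  rw [hm'] at h2
  have hadj : G.Adj y m := (SimpleGraph.dist_eq_one_iff_adj.mp h2).symm
  have hcc := hc i hi1 hid x y hxy
  rw [← hcc]
  have hne : Nonempty {w : V // G.Adj y w ∧ G.dist x w = i - 1} := ⟨⟨m, hadj, h1⟩⟩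
  exact Nat.one_le_iff_ne_zero.mpr (Nat.card_ne_zero.mpr ⟨hne, inferInstance⟩)

/-- double counting edges between consecutive spheres -/
lemma double_count (hconn : G.Connected)
    (hc : ∀ i, 1 ≤ i → i ≤ d → ∀ u v : V, G.dist u v = i →
      Nat.card {w : V // G.Adj v w ∧ G.dist u w = i - 1} = c i)
    (hb : ∀ i, i ≤ d - 1 → ∀ u v : V, G.dist u v = i →
      Nat.card {w : V // G.Adj v w ∧ G.dist u w = i + 1} = b i)
    {i : ℕ} (hid : i + 1 ≤ d) (w : V) :
    c (i+1) * (Finset.univ.filter (fun y => G.dist w y = i + 1)).card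
      = b i * (Finset.univ.filter (fun y => G.dist w y = i)).card := by
  set S1 := Finset.univ.filter (fun y => G.dist w y = i + 1) with hS1
  set S0 := Finset.univ.filter (fun y => G.dist w y = i) with hS0
  have key1 : ∀ x ∈ S1, (S0.filter (fun y => G.Adj x y)).card = c (i+1) := by
    intro x hx
    rw [hS0] at *
    rw [Finset.mem_filter] at hx
    have := c_count (d := d) hc (by omega) hid (x := w) (w := x) hx.2
    rw [← this]
    congr 1
    ext y
    simp only [Finset.mem_filter, Finset.mem_univ, true_and, SimpleGraph.mem_neighborFinset,
      Nat.add_sub_cancel]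
    tauto
  have key0 : ∀ y ∈ S0, (S1.filter (fun x => G.Adj y x)).card = b i := by
    intro y hy
    rw [Finset.mem_filter] at hy
    have := b_count (d := d) hb (by omega) (x := w) (w := y) hy.2
    rw [← this]
    congr 1
    ext z
    simp only [hS1, Finset.mem_filter, Finset.mem_univ, true_and,
      SimpleGraph.mem_neighborFinset]
    tauto
  calc c (i+1) * S1.card = ∑ _x ∈ S1, c (i+1) := by rw [Finset.sum_const, smul_eq_mul, mul_comm]
    _ = ∑ x ∈ S1, (S0.filter (fun y => G.Adj x y)).card := (Finset.sum_congr rfl key1).symm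
    _ = ∑ x ∈ S1, ∑ y ∈ S0, (if G.Adj x y then 1 else 0) := by
        refine Finset.sum_congr rfl fun x _ => ?_
        rw [Finset.card_filter]
    _ = ∑ y ∈ S0, ∑ x ∈ S1, (if G.Adj x y then 1 else 0) := Finset.sum_comm
    _ = ∑ y ∈ S0, (S1.filter (fun x => G.Adj y x)).card := by
        refine Finset.sum_congr rfl fun y _ => ?_
        rw [Finset.card_filter]
        refine Finset.sum_congr rfl fun x _ => ?_
        by_cases h : G.Adj x y
        · rw [if_pos h, if_pos h.symm]
        · rw [if_neg h, if_neg (fun hh => h hh.symm)]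
    _ = ∑ _y ∈ S0, b i := Finset.sum_congr rfl key0
    _ = b i * S0.card := by rw [Finset.sum_const, smul_eq_mul, mul_comm]

/-- sphere cardinalities do not depend on the centre -/
lemma sphere_card_eq (hconn : G.Connected) {p q : V} (hpq : G.dist p q = d)
    (hc : ∀ i, 1 ≤ i → i ≤ d → ∀ u v : V, G.dist u v = i →
      Nat.card {w : V // G.Adj v w ∧ G.dist u w = i - 1} = c i)
    (hb : ∀ i, i ≤ d - 1 → ∀ u v : V, G.dist u v = i →
      Nat.card {w : V // G.Adj v w ∧ G.dist u w = i + 1} = b i) :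
    ∀ i, i ≤ d → ∀ w w' : V,
      (Finset.univ.filter (fun y => G.dist w y = i)).card
        = (Finset.univ.filter (fun y => G.dist w' y = i)).card := by
  intro i
  induction i with
  | zero =>
    intro _ w w'
    have e : ∀ z : V, Finset.univ.filter (fun y => G.dist z y = 0) = {z} := by
      intro z; ext y
      simp [hconn.dist_eq_zero_iff, eq_comm]
    rw [e w, e w', Finset.card_singleton, Finset.card_singleton]
  | succ i ih =>
    intro hi w w'
    have h1 := double_count (d := d) hconn hc hb hi w
    have h2 := double_count (d := d) hconn hc hb hi w'
    have h3 := ih (by omega) w w'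
    have hcpos := c_pos (d := d) hconn hpq hc (i := i + 1) (by omega) hi
    apply Nat.eq_of_mul_eq_mul_left (show 0 < c (i+1) by omega)
    rw [h1, h2, h3]

end PSTaux
end DRGAux3


/-- `G` is a distance-regular graph of diameter `d` with intersection parameters `b`, `c`. -/
def IsDRG {V : Type*} [Fintype V] [DecidableEq V] (G : SimpleGraph V)
    (d : ℕ) (b c : ℕ → ℕ) : Prop :=
  G.Connected ∧ (∀ u v, G.dist u v ≤ d) ∧ (∃ u v, G.dist u v = d) ∧
  (∀ i, 1 ≤ i → i ≤ d → ∀ u v : V, G.dist u v = i →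
      Nat.card {w : V // G.Adj v w ∧ G.dist u w = i - 1} = c i) ∧
  (∀ i, i ≤ d - 1 → ∀ u v : V, G.dist u v = i →
      Nat.card {w : V // G.Adj v w ∧ G.dist u w = i + 1} = b i)

/-- The `i`-th distance matrix of a graph. -/
noncomputable def distMatrix {V : Type*} [Fintype V] [DecidableEq V] (G : SimpleGraph V)
    (i : ℕ) : Matrix V V ℝ :=
  Matrix.of fun u v => if G.dist u v = i then 1 else 0

/-- A distance-regular graph of diameter `d` admitting perfect state
transfer from `u` to `v` at time `τ` is antipodal with fibres of size 2, the
vertices `u`, `v` are at distance `d`, the distance-`d` matrix is a fixed-point-free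
permutation matrix of order two, and `U(τ) = λ • A_d` with `|λ| = 1`. -/
theorem stmt_1 {V : Type*} [Fintype V] [DecidableEq V] {d : ℕ}
    (G : SimpleGraph V)
    (hdrg : ∃ b c : ℕ → ℕ, IsDRG G d b c)
    (u v : V) (τ : ℝ)
    (hpst : HasPST G u v τ) :
    (∀ w : V, ∃! x : V, G.dist w x = d) ∧
    G.dist u v = d ∧
    IsPermOrderTwoNoFixed (distMatrix G d) ∧
    ∃ lam : ℂ, ‖lam‖ = 1 ∧
      transitionMatrix G τ = lam • (distMatrix G d).map (fun x : ℝ => (x : ℂ)) := by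
  classical
  obtain ⟨b, c, hconn, hle, ⟨p₀, q₀, hp₀q₀⟩, hc, hb⟩ := hdrg
  obtain ⟨hne, μ, hμ⟩ := hpst
  letI instAdj : DecidableRel G.Adj := Classical.decRel G.Adj
  set A : Matrix V V ℂ := G.adjMatrix ℂ with hA
  set U : Matrix V V ℂ := transitionMatrix G τ with hU0
  have hUdef : U = NormedSpace.exp ((Complex.I * (τ : ℂ)) • A) := rfl
  -- entries of U depend only on the distance
  have hU_dist : ∀ w x w' x' : V, G.dist w x = G.dist w' x' → U w x = U w' x' := by
    intro w x w' x' h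
    rw [hUdef, PSTaux.entry_exp, PSTaux.entry_exp]
    refine tsum_congr fun n => ?_
    rw [smul_pow, Matrix.smul_apply, Matrix.smul_apply,
      PSTaux.pow_dist (d := d) hconn hle hc hb n w x w' x' h]
  -- the u-column of U
  have hcol : ∀ w : V, U w u = if w = v then μ else 0 := by
    intro w
    have h1 := congr_fun hμ w
    simp only [Matrix.mulVec_single, mul_one, Pi.smul_apply, Pi.single_apply,
      smul_eq_mul, MulOpposite.op_one, one_smul, Matrix.col, Matrix.transpose_apply] at h1
    rw [h1]
    by_cases hw : w = v <;> simp [hw]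
  have hunit : IsUnit U := hUdef ▸ Matrix.isUnit_exp _
  have hμ0 : μ ≠ 0 := by
    intro h0
    obtain ⟨Wu, hWu⟩ := hunit
    have h1 : ((↑Wu⁻¹ : Matrix V V ℂ) * U) u u = 1 := by
      rw [← hWu, Units.inv_mul]
      exact Matrix.one_apply_eq u
    rw [Matrix.mul_apply] at h1
    rw [Finset.sum_eq_zero (fun y _ => by
      rw [hcol y]
      by_cases hy : y = v <;> simp [hy, h0])] at h1
    exact zero_ne_one h1
  obtain ⟨j, hj⟩ : ∃ j, G.dist u v = j := ⟨_, rfl⟩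
  have hjd : j ≤ d := hj ▸ hle u v
  have hj1 : 1 ≤ j := hj ▸ hconn.pos_dist_of_ne hne
  -- v is the unique vertex at distance j from u
  have huv : ∀ w, G.dist u w = j → w = v := by
    intro w hw
    by_contra hwv
    have hz : U w u = 0 := by rw [hcol w, if_neg hwv]
    have h2 : U w u = U v u := hU_dist w u v u (by
      rw [SimpleGraph.dist_comm, SimpleGraph.dist_comm (u := v) (v := u), hw, hj])
    rw [hcol v, if_pos rfl] at h2
    exact hμ0 (by rw [← h2, hz])
  have hsphere_u : Finset.univ.filter (fun y => G.dist u y = j) = {v} := by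
    ext y
    simp only [Finset.mem_filter, Finset.mem_univ, true_and, Finset.mem_singleton]
    exact ⟨fun hy => huv y hy, fun hy => by rw [hy, hj]⟩
  have hcard : ∀ w : V, (Finset.univ.filter (fun y => G.dist w y = j)).card = 1 := by
    intro w
    rw [PSTaux.sphere_card_eq (d := d) hconn hp₀q₀ hc hb j hjd w u, hsphere_u,
      Finset.card_singleton]
  have hAnti : ∀ w : V, ∃! x, G.dist w x = j := by
    intro w
    obtain ⟨a, ha⟩ := Finset.card_eq_one.mp (hcard w)
    have hmem : ∀ y : V, G.dist w y = j ↔ y = a := by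
      intro y
      constructor
      · intro hy
        have : y ∈ Finset.univ.filter (fun y => G.dist w y = j) := by
          simp [hy]
        rw [ha, Finset.mem_singleton] at this
        exact this
      · intro hy
        subst hy
        have : y ∈ Finset.univ.filter (fun z => G.dist w z = j) := by
          rw [ha]; exact Finset.mem_singleton_self _
        simpa using this
    exact ⟨a, (hmem a).mpr rfl, fun y hy => (hmem y).mp hy⟩
  choose σ hP0 hQ0 using hAnti
  have hP : ∀ w : V, G.dist w (σ w) = j := hP0
  have hQ : ∀ w y : V, G.dist w y = j → y = σ w := hQ0
  clear hP0 hQ0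
  have hinv : ∀ w, σ (σ w) = w := by
    intro w
    exact (hQ (σ w) w (by rw [SimpleGraph.dist_comm]; exact hP w)).symm
  -- all distances from u are realised
  have hreal : ∀ i, i ≤ d → ∃ w0, G.dist u w0 = i := by
    intro i hid
    obtain ⟨p, q, hpq⟩ := PSTaux.dist_realized (d := d) hconn hp₀q₀ hid
    have h1 := PSTaux.sphere_card_eq (d := d) hconn hp₀q₀ hc hb i hid u p
    have h2 : 0 < (Finset.univ.filter (fun y => G.dist p y = i)).card :=
      Finset.card_pos.mpr ⟨q, by simp [hpq]⟩
    rw [← h1] at h2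
    obtain ⟨w0, hw0⟩ := Finset.card_pos.mp h2
    exact ⟨w0, (Finset.mem_filter.mp hw0).2⟩
  -- everywhere, U is μ on distance j and 0 elsewhere
  have hUall : ∀ w x : V, U w x = if G.dist w x = j then μ else 0 := by
    intro w x
    by_cases hwx : G.dist w x = j
    · rw [if_pos hwx]
      have h2 : U w x = U v u := hU_dist w x v u (by
        rw [SimpleGraph.dist_comm (u := v) (v := u), hj, hwx])
      rw [h2, hcol v, if_pos rfl]
    · rw [if_neg hwx]
      obtain ⟨w0, hw0⟩ := hreal (G.dist w x) (hle w x)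
      have hw0v : w0 ≠ v := by
        intro h
        rw [h, hj] at hw0
        exact hwx hw0.symm
      have h2 : U w x = U w0 u := hU_dist w x w0 u (by
        rw [SimpleGraph.dist_comm (u := w0) (v := u), hw0])
      rw [h2, hcol w0, if_neg hw0v]
  -- D is the complex distance matrix
  set D : Matrix V V ℂ := (distMatrix G j).map (fun x : ℝ => (x : ℂ)) with hD
  have hDval : ∀ w x : V, D w x = if G.dist w x = j then 1 else 0 := by
    intro w x
    rw [hD, Matrix.map_apply]
    by_cases h : G.dist w x = j <;> simp [distMatrix, h]
  have hUmat : U = μ • D := by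
    ext w x
    rw [Matrix.smul_apply, hDval, hUall]
    by_cases h : G.dist w x = j <;> simp [h]
  -- the entries of D via σ
  have hD1 : ∀ w x : V, D w x = if x = σ w then 1 else 0 := by
    intro w x
    rw [hDval]
    by_cases h : x = σ w
    · rw [if_pos h, if_pos (by rw [h]; exact hP w)]
    · rw [if_neg h, if_neg (fun hh => h (hQ w x hh))]
  have hD2 : ∀ y x : V, D y x = if y = σ x then 1 else 0 := by
    intro y x
    rw [hDval]
    by_cases h : y = σ x
    · rw [if_pos h, if_pos (by rw [h, SimpleGraph.dist_comm]; exact hP x)]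
    · rw [if_neg h, if_neg (fun hh => h (hQ x y (by rw [SimpleGraph.dist_comm]; exact hh)))]
  -- commutation of powers of A with D, via exp
  have hcommA : Commute A U := by
    rw [hUdef]
    exact Commute.exp_right ((Commute.refl A).smul_right _)
  have hApow_swap : ∀ (n : ℕ) (w x : V), (A ^ n) w (σ x) = (A ^ n) (σ w) x := by
    intro n w x
    have h1 : Commute (A ^ n) D := by
      have h2 : Commute (A ^ n) (μ⁻¹ • U) := (hcommA.pow_left n).smul_right μ⁻¹
      have h3 : μ⁻¹ • U = D := by
        rw [hUmat, smul_smul, inv_mul_cancel₀ hμ0, one_smul]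
      rwa [h3] at h2
    have e1 : ((A ^ n) * D) w x = (A ^ n) w (σ x) := by
      rw [Matrix.mul_apply]
      rw [Finset.sum_congr rfl (fun y _ => by rw [hD2 y x, mul_ite, mul_one, mul_zero])]
      rw [Finset.sum_ite_eq' Finset.univ (σ x) (fun y => (A ^ n) w y),
        if_pos (Finset.mem_univ _)]
    have e2 : (D * (A ^ n)) w x = (A ^ n) (σ w) x := by
      rw [Matrix.mul_apply]
      rw [Finset.sum_congr rfl (fun y _ => by rw [hD1 w y, ite_mul, one_mul, zero_mul])]
      rw [Finset.sum_ite_eq' Finset.univ (σ w) (fun y => (A ^ n) y x),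
        if_pos (Finset.mem_univ _)]
    rw [← e1, ← e2, h1.eq]
  -- nonvanishing of powers detects walks
  have hwalk : ∀ (m : ℕ) (w x : V), (A ^ m) w x ≠ 0 ↔ ∃ W : G.Walk w x, W.length = m := by
    intro m w x
    rw [hA, SimpleGraph.adjMatrix_pow_apply_eq_card_walk]
    rw [ne_eq, Nat.cast_eq_zero]
    constructor
    · intro h
      obtain ⟨⟨W, hW⟩⟩ := Fintype.card_pos_iff.mp (Nat.pos_of_ne_zero h)
      exact ⟨W, hW⟩
    · rintro ⟨W, hW⟩
      have : Nonempty {p : G.Walk w x | p.length = m} := ⟨⟨W, hW⟩⟩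
      exact Fintype.card_ne_zero
  have hswap : ∀ w x : V, G.dist (σ w) x = G.dist w (σ x) := by
    intro w x
    apply le_antisymm
    · obtain ⟨W, hW⟩ := hconn.exists_walk_length_eq_dist w (σ x)
      have h1 : (A ^ (G.dist w (σ x))) w (σ x) ≠ 0 := (hwalk _ _ _).mpr ⟨W, hW⟩
      rw [hApow_swap] at h1
      obtain ⟨W', hW'⟩ := (hwalk _ _ _).mp h1
      exact hW' ▸ SimpleGraph.dist_le W'
    · obtain ⟨W, hW⟩ := hconn.exists_walk_length_eq_dist (σ w) x
      have h1 : (A ^ (G.dist (σ w) x)) (σ w) x ≠ 0 := (hwalk _ _ _).mpr ⟨W, hW⟩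
      rw [← hApow_swap] at h1
      obtain ⟨W', hW'⟩ := (hwalk _ _ _).mp h1
      exact hW' ▸ SimpleGraph.dist_le W'
  have hσdist : ∀ p q : V, G.dist (σ p) (σ q) = G.dist p q := by
    intro p q
    rw [hswap p (σ q), hinv]
  -- conclusion : j = d
  have hjd' : j = d := by
    by_contra hne'
    have hjlt : j < d := lt_of_le_of_ne hjd hne'
    have he1 : 1 ≤ d - j := by omega
    rcases le_or_gt j (d - j) with hje | hej
    · obtain ⟨m, m', h1, h2, h3⟩ := PSTaux.geodesic_points hconn p₀ q₀ j (d - j) hje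
        (by omega)
      rw [hp₀q₀] at h3
      have hm : m = σ p₀ := hQ p₀ m h1
      have hm' : m' = σ q₀ := hQ q₀ m' (by rw [SimpleGraph.dist_comm]; omega)
      have hdd : G.dist m m' = d := by rw [hm, hm', hσdist, hp₀q₀]
      omega
    · obtain ⟨m, m', h1, h2, h3⟩ := PSTaux.geodesic_points hconn p₀ q₀ (d - j) j
        (le_of_lt hej) (by omega)
      rw [hp₀q₀] at h3
      have t1 : G.dist p₀ q₀ ≤ G.dist p₀ m + G.dist m q₀ := hconn.dist_triangle
      have t2 : G.dist m q₀ ≤ G.dist m m' + G.dist m' q₀ := hconn.dist_triangle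
      have t4 : G.dist p₀ q₀ ≤ G.dist p₀ m' + G.dist m' q₀ := hconn.dist_triangle
      have t3 : G.dist p₀ m' ≤ G.dist p₀ m + G.dist m m' := hconn.dist_triangle
      have hmq : G.dist q₀ m = j := by rw [SimpleGraph.dist_comm]; omega
      have hm : m = σ q₀ := hQ q₀ m hmq
      have hpm' : G.dist p₀ m' = j := by omega
      have hm' : m' = σ p₀ := hQ p₀ m' hpm'
      have hdd : G.dist m m' = d := by
        rw [hm, hm', hσdist, SimpleGraph.dist_comm, hp₀q₀]
      omega
  subst hjd'
  -- the real distance matrix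
  have hTval : ∀ w x : V, distMatrix G j w x = if G.dist w x = j then (1:ℝ) else 0 := by
    intro w x; rfl
  have hT1 : ∀ w x : V, distMatrix G j w x = if x = σ w then (1:ℝ) else 0 := by
    intro w x
    rw [hTval]
    by_cases h : x = σ w
    · rw [if_pos h, if_pos (by rw [h]; exact hP w)]
    · rw [if_neg h, if_neg (fun hh => h (hQ w x hh))]
  have hTT : distMatrix G j * distMatrix G j = 1 := by
    ext w x
    rw [Matrix.mul_apply]
    rw [Finset.sum_congr rfl (fun y _ => by rw [hT1 w y, ite_mul, one_mul, zero_mul])]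
    rw [Finset.sum_ite_eq' Finset.univ (σ w) (fun y => distMatrix G j y x),
      if_pos (Finset.mem_univ _), hTval, Matrix.one_apply]
    by_cases h : w = x
    · rw [if_pos h, if_pos (by rw [← h, SimpleGraph.dist_comm]; exact hP w)]
    · rw [if_neg h, if_neg (fun hh => h (by
        have := hQ (σ w) x hh
        rw [hinv] at this
        exact this.symm))]
  refine ⟨fun w => ⟨σ w, hP w, fun y hy => hQ w y hy⟩, hj, ⟨?_, ?_, ?_, hTT, ?_⟩, ?_⟩
  · intro w x
    rw [hTval]
    by_cases h : G.dist w x = j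
    · right; rw [if_pos h]
    · left; rw [if_neg h]
  · rw [Matrix.IsSymm]
    ext w x
    rw [Matrix.transpose_apply, hTval, hTval, SimpleGraph.dist_comm]
  · intro w
    rw [hTval, if_neg (by rw [SimpleGraph.dist_self]; omega)]
  · intro w
    refine ⟨σ w, ?_, fun y hy => ?_⟩
    · show distMatrix G j w (σ w) = 1
      rw [hT1, if_pos rfl]
    · have hy' : distMatrix G j w y = 1 := hy
      rw [hT1] at hy'
      by_cases h : y = σ w
      · exact h
      · rw [if_neg h] at hy'; exact absurd hy' zero_ne_one
  -- the scalar has modulus 1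
  · have hAconj : Aᴴ = A := by
      ext w x
      rw [Matrix.conjTranspose_apply, hA]
      rw [SimpleGraph.adjMatrix_apply, SimpleGraph.adjMatrix_apply]
      by_cases h : G.Adj x w
      · rw [if_pos h, if_pos h.symm]; exact star_one ℂ
      · rw [if_neg h, if_neg (fun hh => h hh.symm)]; exact star_zero ℂ
    have hMconj : ((Complex.I * (τ : ℂ)) • A)ᴴ = -((Complex.I * (τ : ℂ)) • A) := by
      rw [Matrix.conjTranspose_smul, hAconj, ← neg_smul]
      congr 1
      simp [Complex.star_def, _root_.map_mul, Complex.conj_I, Complex.conj_ofReal]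
    have hUH : Uᴴ * U = 1 := by
      rw [hUdef, ← Matrix.exp_conjTranspose, hMconj,
        ← Matrix.exp_add_of_commute (-((Complex.I * (τ : ℂ)) • A)) ((Complex.I * (τ : ℂ)) • A)
          ((Commute.refl _).neg_left), neg_add_cancel,
        NormedSpace.exp_zero]
    have hDH : Dᴴ = D := by
      ext w x
      rw [Matrix.conjTranspose_apply, hDval, hDval, SimpleGraph.dist_comm]
      by_cases h : G.dist w x = j
      · rw [if_pos h]; exact star_one ℂ
      · rw [if_neg h]; exact star_zero ℂ
    have hDD : D * D = 1 := by
      have h1 : D = (distMatrix G j).map (Complex.ofRealHom : ℝ →+* ℂ) := rfl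
      rw [h1, ← Matrix.map_mul, hTT, Matrix.map_one]
      · exact map_zero _
      · exact map_one _
    have hsq : star μ * μ = 1 := by
      have h2 : Uᴴ * U = (star μ * μ) • (D * D) := by
        rw [hUmat, Matrix.conjTranspose_smul, hDH, Matrix.smul_mul, Matrix.mul_smul,
          smul_smul]
      rw [hUH, hDD] at h2
      have h3 := congr_fun (congr_fun h2 u) u
      rw [Matrix.smul_apply, Matrix.one_apply_eq, smul_eq_mul, mul_one] at h3
      exact h3.symm
    have habs : ‖μ‖ = 1 := by
      have h4 : Complex.normSq μ = 1 := by
        have h5 : ((Complex.normSq μ : ℝ) : ℂ) = 1 := by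
          rw [Complex.normSq_eq_conj_mul_self, ← Complex.star_def]; exact hsq
        exact_mod_cast h5
      have h5 : ‖μ‖ ^ 2 = 1 := by rw [Complex.sq_norm]; exact h4
      have h6 := norm_nonneg μ
      nlinarith
    exact ⟨μ, habs, hUmat⟩
end

section
/- Let X be a finite simple graph that belongs to a symmetric association scheme. If X admits perfect state transfer between some pair of distinct vertices at some time, then every eigenvalue of the adjacency matrix of X is an integer. -/
open Matrix

set_option linter.unnecessarySeqFocus false
set_option linter.unusedSectionVars false



section Aux
variable {V : Type*} [Fintype V] [DecidableEq V]

lemma exp_mulVec_eigen (M : Matrix V V ℂ) (w : V → ℂ) (α : ℂ) (h : M *ᵥ w = α • w) :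
    NormedSpace.exp M *ᵥ w = Complex.exp α • w := by
  letI : SeminormedRing (Matrix V V ℂ) := Matrix.linftyOpSemiNormedRing
  letI : NormedRing (Matrix V V ℂ) := Matrix.linftyOpNormedRing
  letI : NormedAlgebra ℂ (Matrix V V ℂ) := Matrix.linftyOpNormedAlgebra
  have hpow : ∀ n : ℕ, M ^ n *ᵥ w = α ^ n • w := by
    intro n; induction n with
    | zero => simp
    | succ n ih =>
        rw [pow_succ' M n, ← Matrix.mulVec_mulVec, ih, Matrix.mulVec_smul, h, smul_smul, ← pow_succ]
  let L : Matrix V V ℂ →ₗ[ℂ] (V → ℂ) :=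
    { toFun := fun N => N *ᵥ w
      map_add' := fun N₁ N₂ => Matrix.add_mulVec _ _ _
      map_smul' := fun c N => Matrix.smul_mulVec _ _ _ }
  have hLc : Continuous L := L.continuous_of_finiteDimensional
  have h1 : HasSum (fun n : ℕ => ((n.factorial : ℂ)⁻¹) • M ^ n) (NormedSpace.exp M) :=
    NormedSpace.exp_series_hasSum_exp' M
  have h2 : HasSum (fun n : ℕ => L (((n.factorial : ℂ)⁻¹) • M ^ n)) (L (NormedSpace.exp M)) :=
    h1.map L hLc
  have h3 : HasSum (fun n : ℕ => (((n.factorial : ℂ)⁻¹) • α ^ n) • w)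
      ((NormedSpace.exp α) • w) :=
    (NormedSpace.exp_series_hasSum_exp' α).smul_const w
  have h4 : (fun n : ℕ => L (((n.factorial : ℂ)⁻¹) • M ^ n))
      = fun n : ℕ => (((n.factorial : ℂ)⁻¹) • α ^ n) • w := by
    funext n
    show ((n.factorial : ℂ)⁻¹ • M ^ n) *ᵥ w = ((n.factorial : ℂ)⁻¹ • α ^ n) • w
    rw [Matrix.smul_mulVec, hpow n, smul_assoc]
  rw [h4] at h2
  have h5 : L (NormedSpace.exp M) = (NormedSpace.exp α) • w := h2.unique h3
  rw [Complex.exp_eq_exp_ℂ]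
  exact h5

lemma exp_mem_span (S : Submodule ℂ (Matrix V V ℂ))
    (hmul : ∀ x ∈ S, ∀ y ∈ S, x * y ∈ S) (hone : (1 : Matrix V V ℂ) ∈ S)
    (M : Matrix V V ℂ) (hM : M ∈ S) : NormedSpace.exp M ∈ S := by
  letI : SeminormedRing (Matrix V V ℂ) := Matrix.linftyOpSemiNormedRing
  letI : NormedRing (Matrix V V ℂ) := Matrix.linftyOpNormedRing
  letI : NormedAlgebra ℂ (Matrix V V ℂ) := Matrix.linftyOpNormedAlgebra
  have hpow : ∀ n : ℕ, M ^ n ∈ S := by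
    intro n; induction n with
    | zero => simpa using hone
    | succ n ih => rw [pow_succ]; exact hmul _ ih _ hM
  have h1 : HasSum (fun n : ℕ => ((n.factorial : ℂ)⁻¹) • M ^ n) (NormedSpace.exp M) :=
    NormedSpace.exp_series_hasSum_exp' M
  exact (S.closed_of_finiteDimensional).mem_of_tendsto h1.tendsto_sum_nat
    (Filter.Eventually.of_forall fun n =>
      S.sum_mem fun i _ => S.smul_mem _ (hpow i))

lemma exists_unique_eq_one_of_sum_eq_one {ι : Type*} [Fintype ι] [DecidableEq ι]
    (f : ι → ℝ) (hf : ∀ i, f i = 0 ∨ f i = 1) (hsum : ∑ i, f i = 1) :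
    ∃! i, f i = 1 := by
  have hnn : ∀ i, 0 ≤ f i := fun i => by rcases hf i with h | h <;> rw [h] <;> norm_num
  have hex : ∃ i, f i = 1 := by
    by_contra hc
    push_neg at hc
    have : ∀ i, f i = 0 := fun i => (hf i).resolve_right (hc i)
    rw [Finset.sum_congr rfl fun i _ => this i] at hsum
    simp at hsum
  obtain ⟨i, hi⟩ := hex
  refine ⟨i, hi, fun j hj => ?_⟩
  by_contra hne
  have hji : j ∈ Finset.univ.erase i := Finset.mem_erase.2 ⟨hne, Finset.mem_univ j⟩
  have h1 : f j ≤ ∑ x ∈ Finset.univ.erase i, f x :=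
    Finset.single_le_sum (fun k _ => hnn k) hji
  have h2 : f i + ∑ x ∈ Finset.univ.erase i, f x = ∑ x, f x :=
    Finset.add_sum_erase Finset.univ f (Finset.mem_univ i)
  rw [hsum, hi, hj] at *
  linarith

lemma mulVec_map_ofReal (M : Matrix V V ℝ) (w : V → ℝ) :
    (M.map (Complex.ofReal)) *ᵥ (fun i => (w i : ℂ)) = fun i => ((M *ᵥ w) i : ℂ) := by
  funext i
  simp [Matrix.mulVec, dotProduct, Matrix.map_apply]

end Aux



section Mid
variable {V : Type*} [Fintype V] [DecidableEq V]

lemma charpoly_eval_eq_det {R : Type*} [CommRing R] (M : Matrix V V R) (x : R) :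
    M.charpoly.eval x = (Matrix.scalar V x - M).det := by
  rw [Matrix.charpoly, eval_det, Matrix.matPolyEquiv_charmatrix]
  simp

lemma adjMatrix_int_map (G : SimpleGraph V) [DecidableRel G.Adj] :
    (G.adjMatrix ℤ).map (Int.cast : ℤ → ℝ) = G.adjMatrix ℝ := by
  ext i j
  simp [SimpleGraph.adjMatrix_apply, Matrix.map_apply, apply_ite (Int.cast : ℤ → ℝ)]

lemma adj_isIntegral (G : SimpleGraph V) [DecidableRel G.Adj] (x : ℝ)
    (hdet : (Matrix.scalar V x - G.adjMatrix ℝ).det = 0) : IsIntegral ℤ x := by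
  refine ⟨(G.adjMatrix ℤ).charpoly, Matrix.charpoly_monic _, ?_⟩
  have h1 : ((G.adjMatrix ℤ).charpoly).map (algebraMap ℤ ℝ) = (G.adjMatrix ℝ).charpoly := by
    rw [← Matrix.charpoly_map, algebraMap_int_eq]
    norm_num [adjMatrix_int_map]
  rw [← Polynomial.eval_map, h1, charpoly_eval_eq_det, hdet]

lemma int_of_rat_isIntegral (x : ℝ) (q : ℚ) (hx : x = (q : ℝ)) (hint : IsIntegral ℤ x) :
    ∃ k : ℤ, x = (k : ℝ) := by
  have hq : IsIntegral ℤ q := by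
    rw [hx, show ((q : ℝ)) = algebraMap ℚ ℝ q from (eq_ratCast (algebraMap ℚ ℝ) q).symm] at hint
    exact (isIntegral_algebraMap_iff (algebraMap ℚ ℝ).injective).mp hint
  obtain ⟨y, hy⟩ := IsIntegrallyClosed.isIntegral_iff.mp hq
  exact ⟨y, by rw [hx, ← hy]; norm_num⟩

lemma trace_eq_sum_eig {M : Matrix V V ℂ} (hM : M.IsHermitian) :
    M.trace = ∑ i, (hM.eigenvalues i : ℂ) := by
  have h := hM.spectral_theorem
  have huni : star (hM.eigenvectorUnitary : Matrix V V ℂ) * (hM.eigenvectorUnitary : Matrix V V ℂ)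
      = 1 := (Unitary.mem_iff.mp (hM.eigenvectorUnitary).2).1
  calc M.trace
      = ((hM.eigenvectorUnitary : Matrix V V ℂ) * diagonal (RCLike.ofReal ∘ hM.eigenvalues)
          * star (hM.eigenvectorUnitary : Matrix V V ℂ)).trace := by conv_lhs => rw [h, Unitary.conjStarAlgAut_apply]
    _ = (star (hM.eigenvectorUnitary : Matrix V V ℂ) * (hM.eigenvectorUnitary : Matrix V V ℂ)
          * diagonal (RCLike.ofReal ∘ hM.eigenvalues)).trace := by
            rw [Matrix.trace_mul_cycle]
    _ = ∑ i, (hM.eigenvalues i : ℂ) := by rw [huni, one_mul, Matrix.trace_diagonal]; rfl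

end Mid

/-- If a graph belonging to a symmetric association scheme admits
perfect state transfer between some pair of distinct vertices at some time, then
every eigenvalue of its adjacency matrix is an integer. -/
theorem stmt_2 {V : Type*} [Fintype V] [DecidableEq V] {d : ℕ}
    (G : SimpleGraph V) [DecidableRel G.Adj]
    (A : Fin (d+1) → Matrix V V ℝ)
    (hScheme : IsAssocScheme A)
    (hMem : ∃ coeff : Fin (d+1) → ℝ, G.adjMatrix ℝ = ∑ i, coeff i • A i)
    (hpst : ∃ (u v : V) (τ : ℝ), HasPST G u v τ) :
    ∀ x ∈ spectrum ℝ (G.adjMatrix ℝ), ∃ k : ℤ, x = (k : ℝ) := by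
  classical
  obtain ⟨u, v, τ, huv, μ, hU0⟩ := hpst
  set Aℝ := G.adjMatrix ℝ with hAR
  set Aℂ := G.adjMatrix ℂ with hAC
  have hmapA : Aℝ.map Complex.ofReal = Aℂ := by
    ext i j
    simp [hAR, hAC, SimpleGraph.adjMatrix_apply, Matrix.map_apply, apply_ite Complex.ofReal]
  set t : ℂ := Complex.I * (τ : ℂ) with ht
  set U : Matrix V V ℂ := NormedSpace.exp (t • Aℂ) with hUdef
  have htm : transitionMatrix G τ = U := by
    unfold transitionMatrix
    congr!
  rw [htm] at hU0
  -- τ ≠ 0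
  have hτ : τ ≠ 0 := by
    intro h
    rw [h] at ht
    have : U = 1 := by
      rw [hUdef, ht]
      norm_num [NormedSpace.exp_zero]
    rw [this, Matrix.one_mulVec] at hU0
    have := congrFun hU0 u
    rw [Pi.single_eq_same, Pi.smul_apply, Pi.single_eq_of_ne huv] at this
    simp at this
  -- scheme basics
  have hE := hScheme.entries
  have hnn : ∀ i w z, (0:ℝ) ≤ A i w z := by
    intro i w z; rcases hE i w z with h | h <;> rw [h] <;> norm_num
  have htotal : ∀ w z, ∑ i, A i w z = 1 := by
    intro w z
    have := congrFun (congrFun hScheme.total w) z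
    simpa [Matrix.sum_apply] using this
  have hclass : ∀ w z : V, ∃! i, A i w z = 1 := fun w z =>
    exists_unique_eq_one_of_sum_eq_one (fun i => A i w z) (fun i => hE i w z) (htotal w z)
  have hsymm : ∀ i (w z : V), A i w z = A i z w := by
    intro i w z
    conv_lhs => rw [← hScheme.symm i]
    rfl
  have hdiag0 : ∀ (i) (w : V), i ≠ 0 → A i w w = 0 := by
    intro i w hi
    rcases hE i w w with h | h
    · exact h
    · exfalso
      have h0 : A 0 w w = 1 := by rw [hScheme.ident]; simp
      exact hi ((hclass w w).unique h h0)
  -- constant row sums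
  have hrowsum : ∀ i, ∃ c : ℝ, ∀ w, ∑ z, A i w z = c := by
    intro i
    obtain ⟨p, hp⟩ := hScheme.inter i i
    refine ⟨(p 0 : ℝ), fun w => ?_⟩
    have h1 : (A i * A i) w w = ∑ z, A i w z * A i z w := Matrix.mul_apply
    have h2 : ∑ z, A i w z * A i z w = ∑ z, A i w z := by
      refine Finset.sum_congr rfl fun z _ => ?_
      rw [← hsymm i w z]
      rcases hE i w z with h | h <;> rw [h] <;> ring
    have h3 : (∑ k, (p k : ℝ) • A k) w w = (p 0 : ℝ) := by
      rw [Matrix.sum_apply]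
      rw [Finset.sum_eq_single 0]
      · rw [Matrix.smul_apply, hScheme.ident]; simp
      · intro j _ hj
        rw [Matrix.smul_apply, hdiag0 j w hj, smul_zero]
      · simp
    rw [← h2, ← h1, hp, h3]
  choose s hs using hrowsum
  -- span and coefficients
  set Mc : Fin (d+1) → Matrix V V ℂ := fun i => (A i).map Complex.ofReal with hMc
  set S : Submodule ℂ (Matrix V V ℂ) := Submodule.span ℂ (Set.range Mc) with hSdef
  have hkeymul : ∀ i j, Mc i * Mc j ∈ S := by
    intro i j
    obtain ⟨p, hp⟩ := hScheme.inter i j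
    have heq : Mc i * Mc j = ∑ l, ((p l : ℝ) : ℂ) • Mc l := by
      ext w z
      have h1 : (Mc i * Mc j) w z = (((A i * A j) w z : ℝ) : ℂ) := by
        rw [Matrix.mul_apply, Matrix.mul_apply]
        push_cast
        rfl
      rw [h1, hp]
      simp only [Matrix.sum_apply, Matrix.smul_apply, Matrix.map_apply, smul_eq_mul, hMc]
      push_cast
      rfl
    rw [heq]
    exact Submodule.sum_mem _ fun l _ => Submodule.smul_mem _ _ (Submodule.subset_span ⟨l, rfl⟩)
  have hmulS : ∀ x ∈ S, ∀ y ∈ S, x * y ∈ S := by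
    intro x hx y hy
    obtain ⟨c1, hc1⟩ := (Submodule.mem_span_range_iff_exists_fun ℂ).mp hx
    obtain ⟨c2, hc2⟩ := (Submodule.mem_span_range_iff_exists_fun ℂ).mp hy
    rw [← hc1, ← hc2, Finset.sum_mul]
    refine Submodule.sum_mem _ fun i _ => ?_
    rw [Finset.mul_sum]
    refine Submodule.sum_mem _ fun j _ => ?_
    rw [smul_mul_assoc, mul_smul_comm]
    exact Submodule.smul_mem _ _ (Submodule.smul_mem _ _ (hkeymul i j))
  have honeS : (1 : Matrix V V ℂ) ∈ S := by
    have h1 : Mc 0 = 1 := by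
      show (A 0).map Complex.ofReal = 1
      rw [hScheme.ident]
      exact Matrix.map_one _ Complex.ofReal_zero Complex.ofReal_one
    exact h1 ▸ Submodule.subset_span ⟨0, rfl⟩
  obtain ⟨coeff, hcoeff⟩ := hMem
  have hACS : Aℂ ∈ S := by
    refine (Submodule.mem_span_range_iff_exists_fun ℂ).mpr ⟨fun i => (coeff i : ℂ), ?_⟩
    ext w z
    have hr : Aℂ w z = ((Aℝ w z : ℝ) : ℂ) := by rw [← hmapA]; rfl
    rw [hr, hcoeff]
    simp only [Matrix.sum_apply, Matrix.smul_apply, Matrix.map_apply, smul_eq_mul, hMc]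
    push_cast
    rfl
  have hUS : U ∈ S := exp_mem_span S hmulS honeS _ (Submodule.smul_mem _ _ hACS)
  obtain ⟨c, hc⟩ := (Submodule.mem_span_range_iff_exists_fun ℂ).mp hUS
  -- class function
  have hclex : ∀ w z : V, ∃ i, A i w z = 1 := fun w z => (hclass w z).exists
  choose cl hclspec using hclex
  have hclu : ∀ (w z : V) (i), A i w z = 1 → i = cl w z := fun w z i hi =>
    (hclass w z).unique hi (hclspec w z)
  have hUc : ∀ w z, U w z = c (cl w z) := by
    intro w z
    have h1 : U w z = ∑ i, c i * ((A i w z : ℝ) : ℂ) := by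
      rw [← hc]
      simp [Matrix.sum_apply, Matrix.smul_apply, hMc, Matrix.map_apply]
    rw [h1, Finset.sum_eq_single (cl w z)]
    · rw [hclspec w z]; norm_num
    · intro i _ hi
      have h0 : A i w z = 0 := by
        rcases hE i w z with h | h
        · exact h
        · exact absurd (hclu w z i h) hi
      rw [h0]; norm_num
    · simp
  have hcolU : ∀ w, U w u = if w = v then μ else 0 := by
    intro w
    have h1 := congrFun hU0 w
    simp only [Matrix.mulVec_single, Pi.smul_apply, smul_eq_mul, mul_one, MulOpposite.op_one,
      one_smul, Matrix.col_apply] at h1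
    rw [h1, Pi.single_apply]
    split_ifs <;> simp
  set r : Fin (d+1) := cl v u with hrdef
  have hcr : c r = μ := by
    have h1 := hUc v u
    rw [hcolU v, if_pos rfl] at h1
    exact h1.symm
  have hkeyU : U = μ • Mc r := by
    ext w z
    rw [Matrix.smul_apply, smul_eq_mul]
    by_cases hir : cl w z = r
    · have hArwz : A r w z = 1 := by rw [← hir]; exact hclspec w z
      rw [hUc w z, hir, hcr]
      show μ = μ * ((A r w z : ℝ) : ℂ)
      rw [hArwz]
      norm_num
    · have hArwz : A r w z = 0 := by
        rcases hE r w z with h | h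
        · exact h
        · exact absurd (hclu w z r h).symm hir
      have hci0 : c (cl w z) = 0 := by
        have h1 : A (cl w z) w z = 1 := hclspec w z
        have hsge : (1:ℝ) ≤ s (cl w z) := by
          rw [← hs (cl w z) w]
          calc (1:ℝ) = A (cl w z) w z := h1.symm
          _ ≤ ∑ y, A (cl w z) w y :=
            Finset.single_le_sum (f := fun y => A (cl w z) w y)
              (fun y _ => hnn _ w y) (Finset.mem_univ z)
        have h2 : ∃ y, A (cl w z) u y = 1 := by
          by_contra hcon
          push_neg at hcon
          have hz : ∀ y, A (cl w z) u y = 0 := fun y => (hE _ u y).resolve_right (hcon y)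
          have h3 : ∑ y, A (cl w z) u y = 0 := by simp [hz]
          rw [hs (cl w z) u] at h3
          linarith
        obtain ⟨y, hy⟩ := h2
        have hyu : A (cl w z) y u = 1 := (hsymm _ y u).trans hy
        have hyv : y ≠ v := by
          intro hyv
          rw [hyv] at hyu
          exact hir (hclu v u _ hyu)
        have hcleq : cl w z = cl y u := hclu y u (cl w z) hyu
        have h4 := hUc y u
        rw [hcolU y, if_neg hyv] at h4
        rw [hcleq]
        exact h4.symm
      rw [hUc w z, hci0]
      show (0:ℂ) = μ * ((A r w z : ℝ) : ℂ)
      rw [hArwz]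
      norm_num
  have hμ0 : μ ≠ 0 := by
    intro h0
    obtain ⟨W, hW⟩ := Matrix.isUnit_exp (t • Aℂ)
    have hWU : (↑W⁻¹ : Matrix V V ℂ) * U = 1 := by
      rw [hUdef, ← hW]
      exact W.inv_mul
    have h2 : Pi.single u (1:ℂ) = (0 : V → ℂ) := by
      have e1 : (↑W⁻¹ : Matrix V V ℂ) *ᵥ (U *ᵥ Pi.single u 1)
          = ((↑W⁻¹ : Matrix V V ℂ) * U) *ᵥ Pi.single u 1 :=
        Matrix.mulVec_mulVec _ _ _
      rw [hWU, Matrix.one_mulVec, hU0, h0, zero_smul, Matrix.mulVec_zero] at e1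
      exact e1.symm
    have h3 := congrFun h2 u
    simp at h3
  have hArcol : ∀ w, A r w u = if w = v then (1:ℝ) else 0 := by
    intro w
    have h1 : μ * ((A r w u : ℝ) : ℂ) = if w = v then μ else 0 := by
      rw [← hcolU w, hkeyU]
      rfl
    by_cases hwv : w = v
    · rw [if_pos hwv] at h1 ⊢
      have h2 := mul_left_cancel₀ hμ0 (h1.trans (mul_one μ).symm)
      exact_mod_cast h2
    · rw [if_neg hwv] at h1 ⊢
      rcases mul_eq_zero.mp h1 with h | h
      · exact absurd h hμ0
      · exact_mod_cast h
  have hsr : s r = 1 := by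
    rw [← hs r u]
    calc ∑ z, A r u z = ∑ z, A r z u := Finset.sum_congr rfl fun z _ => hsymm r u z
    _ = ∑ z, (if z = v then (1:ℝ) else 0) := Finset.sum_congr rfl fun z _ => hArcol z
    _ = 1 := by simp
  have hrow1 : ∀ w, ∑ z, A r w z = 1 := fun w => (hs r w).trans hsr
  have hArsq : A r * A r = 1 := by
    ext w z
    obtain ⟨y0, hy0, hy0u⟩ := exists_unique_eq_one_of_sum_eq_one (fun y => A r w y)
      (fun y => hE r w y) (hrow1 w)
    have hsum : (A r * A r) w z = A r y0 z := by
      rw [Matrix.mul_apply, Finset.sum_eq_single y0]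
      · rw [hy0, one_mul]
      · intro y _ hy
        have hz : A r w y = 0 := by
          rcases hE r w y with h | h
          · exact h
          · exact absurd (hy0u y h) hy
        rw [hz, zero_mul]
      · simp
    rw [hsum, Matrix.one_apply]
    by_cases hwz : w = z
    · rw [if_pos hwz, ← hwz, hsymm]
      exact hy0
    · rw [if_neg hwz]
      rcases hE r y0 z with h | h
      · exact h
      · exfalso
        obtain ⟨y1, hy1, hy1u⟩ := exists_unique_eq_one_of_sum_eq_one (fun y => A r y0 y)
          (fun y => hE r y0 y) (hrow1 y0)
        have hw : A r y0 w = 1 := (hsymm r y0 w).trans hy0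
        exact hwz ((hy1u w hw).trans (hy1u z h).symm)
  have hMcSq : Mc r * Mc r = 1 := by
    have h1 : Mc r * Mc r = ((A r * A r).map Complex.ofReal) := by
      ext w z
      rw [Matrix.mul_apply, Matrix.map_apply, Matrix.mul_apply]
      push_cast
      rfl
    rw [h1, hArsq, Matrix.map_one _ Complex.ofReal_zero Complex.ofReal_one]
  have hExp2 : NormedSpace.exp ((2 * t) • Aℂ) = (μ^2) • (1 : Matrix V V ℂ) := by
    have h2t : (2 * t) • Aℂ = t • Aℂ + t • Aℂ := by rw [← add_smul]; ring_nf
    rw [h2t, Matrix.exp_add_of_commute _ _ (Commute.refl _), ← hUdef, hkeyU]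
    rw [smul_mul_assoc, mul_smul_comm, smul_smul, hMcSq, sq]
  have hscalar : ∀ x : ℝ, (∃ w : V → ℂ, w ≠ 0 ∧ Aℂ *ᵥ w = ((x : ℝ) : ℂ) • w) →
      Complex.exp (2 * t * x) = μ^2 := by
    rintro x ⟨w, hw0, hwx⟩
    have h1 : ((2*t) • Aℂ) *ᵥ w = (2*t*(x:ℂ)) • w := by
      rw [Matrix.smul_mulVec, hwx, smul_smul]
    have h2 := exp_mulVec_eigen _ w _ h1
    rw [hExp2, Matrix.smul_mulVec, Matrix.one_mulVec] at h2
    obtain ⟨j, hj⟩ := Function.ne_iff.mp hw0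
    have h3 := congrFun h2 j
    simp only [Pi.smul_apply, smul_eq_mul] at h3
    exact (mul_right_cancel₀ hj h3).symm
  -- regularity
  have hdegsum : ∀ w : V, ∑ z, Aℝ w z = (G.degree w : ℝ) := by
    intro w
    simp [hAR, SimpleGraph.adjMatrix_apply, SimpleGraph.degree, Finset.sum_boole,
      SimpleGraph.neighborFinset_eq_filter]
  have hrowconst : ∀ w w' : V, ∑ z, Aℝ w z = ∑ z, Aℝ w' z := by
    intro w w'
    have key : ∀ a : V, ∑ z, Aℝ a z = ∑ i, coeff i * s i := by
      intro a
      have h1 : ∀ z, Aℝ a z = ∑ i, coeff i * A i a z := by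
        intro z
        rw [hcoeff]
        simp [Matrix.sum_apply]
      rw [Finset.sum_congr rfl fun z _ => h1 z, Finset.sum_comm]
      exact Finset.sum_congr rfl fun i _ => by rw [← Finset.mul_sum, hs]
    rw [key w, key w']
  set k : ℕ := G.degree u with hkdef
  have hdegw : ∀ w, (G.degree w : ℝ) = (k : ℝ) := by
    intro w
    rw [← hdegsum w, hkdef, ← hdegsum u, hrowconst w u]
  have hone0 : (fun _ : V => (1:ℂ)) ≠ 0 := fun h => by simpa using congrFun h u
  have hkvec : Aℂ *ᵥ (fun _ => (1:ℂ)) = (((k:ℝ) : ℝ) : ℂ) • (fun _ => (1:ℂ)) := by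
    funext w
    have h1 : (Aℂ *ᵥ fun _ => (1:ℂ)) w = ∑ z, Aℂ w z := by
      simp [Matrix.mulVec, dotProduct]
    have h2 : ∑ z, Aℂ w z = ((∑ z, Aℝ w z : ℝ) : ℂ) := by
      rw [← hmapA]
      push_cast
      rfl
    rw [h1, h2, hdegsum w, hdegw w]
    simp
  have hek : Complex.exp (2 * t * ((k:ℕ):ℝ)) = μ^2 := hscalar k ⟨_, hone0, hkvec⟩
  have hints : ∀ x : ℝ, Complex.exp (2 * t * x) = μ^2 →
      ∃ m : ℤ, τ * x = τ * (k:ℝ) + m * Real.pi := by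
    intro x hx
    obtain ⟨m, hm⟩ := Complex.exp_eq_exp_iff_exists_int.mp (hx.trans hek.symm)
    refine ⟨m, ?_⟩
    have h1 : ((τ * x : ℝ) : ℂ) * Complex.I
        = ((τ * (k:ℝ) + m * Real.pi : ℝ) : ℂ) * Complex.I := by
      rw [ht] at hm
      push_cast at hm ⊢
      linear_combination hm / 2
    have h2 := mul_right_cancel₀ Complex.I_ne_zero h1
    exact_mod_cast h2
  -- hermitian eigen decomposition
  have hherm : Aℂ.IsHermitian := by
    rw [Matrix.IsHermitian]
    ext i j
    simp [hAC, Matrix.conjTranspose_apply, SimpleGraph.adjMatrix_apply, G.adj_comm i j,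
      apply_ite (star : ℂ → ℂ)]
  have heig : ∀ g : V, ∃ m : ℤ, τ * (hherm.eigenvalues g) = τ * (k:ℝ) + m * Real.pi := by
    intro g
    apply hints
    apply hscalar
    refine ⟨⇑(hherm.eigenvectorBasis g), ?_, ?_⟩
    · intro h
      exact hherm.eigenvectorBasis.orthonormal.ne_zero g (by ext i; exact congrFun h i)
    · have h1 := hherm.mulVec_eigenvectorBasis g
      rw [h1]
      ext i
      simp [Complex.real_smul]
  choose nf hnf using heig
  have htr : ∑ g, hherm.eigenvalues g = 0 := by
    have h1 : Aℂ.trace = 0 := by simp [hAC]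
    have h2 := trace_eq_sum_eig hherm
    rw [h1] at h2
    have h3 : ((∑ g, hherm.eigenvalues g : ℝ) : ℂ) = 0 := by
      push_cast
      exact h2.symm
    exact_mod_cast h3
  set N : ℤ := ∑ g, nf g with hNdef
  have hcard : 0 < Fintype.card V := Fintype.card_pos_iff.mpr ⟨u⟩
  have hsum0 : (Fintype.card V : ℝ) * (τ * (k:ℝ)) + (N : ℝ) * Real.pi = 0 := by
    have h1 : ∑ g, (τ * hherm.eigenvalues g) = 0 := by
      rw [← Finset.mul_sum, htr, mul_zero]
    have h2 : ∑ g, (τ * hherm.eigenvalues g)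
        = (Fintype.card V : ℝ) * (τ * (k:ℝ)) + (∑ g, ((nf g : ℤ) : ℝ)) * Real.pi := by
      rw [Finset.sum_congr rfl fun g _ => hnf g, Finset.sum_add_distrib, Finset.sum_const,
        ← Finset.sum_mul, nsmul_eq_mul, Finset.card_univ]
    rw [h2] at h1
    have h3 : ((N : ℤ) : ℝ) = ∑ g, ((nf g : ℤ) : ℝ) := by rw [hNdef]; push_cast; rfl
    rw [h3]
    linarith [h1]
  -- conclusion
  intro x hx
  rw [spectrum.mem_iff] at hx
  have halg : algebraMap ℝ (Matrix V V ℝ) x = Matrix.scalar V x := by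
    rw [Matrix.algebraMap_eq_diagonal, Matrix.scalar_apply]
    rfl
  rw [halg] at hx
  have hdetR : (Matrix.scalar V x - Aℝ).det = 0 := by
    by_contra h
    exact hx ((Matrix.isUnit_iff_isUnit_det _).mpr (isUnit_iff_ne_zero.mpr h))
  have hdetC : (((x : ℝ) : ℂ) • (1 : Matrix V V ℂ) - Aℂ).det = 0 := by
    have h1 : ((Matrix.scalar V x - Aℝ).map Complex.ofReal)
        = ((x : ℝ) : ℂ) • (1 : Matrix V V ℂ) - Aℂ := by
      ext w z
      rw [← hmapA]
      simp only [Matrix.map_apply, Matrix.sub_apply, Matrix.scalar_apply, Matrix.smul_apply,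
        Matrix.one_apply, Matrix.diagonal_apply, smul_eq_mul]
      split_ifs <;> push_cast <;> ring
    have h2 : (((Matrix.scalar V x - Aℝ)).map Complex.ofReal).det = 0 := by
      have h3 := RingHom.map_det Complex.ofRealHom (Matrix.scalar V x - Aℝ)
      rw [hdetR, map_zero] at h3
      exact h3.symm
    rw [h1] at h2
    exact h2
  obtain ⟨w, hw0, hwz⟩ := (Matrix.exists_mulVec_eq_zero_iff).mpr hdetC
  have hweig : Aℂ *ᵥ w = ((x : ℝ) : ℂ) • w := by
    rw [Matrix.sub_mulVec, Matrix.smul_mulVec, Matrix.one_mulVec] at hwz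
    exact (sub_eq_zero.mp hwz).symm
  have hxint : IsIntegral ℤ x := adj_isIntegral G x hdetR
  obtain ⟨nx, hnx⟩ := hints x (hscalar x ⟨w, hw0, hweig⟩)
  by_cases hk0 : k = 0
  · refine ⟨0, ?_⟩
    have hAC0 : Aℂ = 0 := by
      ext a b
      simp only [hAC, SimpleGraph.adjMatrix_apply, Matrix.zero_apply]
      rw [if_neg]
      intro hadj
      have hmem : b ∈ G.neighborFinset a := (SimpleGraph.mem_neighborFinset G a b).mpr hadj
      have hpos : 0 < G.degree a := Finset.card_pos.mpr ⟨b, hmem⟩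
      have hda := hdegw a
      rw [hk0] at hda
      norm_num at hda
      omega
    rw [hAC0, Matrix.zero_mulVec] at hweig
    rcases smul_eq_zero.mp hweig.symm with h | h
    · exact_mod_cast h
    · exact absurd h hw0
  · have hπ : Real.pi ≠ 0 := Real.pi_ne_zero
    have hkR : ((k:ℕ):ℝ) ≠ 0 := Nat.cast_ne_zero.mpr hk0
    have hNne : (N : ℝ) ≠ 0 := by
      intro h
      have hs0 := hsum0
      rw [h, zero_mul, add_zero] at hs0
      have hcV : (Fintype.card V : ℝ) ≠ 0 := Nat.cast_ne_zero.mpr hcard.ne'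
      rcases mul_eq_zero.mp hs0 with h1 | h1
      · exact hcV h1
      · rcases mul_eq_zero.mp h1 with h2 | h2
        · exact hτ h2
        · exact hkR h2
    have hNx : (N : ℝ) * x = (((N - nx * (Fintype.card V : ℤ)) * (k : ℤ) : ℤ) : ℝ) := by
      have hτx : τ * ((N : ℝ) * x)
          = τ * ((((N - nx * (Fintype.card V : ℤ)) * (k : ℤ) : ℤ) : ℝ)) := by
        push_cast
        linear_combination (N : ℝ) * hnx + (nx : ℝ) * hsum0
      exact mul_left_cancel₀ hτ hτx
    set q : ℚ := (((N - nx * (Fintype.card V : ℤ)) * (k : ℤ) : ℤ) : ℚ) / (N : ℚ) with hq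
    have hxq : x = (q : ℝ) := by
      rw [hq]
      push_cast
      rw [eq_div_iff (by exact_mod_cast hNne)]
      push_cast at hNx
      linarith [hNx]
    exact int_of_rat_isIntegral x q hxq hxint
end

section
/- Let X be a distance-regular graph of diameter 3 with intersection array {n−1, c, 1; 1, c, n−1} (a distance-regular 2-fold antipodal cover of K_n) satisfying n = 2c + 2 (i.e., δ = n − 2c − 2 = 0). Then X does not admit perfect state transfer between any pair of vertices at any time. -/
open Matrix

/-- `G` is a distance-regular 2-fold antipodal cover of `K_n` with parameter `c`,
i.e. a distance-regular graph of diameter 3 with intersection array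
`{n-1, c, 1; 1, c, n-1}`. -/
def IsCoverKn {V : Type*} [Fintype V] [DecidableEq V] (G : SimpleGraph V)
    (n c : ℕ) : Prop :=
  ∃ b' c' : ℕ → ℕ, IsDRG G 3 b' c' ∧
    b' 0 = n - 1 ∧ b' 1 = c ∧ b' 2 = 1 ∧ c' 1 = 1 ∧ c' 2 = c ∧ c' 3 = n - 1

section Aux

set_option linter.unusedSectionVars false
set_option linter.unusedVariables false

open Finset Nat

variable {V : Type*} [Fintype V] [DecidableEq V] {G : SimpleGraph V} [DecidableRel G.Adj]

/-- number of neighbours `w` of `v` with `G.dist u w = j`. -/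
noncomputable def ncount (G : SimpleGraph V) [DecidableRel G.Adj] (u v : V) (j : ℕ) : ℕ :=
  ((G.neighborFinset v).filter (fun w => G.dist u w = j)).card

lemma nat_card_eq_ncount (u v : V) (j : ℕ) :
    Nat.card {w : V // G.Adj v w ∧ G.dist u w = j} = ncount G u v j := by
  rw [Nat.card_eq_fintype_card, Fintype.card_subtype, ncount,
    SimpleGraph.neighborFinset_eq_filter, Finset.filter_filter]

/-- The combinatorial facts we need about a `δ = 0` double cover of `K_n`. -/
structure CoverFacts (G : SimpleGraph V) [DecidableRel G.Adj] (c : ℕ) : Prop where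
  conn : G.Connected
  dist_le : ∀ u v : V, G.dist u v ≤ 3
  cpos : 1 ≤ c
  deg : ∀ v : V, (G.neighborFinset v).card = 2 * c + 1
  n10 : ∀ u v : V, G.dist u v = 1 → ncount G u v 0 = 1
  n12 : ∀ u v : V, G.dist u v = 1 → ncount G u v 2 = c
  n21 : ∀ u v : V, G.dist u v = 2 → ncount G u v 1 = c
  n23 : ∀ u v : V, G.dist u v = 2 → ncount G u v 3 = 1
  n32 : ∀ u v : V, G.dist u v = 3 → ncount G u v 2 = 2 * c + 1

namespace CoverFacts

variable {c : ℕ}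

lemma dist_nbr (h : CoverFacts G c) {u v w : V} (hw : w ∈ G.neighborFinset v) :
    G.dist u v ≤ G.dist u w + 1 ∧ G.dist u w ≤ G.dist u v + 1 := by
  rw [SimpleGraph.mem_neighborFinset] at hw
  have h1 : G.dist v w = 1 := SimpleGraph.dist_eq_one_iff_adj.mpr hw
  have h2 : G.dist w v = 1 := SimpleGraph.dist_eq_one_iff_adj.mpr hw.symm
  constructor
  · have := h.conn.dist_triangle (u := u) (v := w) (w := v)
    omega
  · have := h.conn.dist_triangle (u := u) (v := v) (w := w)
    omega

lemma ncount_far (h : CoverFacts G c) (u v : V) (j : ℕ)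
    (hj : j + 1 < G.dist u v ∨ G.dist u v + 1 < j) : ncount G u v j = 0 := by
  rw [ncount, Finset.card_eq_zero, Finset.filter_eq_empty_iff]
  intro w hw
  have := h.dist_nbr (u := u) hw
  omega

lemma ncount_self (h : CoverFacts G c) (v : V) : ncount G v v 0 = 0 := by
  rw [ncount, Finset.card_eq_zero, Finset.filter_eq_empty_iff]
  intro w hw
  rw [SimpleGraph.mem_neighborFinset] at hw
  rw [h.conn.dist_eq_zero_iff]
  exact fun hv => hw.ne' hv.symm

lemma ncount_partition (h : CoverFacts G c) (u v : V) :
    ncount G u v 0 + ncount G u v 1 + ncount G u v 2 + ncount G u v 3 = 2 * c + 1 := by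
  have hmaps : ∀ w ∈ G.neighborFinset v, G.dist u w ∈ Finset.range 4 := by
    intro w _
    simp only [Finset.mem_range]
    have := h.dist_le u w
    omega
  have := Finset.card_eq_sum_card_fiberwise hmaps
  rw [h.deg v] at this
  simp only [Finset.sum_range_succ, Finset.range_zero, Finset.sum_empty] at this
  simpa [ncount] using this.symm

lemma sum_nbr (h : CoverFacts G c) (u v : V) (f : ℕ → ℂ) :
    ∑ w ∈ G.neighborFinset v, f (G.dist u w)
      = ∑ j ∈ Finset.range 4, (ncount G u v j : ℂ) * f j := by
  have hmaps : ∀ w ∈ G.neighborFinset v, G.dist u w ∈ Finset.range 4 := by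
    intro w _
    simp only [Finset.mem_range]
    have := h.dist_le u w
    omega
  rw [← Finset.sum_fiberwise_of_maps_to hmaps (fun w => f (G.dist u w))]
  refine Finset.sum_congr rfl fun j _ => ?_
  rw [show ∑ w ∈ (G.neighborFinset v).filter (fun w => G.dist u w = j), f (G.dist u w)
      = ∑ w ∈ (G.neighborFinset v).filter (fun w => G.dist u w = j), f j from
    Finset.sum_congr rfl (fun w hw => by rw [(Finset.mem_filter.mp hw).2])]
  rw [Finset.sum_const, nsmul_eq_mul]
  rfl

lemma counts0 (h : CoverFacts G c) (v : V) :
    ncount G v v 0 = 0 ∧ ncount G v v 1 = 2 * c + 1 ∧ ncount G v v 2 = 0 ∧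
      ncount G v v 3 = 0 := by
  have hd : G.dist v v = 0 := SimpleGraph.dist_self
  have h0 := h.ncount_self v
  have h2 := h.ncount_far v v 2 (by omega)
  have h3 := h.ncount_far v v 3 (by omega)
  have hpart := h.ncount_partition v v
  omega

lemma counts1 (h : CoverFacts G c) {u v : V} (hd : G.dist u v = 1) :
    ncount G u v 0 = 1 ∧ ncount G u v 1 = c ∧ ncount G u v 2 = c ∧
      ncount G u v 3 = 0 := by
  have h0 := h.n10 u v hd
  have h2 := h.n12 u v hd
  have h3 := h.ncount_far u v 3 (by omega)
  have hpart := h.ncount_partition u v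
  omega

lemma counts2 (h : CoverFacts G c) {u v : V} (hd : G.dist u v = 2) :
    ncount G u v 0 = 0 ∧ ncount G u v 1 = c ∧ ncount G u v 2 = c ∧
      ncount G u v 3 = 1 := by
  have h0 := h.ncount_far u v 0 (by omega)
  have h1 := h.n21 u v hd
  have h3 := h.n23 u v hd
  have hpart := h.ncount_partition u v
  omega

lemma counts3 (h : CoverFacts G c) {u v : V} (hd : G.dist u v = 3) :
    ncount G u v 0 = 0 ∧ ncount G u v 1 = 0 ∧ ncount G u v 2 = 2 * c + 1 ∧
      ncount G u v 3 = 0 := by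
  have h0 := h.ncount_far u v 0 (by omega)
  have h1 := h.ncount_far u v 1 (by omega)
  have h2 := h.n32 u v hd
  have hpart := h.ncount_partition u v
  omega

end CoverFacts

/-- Entries of `A^j` by distance class. -/
noncomputable def val1 : ℕ → ℂ := fun j => if j = 1 then 1 else 0

noncomputable def val2 (c : ℂ) : ℕ → ℂ := fun j =>
  if j = 0 then 2 * c + 1 else if j = 1 then c else if j = 2 then c else 0

noncomputable def val3 (c : ℂ) : ℕ → ℂ := fun j =>
  if j = 0 then 2 * c ^ 2 + c else if j = 1 then 2 * c + 1 + 2 * c ^ 2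
    else if j = 2 then 2 * c ^ 2 else if j = 3 then 2 * c ^ 2 + c else 0

noncomputable def val4 (c : ℂ) : ℕ → ℂ := fun j =>
  if j = 0 then (2 * c + 1) ^ 2 + 2 * c ^ 2 * (2 * c + 1)
    else if j = 1 then 2 * c * (2 * c + 1) + 4 * c ^ 3
    else if j = 2 then 2 * c * (2 * c + 1) + 4 * c ^ 3
    else if j = 3 then 2 * c ^ 2 * (2 * c + 1) else 0

namespace CoverFacts

variable {c : ℕ}

lemma entry1 (u v : V) : G.adjMatrix ℂ u v = val1 (G.dist u v) := by
  simp only [val1, SimpleGraph.dist_eq_one_iff_adj, SimpleGraph.adjMatrix_apply]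

lemma entry2 (h : CoverFacts G c) (u v : V) :
    (G.adjMatrix ℂ ^ 2) u v = val2 (c : ℂ) (G.dist u v) := by
  have e : (G.adjMatrix ℂ ^ 2) u v = ∑ w ∈ G.neighborFinset v, val1 (G.dist u w) := by
    rw [pow_two, SimpleGraph.mul_adjMatrix_apply]
    exact Finset.sum_congr rfl fun w _ => entry1 u w
  rw [e, h.sum_nbr u v val1]
  have hd3 := h.dist_le u v
  have hcase : G.dist u v = 0 ∨ G.dist u v = 1 ∨ G.dist u v = 2 ∨ G.dist u v = 3 := by omega
  rcases hcase with hd | hd | hd | hd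
  · have huv : u = v := h.conn.dist_eq_zero_iff.mp hd
    subst huv
    obtain ⟨h0, h1, h2, h3⟩ := h.counts0 u
    rw [hd]
    simp only [Finset.sum_range_succ, Finset.range_zero, Finset.sum_empty, h0, h1, h2, h3,
      val1, val2]
    push_cast
    norm_num
  · obtain ⟨h0, h1, h2, h3⟩ := h.counts1 hd
    rw [hd]
    simp only [Finset.sum_range_succ, Finset.range_zero, Finset.sum_empty, h0, h1, h2, h3,
      val1, val2]
    push_cast
    norm_num
  · obtain ⟨h0, h1, h2, h3⟩ := h.counts2 hd
    rw [hd]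
    simp only [Finset.sum_range_succ, Finset.range_zero, Finset.sum_empty, h0, h1, h2, h3,
      val1, val2]
    push_cast
    norm_num
  · obtain ⟨h0, h1, h2, h3⟩ := h.counts3 hd
    rw [hd]
    simp only [Finset.sum_range_succ, Finset.range_zero, Finset.sum_empty, h0, h1, h2, h3,
      val1, val2]
    push_cast
    norm_num

lemma entry3 (h : CoverFacts G c) (u v : V) :
    (G.adjMatrix ℂ ^ 3) u v = val3 (c : ℂ) (G.dist u v) := by
  have e : (G.adjMatrix ℂ ^ 3) u v
      = ∑ w ∈ G.neighborFinset v, val2 (c : ℂ) (G.dist u w) := by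
    rw [pow_succ, SimpleGraph.mul_adjMatrix_apply]
    exact Finset.sum_congr rfl fun w _ => h.entry2 u w
  rw [e, h.sum_nbr u v (val2 (c : ℂ))]
  have hd3 := h.dist_le u v
  have hcase : G.dist u v = 0 ∨ G.dist u v = 1 ∨ G.dist u v = 2 ∨ G.dist u v = 3 := by omega
  rcases hcase with hd | hd | hd | hd
  · have huv : u = v := h.conn.dist_eq_zero_iff.mp hd
    subst huv
    obtain ⟨h0, h1, h2, h3⟩ := h.counts0 u
    rw [hd]
    simp only [Finset.sum_range_succ, Finset.range_zero, Finset.sum_empty, h0, h1, h2, h3,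
      val2, val3]
    push_cast
    norm_num
    ring
  · obtain ⟨h0, h1, h2, h3⟩ := h.counts1 hd
    rw [hd]
    simp only [Finset.sum_range_succ, Finset.range_zero, Finset.sum_empty, h0, h1, h2, h3,
      val2, val3]
    push_cast
    norm_num
    ring
  · obtain ⟨h0, h1, h2, h3⟩ := h.counts2 hd
    rw [hd]
    simp only [Finset.sum_range_succ, Finset.range_zero, Finset.sum_empty, h0, h1, h2, h3,
      val2, val3]
    push_cast
    norm_num
    ring
  · obtain ⟨h0, h1, h2, h3⟩ := h.counts3 hd
    rw [hd]
    simp only [Finset.sum_range_succ, Finset.range_zero, Finset.sum_empty, h0, h1, h2, h3,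
      val2, val3]
    push_cast
    norm_num
    ring

lemma entry4 (h : CoverFacts G c) (u v : V) :
    (G.adjMatrix ℂ ^ 4) u v = val4 (c : ℂ) (G.dist u v) := by
  have e : (G.adjMatrix ℂ ^ 4) u v
      = ∑ w ∈ G.neighborFinset v, val3 (c : ℂ) (G.dist u w) := by
    rw [pow_succ, SimpleGraph.mul_adjMatrix_apply]
    exact Finset.sum_congr rfl fun w _ => h.entry3 u w
  rw [e, h.sum_nbr u v (val3 (c : ℂ))]
  have hd3 := h.dist_le u v
  have hcase : G.dist u v = 0 ∨ G.dist u v = 1 ∨ G.dist u v = 2 ∨ G.dist u v = 3 := by omega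
  rcases hcase with hd | hd | hd | hd
  · have huv : u = v := h.conn.dist_eq_zero_iff.mp hd
    subst huv
    obtain ⟨h0, h1, h2, h3⟩ := h.counts0 u
    rw [hd]
    simp only [Finset.sum_range_succ, Finset.range_zero, Finset.sum_empty, h0, h1, h2, h3,
      val3, val4]
    push_cast
    norm_num
    ring
  · obtain ⟨h0, h1, h2, h3⟩ := h.counts1 hd
    rw [hd]
    simp only [Finset.sum_range_succ, Finset.range_zero, Finset.sum_empty, h0, h1, h2, h3,
      val3, val4]
    push_cast
    norm_num
    ring
  · obtain ⟨h0, h1, h2, h3⟩ := h.counts2 hd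
    rw [hd]
    simp only [Finset.sum_range_succ, Finset.range_zero, Finset.sum_empty, h0, h1, h2, h3,
      val3, val4]
    push_cast
    norm_num
    ring
  · obtain ⟨h0, h1, h2, h3⟩ := h.counts3 hd
    rw [hd]
    simp only [Finset.sum_range_succ, Finset.range_zero, Finset.sum_empty, h0, h1, h2, h3,
      val3, val4]
    push_cast
    norm_num
    ring

lemma poly_id (h : CoverFacts G c) :
    (G.adjMatrix ℂ) ^ 4 = (2 * (c : ℂ)) • (G.adjMatrix ℂ) ^ 3
      + (2 * (2 * (c : ℂ) + 1)) • (G.adjMatrix ℂ) ^ 2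
      - (2 * (c : ℂ) * (2 * c + 1)) • (G.adjMatrix ℂ)
      - ((2 * (c : ℂ) + 1) ^ 2) • (1 : Matrix V V ℂ) := by
  ext u v
  simp only [Matrix.add_apply, Matrix.sub_apply, Matrix.smul_apply, smul_eq_mul]
  rw [h.entry4 u v, h.entry3 u v, h.entry2 u v, entry1 u v]
  have hd3 := h.dist_le u v
  have hcase : G.dist u v = 0 ∨ G.dist u v = 1 ∨ G.dist u v = 2 ∨ G.dist u v = 3 := by omega
  rcases hcase with hd | hd | hd | hd
  · have huv : u = v := h.conn.dist_eq_zero_iff.mp hd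
    subst huv
    rw [hd, Matrix.one_apply_eq]
    simp only [val1, val2, val3, val4]
    norm_num
    ring
  all_goals {
    have hne : u ≠ v := by
      intro e
      subst e
      rw [SimpleGraph.dist_self] at hd
      omega
    rw [hd, Matrix.one_apply_ne hne]
    simp only [val1, val2, val3, val4]
    norm_num
    ring }

end CoverFacts

/-- The (unnormalised) spectral projection associated to the root `θ`. -/
noncomputable def Fmat (G : SimpleGraph V) [DecidableRel G.Adj] (c : ℕ) (θ : ℂ) :
    Matrix V V ℂ :=
  (G.adjMatrix ℂ) ^ 3 + (θ - 2 * c) • (G.adjMatrix ℂ) ^ 2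
    + (θ ^ 2 - 2 * c * θ - 2 * (2 * c + 1)) • (G.adjMatrix ℂ)
    + (θ ^ 3 - 2 * c * θ ^ 2 - 2 * (2 * c + 1) * θ + 2 * c * (2 * c + 1)) • (1 : Matrix V V ℂ)

namespace CoverFacts

variable {c : ℕ}

lemma mulF (h : CoverFacts G c) {θ : ℂ}
    (hroot : θ ^ 4 - 2 * c * θ ^ 3 - 2 * (2 * c + 1) * θ ^ 2
      + 2 * c * (2 * c + 1) * θ + (2 * c + 1) ^ 2 = 0) :
    G.adjMatrix ℂ * Fmat G c θ = θ • Fmat G c θ := by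
  rw [Fmat]
  simp only [mul_add, mul_smul_comm, mul_one, smul_add, smul_smul]
  rw [show G.adjMatrix ℂ * (G.adjMatrix ℂ) ^ 3 = (G.adjMatrix ℂ) ^ 4 from (pow_succ' _ 3).symm,
    show G.adjMatrix ℂ * (G.adjMatrix ℂ) ^ 2 = (G.adjMatrix ℂ) ^ 3 from (pow_succ' _ 2).symm,
    show G.adjMatrix ℂ * G.adjMatrix ℂ = (G.adjMatrix ℂ) ^ 2 from (pow_two _).symm,
    h.poly_id]
  match_scalars
  · ring
  · ring
  · ring
  · linear_combination -hroot

end CoverFacts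

lemma exp_mul_of_eigen (M B : Matrix V V ℂ) {μ : ℂ} (h : M * B = μ • B) :
    NormedSpace.exp M * B = Complex.exp μ • B := by
  letI : SeminormedRing (Matrix V V ℂ) := Matrix.linftyOpSemiNormedRing
  letI : NormedRing (Matrix V V ℂ) := Matrix.linftyOpNormedRing
  letI : NormedAlgebra ℂ (Matrix V V ℂ) := Matrix.linftyOpNormedAlgebra
  have hpow : ∀ n : ℕ, M ^ n * B = μ ^ n • B := by
    intro n
    induction n with
    | zero => simp
    | succ n ih =>
      rw [pow_succ, mul_assoc, h, mul_smul_comm, ih, smul_smul, pow_succ, mul_comm]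
  have hsum : Summable fun n : ℕ => (n ! : ℂ)⁻¹ • M ^ n :=
    NormedSpace.expSeries_summable' (𝕂 := ℂ) M
  have hsum2 : Summable fun n : ℕ => (n ! : ℂ)⁻¹ • μ ^ n :=
    NormedSpace.expSeries_summable' (𝕂 := ℂ) μ
  have φcont := (LinearMap.mulRight ℂ B).toContinuousLinearMap
  have step1 : NormedSpace.exp M * B = ∑' n : ℕ, (n ! : ℂ)⁻¹ • M ^ n * B := by
    rw [NormedSpace.exp_eq_tsum (𝕂 := ℂ)]
    have := ((LinearMap.mulRight ℂ B).toContinuousLinearMap).map_tsum hsum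
    simpa using this
  rw [step1]
  have step2 : ∀ n : ℕ, (n ! : ℂ)⁻¹ • M ^ n * B = ((n ! : ℂ)⁻¹ • μ ^ n) • B := by
    intro n
    rw [smul_mul_assoc, hpow n, smul_smul, smul_eq_mul]
  simp_rw [step2]
  have step3 := ((LinearMap.toSpanSingleton ℂ (Matrix V V ℂ) B).toContinuousLinearMap).map_tsum
    hsum2
  simp only [LinearMap.coe_toContinuousLinearMap', LinearMap.toSpanSingleton_apply] at step3
  rw [← step3]
  congr 1
  rw [Complex.exp_eq_exp_ℂ, NormedSpace.exp_eq_tsum (𝕂 := ℂ)]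

namespace CoverFacts

lemma F_apply (h : CoverFacts G c) (θ : ℂ) (u v : V) :
    Fmat G c θ u v = val3 (c : ℂ) (G.dist u v) + (θ - 2 * c) * val2 (c : ℂ) (G.dist u v)
      + (θ ^ 2 - 2 * c * θ - 2 * (2 * c + 1)) * val1 (G.dist u v)
      + (θ ^ 3 - 2 * c * θ ^ 2 - 2 * (2 * c + 1) * θ + 2 * c * (2 * c + 1))
          * (if u = v then 1 else 0) := by
  simp only [Fmat, Matrix.add_apply, Matrix.smul_apply, Matrix.one_apply, smul_eq_mul,
    h.entry3, h.entry2, entry1]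

lemma F_uu (h : CoverFacts G c) (θ : ℂ) (u : V) :
    Fmat G c θ u u = (2 * (c : ℂ) ^ 2 + c) + (θ - 2 * c) * (2 * c + 1)
      + (θ ^ 3 - 2 * c * θ ^ 2 - 2 * (2 * c + 1) * θ + 2 * c * (2 * c + 1)) := by
  rw [h.F_apply θ u u, SimpleGraph.dist_self]
  simp [val1, val2, val3]

lemma commute_F (h : CoverFacts G c) (θ : ℂ) :
    Commute (G.adjMatrix ℂ) (Fmat G c θ) := by
  unfold Fmat
  exact ((((Commute.refl _).pow_right 3).add_right
    (((Commute.refl _).pow_right 2).smul_right _)).add_right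
    ((Commute.refl _).smul_right _)).add_right ((Commute.one_right _).smul_right _)

end CoverFacts

lemma IsCoverKn.coverFacts {n c : ℕ}
    (hcover : IsCoverKn G n c) (hdelta : n = 2 * c + 2) : CoverFacts G c := by
  obtain ⟨b', c', ⟨hconn, hle, ⟨u0, v0, h3⟩, hc, hb⟩, hb0, hb1, hb2, hc1, hc2, hc3⟩ := hcover
  have hn1 : n - 1 = 2 * c + 1 := by omega
  have hdeg : ∀ v : V, (G.neighborFinset v).card = 2 * c + 1 := by
    intro v
    have h0 := hb 0 (by norm_num) v v SimpleGraph.dist_self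
    rw [nat_card_eq_ncount, hb0, hn1] at h0
    have hfil : (G.neighborFinset v).filter (fun w => G.dist v w = 1) = G.neighborFinset v :=
      Finset.filter_true_of_mem fun w hw => SimpleGraph.dist_eq_one_iff_adj.mpr
        (by rwa [SimpleGraph.mem_neighborFinset] at hw)
    rwa [ncount, hfil] at h0
  have hcpos : 1 ≤ c := by
    have h32 := hc 3 (by norm_num) (by norm_num) u0 v0 h3
    rw [nat_card_eq_ncount, hc3, hn1] at h32
    norm_num at h32
    have hpos : 0 < ncount G u0 v0 2 := by omega
    rw [ncount, Finset.card_pos] at hpos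
    obtain ⟨w, hw⟩ := hpos
    rw [Finset.mem_filter] at hw
    obtain ⟨-, hdw⟩ := hw
    obtain ⟨p, hp⟩ := hconn.exists_walk_length_eq_dist u0 w
    rw [hdw] at hp
    cases p with
    | nil => simp at hp
    | cons hadj q =>
      rename_i y
      cases q with
      | nil => simp at hp
      | cons hadj' r =>
        rename_i z
        have hr : r.length = 0 := by
          simp only [SimpleGraph.Walk.length_cons] at hp
          omega
        have hbw := SimpleGraph.Walk.eq_of_length_eq_zero hr
        subst hbw
        have h21 := hc 2 (by norm_num) (by norm_num) u0 z hdw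
        rw [nat_card_eq_ncount, hc2] at h21
        norm_num at h21
        have hpos1 : 0 < ncount G u0 z 1 := by
          rw [ncount, Finset.card_pos]
          refine ⟨y, Finset.mem_filter.mpr ⟨?_, SimpleGraph.dist_eq_one_iff_adj.mpr hadj⟩⟩
          rw [SimpleGraph.mem_neighborFinset]
          exact hadj'.symm
        omega
  refine ⟨hconn, hle, hcpos, hdeg, ?_, ?_, ?_, ?_, ?_⟩
  · intro u v hd
    have h0 := hc 1 (by norm_num) (by norm_num) u v hd
    rw [nat_card_eq_ncount, hc1] at h0
    norm_num at h0
    exact h0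
  · intro u v hd
    have h0 := hb 1 (by norm_num) u v hd
    rw [nat_card_eq_ncount, hb1] at h0
    norm_num at h0
    exact h0
  · intro u v hd
    have h0 := hc 2 (by norm_num) (by norm_num) u v hd
    rw [nat_card_eq_ncount, hc2] at h0
    norm_num at h0
    exact h0
  · intro u v hd
    have h0 := hb 2 (by norm_num) u v hd
    rw [nat_card_eq_ncount, hb2] at h0
    norm_num at h0
    exact h0
  · intro u v hd
    have h0 := hc 3 (by norm_num) (by norm_num) u v hd
    rw [nat_card_eq_ncount, hc3, hn1] at h0
    norm_num at h0
    exact h0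

end Aux

/-- A distance-regular 2-fold antipodal cover of `K_n` with `δ = 0`
(i.e. `n = 2c + 2`) admits no perfect state transfer. -/
theorem stmt_6 {V : Type*} [Fintype V] [DecidableEq V]
    (G : SimpleGraph V) (n c : ℕ)
    (hcover : IsCoverKn G n c)
    (hdelta : n = 2 * c + 2) :
    ∀ (u v : V) (t : ℝ), ¬ HasPST G u v t := by
  letI instAdj : DecidableRel G.Adj := Classical.decRel G.Adj
  intro u v t hPST
  obtain ⟨hne, lam, hU⟩ := hPST
  have h : CoverFacts G c := hcover.coverFacts hdelta
  set M : Matrix V V ℂ := (Complex.I * (t : ℂ)) • G.adjMatrix ℂ with hM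
  have hTM : transitionMatrix G t = NormedSpace.exp M := rfl
  rw [hTM] at hU
  have keyF : ∀ θ : ℂ, θ ^ 4 - 2 * c * θ ^ 3 - 2 * (2 * c + 1) * θ ^ 2
      + 2 * c * (2 * c + 1) * θ + (2 * c + 1) ^ 2 = 0 →
      ∀ x : V, Complex.exp (Complex.I * t * θ) * Fmat G c θ x u
        = lam * Fmat G c θ x v := by
    intro θ hroot x
    have hMF : M * Fmat G c θ = (Complex.I * t * θ) • Fmat G c θ := by
      rw [hM, smul_mul_assoc, h.mulF hroot, smul_smul]
    have hUF := exp_mul_of_eigen M (Fmat G c θ) hMF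
    have hcomm : Fmat G c θ * NormedSpace.exp M = NormedSpace.exp M * Fmat G c θ := by
      have h1 : Commute (Fmat G c θ) M := (h.commute_F θ).symm.smul_right _
      exact (h1.exp_right).eq
    have h2 : Fmat G c θ *ᵥ (NormedSpace.exp M *ᵥ Pi.single u 1)
        = lam • (Fmat G c θ *ᵥ Pi.single v 1) := by
      rw [hU, Matrix.mulVec_smul]
    rw [Matrix.mulVec_mulVec, hcomm, hUF, Matrix.smul_mulVec] at h2
    have h3 := congrFun h2 x
    simpa using h3
  set q : ℝ := Real.sqrt (2 * (c : ℝ) + 1) with hqdef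
  have hq2R : q ^ 2 = 2 * (c : ℝ) + 1 := Real.sq_sqrt (by positivity)
  have hq : (q : ℂ) ^ 2 = 2 * (c : ℂ) + 1 := by
    have := congrArg (fun x : ℝ => (x : ℂ)) hq2R
    push_cast at this
    exact this
  have key1 := keyF (-1) (by ring)
  have key2 := keyF (q : ℂ) (by linear_combination ((q : ℂ) ^ 2 - 2 * c * q - (2 * c + 1)) * hq)
  have key3 := keyF (-(q : ℂ))
    (by linear_combination ((q : ℂ) ^ 2 + 2 * c * q - (2 * c + 1)) * hq)
  have hFuu1 : Fmat G c (-1) u u = 2 * (c : ℂ) ^ 2 + c := by rw [h.F_uu]; ring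
  have hFuu2 : Fmat G c (q : ℂ) u u = -(2 * (c : ℂ) ^ 2 + c) := by
    rw [h.F_uu]; linear_combination ((q : ℂ) - 2 * c) * hq
  have hFuu3 : Fmat G c (-(q : ℂ)) u u = -(2 * (c : ℂ) ^ 2 + c) := by
    rw [h.F_uu]; linear_combination (-(q : ℂ) - 2 * c) * hq
  have hdist3 := h.dist_le u v
  have hd0 : G.dist u v ≠ 0 := fun h0 => hne (h.conn.dist_eq_zero_iff.mp h0)
  have hcpos := h.cpos
  have hKne : (2 * (c : ℂ) ^ 2 + c) ≠ 0 := by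
    have : ((2 * c ^ 2 + c : ℕ) : ℂ) ≠ 0 := Nat.cast_ne_zero.mpr (by nlinarith)
    push_cast at this
    exact this
  have hcase : G.dist u v = 1 ∨ G.dist u v = 2 ∨ G.dist u v = 3 := by omega
  -- the two short-distance cases are impossible
  have hshort : ∀ hd : G.dist u v = 1 ∨ G.dist u v = 2, False := by
    intro hd
    have hFuv : Fmat G c (-1) u v = -(c : ℂ) := by
      rcases hd with hd | hd <;>
        · rw [h.F_apply, hd, if_neg hne]
          simp [val1, val2, val3]
          ring
    have hFvu : Fmat G c (-1) v u = -(c : ℂ) := by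
      rcases hd with hd | hd <;>
        · rw [h.F_apply, SimpleGraph.dist_comm, hd, if_neg (Ne.symm hne)]
          simp [val1, val2, val3]
          ring
    have hFvv : Fmat G c (-1) v v = 2 * (c : ℂ) ^ 2 + c := by rw [h.F_uu]; ring
    have e2 := key1 u
    have e1 := key1 v
    rw [hFuu1, hFuv] at e2
    rw [hFvu, hFvv] at e1
    have hkey : ((2 * (c : ℂ) ^ 2 + c) ^ 2 - (c : ℂ) ^ 2)
        * Complex.exp (Complex.I * t * (-1)) = 0 := by
      linear_combination (2 * (c : ℂ) ^ 2 + c) * e2 + (c : ℂ) * e1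
    rcases mul_eq_zero.mp hkey with h' | h'
    · have hnn : ((2 * c ^ 2 + c) ^ 2 : ℕ) = (c ^ 2 : ℕ) := by
        exact_mod_cast sub_eq_zero.mp h'
      nlinarith
    · exact Complex.exp_ne_zero _ h'
  rcases hcase with hd | hd | hd
  · exact hshort (Or.inl hd)
  · exact hshort (Or.inr hd)
  -- main case : distance 3
  have hFuv : ∀ θ : ℂ, Fmat G c θ u v = 2 * (c : ℂ) ^ 2 + c := by
    intro θ
    rw [h.F_apply, hd, if_neg hne]
    simp [val1, val2, val3]
  have E1 := key1 u
  have E2 := key2 u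
  have E3 := key3 u
  rw [hFuu1, hFuv] at E1
  rw [hFuu2, hFuv] at E2
  rw [hFuu3, hFuv] at E3
  -- lam = exp z1 = -exp z2 = -exp z3
  have hz12 : Complex.exp (Complex.I * t * (-1)) = -Complex.exp (Complex.I * t * q) := by
    have hk : (Complex.exp (Complex.I * t * (-1)) + Complex.exp (Complex.I * t * q))
        * (2 * (c : ℂ) ^ 2 + c) = 0 := by linear_combination E1 - E2
    rcases mul_eq_zero.mp hk with h' | h'
    · linear_combination h'
    · exact absurd h' hKne
  have hz23 : Complex.exp (Complex.I * t * q) = Complex.exp (Complex.I * t * (-(q : ℂ))) := by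
    have hk : (Complex.exp (Complex.I * t * q) - Complex.exp (Complex.I * t * (-(q : ℂ))))
        * (2 * (c : ℂ) ^ 2 + c) = 0 := by linear_combination E3 - E2
    rcases mul_eq_zero.mp hk with h' | h'
    · linear_combination h'
    · exact absurd h' hKne
  obtain ⟨bz, hb⟩ := Complex.exp_eq_exp_iff_exists_int.mp hz23
  have htq : (t : ℂ) * q = bz * Real.pi := by
    linear_combination (-Complex.I / 2) * hb + ((t : ℂ) * q - bz * Real.pi) * Complex.I_sq
  have htqR : t * q = bz * Real.pi := by exact_mod_cast htq
  have hz12' : Complex.exp (Complex.I * t * (-1))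
      = Complex.exp (Complex.I * t * q + Real.pi * Complex.I) := by
    rw [Complex.exp_add, Complex.exp_pi_mul_I, hz12]
    ring
  obtain ⟨az, ha⟩ := Complex.exp_eq_exp_iff_exists_int.mp hz12'
  have hta : -(t : ℂ) = t * q + Real.pi + az * (2 * Real.pi) := by
    linear_combination (-Complex.I) * ha
      + (-(t : ℂ) - t * q - Real.pi - az * (2 * Real.pi)) * Complex.I_sq
  have htaR : -t = t * q + Real.pi + az * (2 * Real.pi) := by exact_mod_cast hta
  set s : ℤ := -(bz + 1 + 2 * az) with hsdef
  have hts : t = Real.pi * s := by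
    push_cast [hsdef]
    linarith [htaR, htqR]
  have hsq : (s : ℝ) * q = bz := by
    have h5 : Real.pi * ((s : ℝ) * q) = Real.pi * bz := by
      rw [hts] at htqR
      linear_combination htqR
    exact mul_left_cancel₀ Real.pi_ne_zero h5
  have hZ : (bz : ℝ) ^ 2 = (s : ℝ) ^ 2 * (2 * c + 1) := by
    rw [← hsq, mul_pow, hq2R]
  have hZZ : bz ^ 2 = s ^ 2 * (2 * (c : ℤ) + 1) := by exact_mod_cast hZ
  have hodd : s + bz = -1 - 2 * az := by omega
  rcases Int.even_or_odd s with hs | hs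
  · obtain ⟨x, hx⟩ := hs
    have hbsq : Even (bz ^ 2) := by
      rw [hZZ, hx]
      exact ⟨2 * x ^ 2 * (2 * (c : ℤ) + 1), by ring⟩
    have hbE : Even bz := (Int.even_pow.mp hbsq).1
    obtain ⟨y, hy⟩ := hbE
    omega
  · obtain ⟨x, hx⟩ := hs
    have hbsq : Odd (bz ^ 2) := by
      rw [hZZ, hx]
      exact ⟨(2 * x ^ 2 + 2 * x) * (2 * (c : ℤ) + 1) + c, by ring⟩
    have hbO : Odd bz := by
      rcases Int.odd_pow.mp hbsq with h' | h'
      · exact h'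
      · norm_num at h'
    obtain ⟨y, hy⟩ := hbO
    omega
end

section
/- Let n ≥ 4 be even and let H be a symmetric n×n real matrix with all entries in {1, −1}, with H·Hᵀ = n·I, and with all diagonal entries equal to 1 (a symmetric Hadamard matrix with constant diagonal). Define the graph Γ(H) on vertex set {1, …, n} × {1, −1} in which (i, a) is adjacent to (j, b) if and only if i ≠ j and a·b = H_{ij}. Then Γ(H) is a distance-regular graph of diameter 3 with intersection array {n−1, n/2, 1; 1, n/2, n−1}, i.e., a distance-regular 2-fold antipodal cover of K_n with c = n/2. -/
open Matrix

/-- The sign `±1` attached to a Boolean. -/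
def signB (b : Bool) : ℝ := if b then 1 else -1

/-- The graph `Γ(H)` associated to a symmetric Hadamard matrix `H` with constant
diagonal: vertices are pairs `(i, a)` with `i` an index and `a` a sign, and
`(i, a)` is adjacent to `(j, b)` iff `i ≠ j` and `a·b = H i j`. -/
def coverGraphOfHadamard {n : ℕ} (H : Matrix (Fin n) (Fin n) ℝ) :
    SimpleGraph (Fin n × Bool) :=
  SimpleGraph.fromRel (fun x y => x.1 ≠ y.1 ∧ signB x.2 * signB y.2 = H x.1 y.1)

namespace HC
open SimpleGraph Finset
open scoped Classical

lemma signB_mul_self (a : Bool) : signB a * signB a = 1 := by cases a <;> norm_num [signB]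

lemma signB_ne_zero (a : Bool) : signB a ≠ 0 := by cases a <;> norm_num [signB]

lemma signB_inj {a b : Bool} (h : signB a = signB b) : a = b := by
  cases a <;> cases b <;> simp_all [signB] <;> norm_num at h

/-- the unique `c` with `signB a * signB c = ε` (for `ε = ±1`). -/
noncomputable def theSign (a : Bool) (ε : ℝ) : Bool := if ε = 1 then a else !a

lemma signB_not (a : Bool) : signB (!a) = -signB a := by cases a <;> simp [signB]

lemma theSign_spec (a : Bool) {ε : ℝ} (hε : ε = 1 ∨ ε = -1) :
    signB a * signB (theSign a ε) = ε := by
  rcases hε with h | h <;> subst h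
  · simp [theSign, signB_mul_self]
  · have : (-1 : ℝ) ≠ 1 := by norm_num
    simp only [theSign, if_neg this, signB_not, mul_neg, signB_mul_self]

lemma theSign_unique {a c : Bool} {ε : ℝ} (hε : ε = 1 ∨ ε = -1)
    (h : signB a * signB c = ε) : c = theSign a ε := by
  have h2 := theSign_spec a hε
  have := h.trans h2.symm
  exact signB_inj (mul_left_cancel₀ (signB_ne_zero a) this).symm |>.symm ▸ rfl

variable {n : ℕ} {H : Matrix (Fin n) (Fin n) ℝ}

lemma adj_iff (hsymm : H.IsSymm) (x y : Fin n × Bool) :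
    (coverGraphOfHadamard H).Adj x y ↔ x.1 ≠ y.1 ∧ signB x.2 * signB y.2 = H x.1 y.1 := by
  unfold coverGraphOfHadamard
  rw [SimpleGraph.fromRel_adj]
  constructor
  · rintro ⟨hne, h | h⟩
    · exact h
    · exact ⟨h.1.symm, by rw [mul_comm, h.2]; exact (hsymm.apply _ _)⟩
  · intro h
    exact ⟨fun e => h.1 (congrArg Prod.fst e), Or.inl h⟩


lemma entry_sq (hent : ∀ i j, H i j = 1 ∨ H i j = -1) (i j : Fin n) :
    H i j * H i j = 1 := by
  rcases hent i j with h|h <;> rw [h] <;> norm_num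

lemma prod_pm (hent : ∀ i j, H i j = 1 ∨ H i j = -1) (i j k : Fin n) :
    H i k * H j k = 1 ∨ H i k * H j k = -1 := by
  rcases hent i k with h|h <;> rcases hent j k with h'|h' <;> rw [h, h'] <;> norm_num

lemma row_orth (hHad : H * Hᵀ = (n:ℝ) • 1) {i j : Fin n} (hij : i ≠ j) :
    ∑ k, H i k * H j k = 0 := by
  have := congrFun (congrFun hHad i) j
  simpa [Matrix.mul_apply, Matrix.one_apply, hij] using this

lemma card_filter_one (hent : ∀ i j, H i j = 1 ∨ H i j = -1)
    (hHad : H * Hᵀ = (n:ℝ) • 1) {i j : Fin n} (hij : i ≠ j) :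
    (univ.filter (fun k => H i k * H j k = 1)).card = n / 2 := by
  set S := univ.filter (fun k => H i k * H j k = 1) with hS
  set T := univ.filter (fun k => ¬ H i k * H j k = 1) with hT
  have hcards : S.card + T.card = n := by
    rw [hS, hT]
    simpa using Finset.card_filter_add_card_filter_not
      (s := (univ : Finset (Fin n))) (p := fun k => H i k * H j k = 1)
  have e1 : ∑ k ∈ S, H i k * H j k = (S.card : ℝ) := by
    rw [Finset.sum_congr rfl (fun k hk => (Finset.mem_filter.mp hk).2)]
    simp [hS]
  have e2 : ∑ k ∈ T, H i k * H j k = -(T.card : ℝ) := by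
    have hall : ∀ k ∈ T, H i k * H j k = -1 := by
      intro k hk
      rcases prod_pm hent i j k with h|h
      · exact absurd h (Finset.mem_filter.mp hk).2
      · exact h
    rw [Finset.sum_congr rfl hall]
    simp
  have hsplit := Finset.sum_filter_add_sum_filter_not univ
    (fun k => H i k * H j k = 1) (fun k => H i k * H j k)
  rw [← hS, ← hT, e1, e2, row_orth hHad hij] at hsplit
  have : (S.card : ℝ) = (T.card : ℝ) := by linarith
  have hst : S.card = T.card := Nat.cast_injective this
  omega

lemma card_filter_eps (hent : ∀ i j, H i j = 1 ∨ H i j = -1)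
    (hHad : H * Hᵀ = (n:ℝ) • 1) (hne : Even n) {i j : Fin n} (hij : i ≠ j)
    {ε : ℝ} (hε : ε = 1 ∨ ε = -1) :
    (univ.filter (fun k => H i k * H j k = ε)).card = n / 2 := by
  rcases hε with h|h
  · rw [h]; exact card_filter_one hent hHad hij
  · subst h
    have : (univ.filter (fun k => H i k * H j k = -1))
        = univ.filter (fun k => ¬ H i k * H j k = 1) := by
      apply Finset.filter_congr
      intro k _
      rcases prod_pm hent i j k with h|h <;> rw [h] <;> norm_num
    rw [this, Finset.filter_not, Finset.card_sdiff_of_subset (Finset.filter_subset _ _),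
      Finset.card_univ, Fintype.card_fin, card_filter_one hent hHad hij]
    obtain ⟨m, hm⟩ := hne
    omega

/-- for `k ∈ {i, j}` the product is `H i j`, hence it is never `-H i j`. -/
lemma mem_filter_ne (hsymm : H.IsSymm) (hent : ∀ i j, H i j = 1 ∨ H i j = -1)
    (hdiag : ∀ i, H i i = 1) {i j k : Fin n}
    (h : H i k * H j k = -H i j) : k ≠ i ∧ k ≠ j := by
  have hsym' : H j i = H i j := hsymm.apply i j
  constructor
  · intro hk
    rw [hk, hdiag i, one_mul, hsym'] at h
    rcases hent i j with hv|hv <;> rw [hv] at h <;> norm_num at h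
  · intro hk
    rw [hk, hdiag j, mul_one] at h
    rcases hent i j with hv|hv <;> rw [hv] at h <;> norm_num at h


lemma pm_cases {x y : ℝ} (hx : x = 1 ∨ x = -1) (hy : y = 1 ∨ y = -1) :
    x = y ∨ x = -y := by
  rcases hx with h|h <;> rcases hy with h'|h' <;> rw [h, h'] <;> norm_num

lemma signB_pm (a : Bool) : signB a = 1 ∨ signB a = -1 := by
  cases a <;> simp [signB]

lemma signB_mul_pm (a b : Bool) : signB a * signB b = 1 ∨ signB a * signB b = -1 := by
  rcases signB_pm a with h|h <;> rcases signB_pm b with h'|h' <;> rw [h, h'] <;> norm_num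

/-- if `u,v` lie in distinct fibres and are not adjacent, they have product `-H i j`. -/
lemma not_adj_prod (hsymm : H.IsSymm) (hent : ∀ i j, H i j = 1 ∨ H i j = -1)
    {i j : Fin n} {a b : Bool} (hij : i ≠ j)
    (hnadj : ¬ (coverGraphOfHadamard H).Adj (i,a) (j,b)) :
    signB a * signB b = -H i j := by
  rcases pm_cases (signB_mul_pm a b) (hent i j) with h|h
  · exact absurd ((adj_iff hsymm (i,a) (j,b)).mpr ⟨hij, h⟩) hnadj
  · exact h

/-- common neighbour for non-adjacent vertices in distinct fibres. -/
lemma common_nbr (hsymm : H.IsSymm) (hent : ∀ i j, H i j = 1 ∨ H i j = -1)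
    (hHad : H * Hᵀ = (n:ℝ) • 1) (hdiag : ∀ i, H i i = 1) (hne : Even n) (hn : 4 ≤ n)
    {i j : Fin n} {a b : Bool} (hij : i ≠ j)
    (hab : signB a * signB b = -H i j) :
    ∃ w, (coverGraphOfHadamard H).Adj (i,a) w ∧ (coverGraphOfHadamard H).Adj w (j,b) := by
  have hcard := card_filter_eps hent hHad hne hij (ε := -H i j)
    (by rcases hent i j with h|h <;> rw [h] <;> norm_num)
  have hpos : 0 < (univ.filter (fun k => H i k * H j k = -H i j)).card := by
    rw [hcard]; omega
  obtain ⟨k, hk⟩ := Finset.card_pos.mp hpos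
  have hk' : H i k * H j k = -H i j := (Finset.mem_filter.mp hk).2
  obtain ⟨hki, hkj⟩ := mem_filter_ne hsymm hent hdiag hk'
  refine ⟨(k, theSign a (H i k)), ?_, ?_⟩
  · exact (adj_iff hsymm _ _).mpr ⟨fun h => hki h.symm, theSign_spec a (hent i k)⟩
  · refine (adj_iff hsymm _ _).mpr ⟨hkj, ?_⟩
    have h1 : signB a * signB (theSign a (H i k)) = H i k := theSign_spec a (hent i k)
    have hkj' : H k j = H j k := hsymm.apply j k
    set c := theSign a (H i k) with hc
    have key : signB c * signB b = H i k * -H i j := by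
      calc signB c * signB b
          = (signB a * signB a) * (signB c * signB b) := by rw [signB_mul_self a, one_mul]
        _ = (signB a * signB c) * (signB a * signB b) := by ring
        _ = H i k * -H i j := by rw [h1, hab]
    have key2 : H i k * -H i j = H j k := by
      calc H i k * -H i j = H i k * (H i k * H j k) := by rw [hk']
        _ = (H i k * H i k) * H j k := by ring
        _ = H j k := by rw [entry_sq hent i k, one_mul]
    rw [key, key2]
    exact hkj'.symm

lemma fibre_eq_of_adj_adj (hsymm : H.IsSymm) {i : Fin n} {a b : Bool}
    {w : Fin n × Bool} (h1 : (coverGraphOfHadamard H).Adj (i,a) w)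
    (h2 : (coverGraphOfHadamard H).Adj (i,b) w) : a = b := by
  have h1' := ((adj_iff hsymm _ _).mp h1).2
  have h2' := ((adj_iff hsymm _ _).mp h2).2
  have : signB a = signB b := mul_right_cancel₀ (signB_ne_zero w.2) (h1'.trans h2'.symm)
  exact signB_inj this


variable {H : Matrix (Fin n) (Fin n) ℝ}

lemma walk_le_two (hsymm : H.IsSymm) (hent : ∀ i j, H i j = 1 ∨ H i j = -1)
    (hHad : H * Hᵀ = (n:ℝ) • 1) (hdiag : ∀ i, H i i = 1) (hne : Even n) (hn : 4 ≤ n)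
    {i j : Fin n} {a b : Bool} (hij : i ≠ j) :
    ∃ p : (coverGraphOfHadamard H).Walk (i,a) (j,b), p.length ≤ 2 := by
  by_cases hadj : (coverGraphOfHadamard H).Adj (i,a) (j,b)
  · exact ⟨hadj.toWalk, by simp⟩
  · obtain ⟨w, h1, h2⟩ := common_nbr hsymm hent hHad hdiag hne hn hij
      (not_adj_prod hsymm hent hij hadj)
    exact ⟨SimpleGraph.Walk.cons h1 h2.toWalk, by simp⟩

lemma walk_le_three (hsymm : H.IsSymm) (hent : ∀ i j, H i j = 1 ∨ H i j = -1)
    (hHad : H * Hᵀ = (n:ℝ) • 1) (hdiag : ∀ i, H i i = 1) (hne : Even n) (hn : 4 ≤ n)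
    {i : Fin n} {a b : Bool} :
    ∃ p : (coverGraphOfHadamard H).Walk (i,a) (i,b), p.length ≤ 3 := by
  by_cases hab : a = b
  · subst hab; exact ⟨SimpleGraph.Walk.nil, by simp⟩
  obtain ⟨j, hj⟩ := Fintype.exists_ne_of_one_lt_card (by simp; omega) i
  have hadj : (coverGraphOfHadamard H).Adj (i,a) (j, theSign a (H i j)) :=
    (adj_iff hsymm _ _).mpr ⟨fun h => hj h.symm, theSign_spec a (hent i j)⟩
  obtain ⟨p, hp⟩ := walk_le_two hsymm hent hHad hdiag hne hn hj
    (a := theSign a (H i j)) (b := b)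
  exact ⟨SimpleGraph.Walk.cons hadj p, by simp; omega⟩

lemma reach_all (hsymm : H.IsSymm) (hent : ∀ i j, H i j = 1 ∨ H i j = -1)
    (hHad : H * Hᵀ = (n:ℝ) • 1) (hdiag : ∀ i, H i i = 1) (hne : Even n) (hn : 4 ≤ n)
    (u v : Fin n × Bool) : (coverGraphOfHadamard H).Reachable u v := by
  obtain ⟨i, a⟩ := u; obtain ⟨j, b⟩ := v
  by_cases hij : i = j
  · subst hij
    obtain ⟨p, _⟩ := walk_le_three hsymm hent hHad hdiag hne hn (i := i) (a := a) (b := b)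
    exact ⟨p⟩
  · obtain ⟨p, _⟩ := walk_le_two hsymm hent hHad hdiag hne hn hij (a := a) (b := b)
    exact ⟨p⟩

lemma conn (hsymm : H.IsSymm) (hent : ∀ i j, H i j = 1 ∨ H i j = -1)
    (hHad : H * Hᵀ = (n:ℝ) • 1) (hdiag : ∀ i, H i i = 1) (hne : Even n) (hn : 4 ≤ n) :
    (coverGraphOfHadamard H).Connected := by
  have : Nonempty (Fin n × Bool) := ⟨(⟨0, by omega⟩, true)⟩
  exact ⟨reach_all hsymm hent hHad hdiag hne hn⟩

lemma dist_two (hsymm : H.IsSymm) (hent : ∀ i j, H i j = 1 ∨ H i j = -1)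
    (hHad : H * Hᵀ = (n:ℝ) • 1) (hdiag : ∀ i, H i i = 1) (hne : Even n) (hn : 4 ≤ n)
    {i j : Fin n} {a b : Bool} (hij : i ≠ j)
    (hnadj : ¬ (coverGraphOfHadamard H).Adj (i,a) (j,b)) :
    (coverGraphOfHadamard H).dist (i,a) (j,b) = 2 := by
  obtain ⟨p, hp⟩ := walk_le_two hsymm hent hHad hdiag hne hn hij (a := a) (b := b)
  have hle := (SimpleGraph.dist_le p).trans hp
  have h0 : (coverGraphOfHadamard H).dist (i,a) (j,b) ≠ 0 := fun h =>
    hij (congrArg Prod.fst ((reach_all hsymm hent hHad hdiag hne hn _ _).dist_eq_zero_iff.mp h))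
  have h1 : (coverGraphOfHadamard H).dist (i,a) (j,b) ≠ 1 := fun h =>
    hnadj (SimpleGraph.dist_eq_one_iff_adj.mp h)
  omega

lemma dist_three (hsymm : H.IsSymm) (hent : ∀ i j, H i j = 1 ∨ H i j = -1)
    (hHad : H * Hᵀ = (n:ℝ) • 1) (hdiag : ∀ i, H i i = 1) (hne : Even n) (hn : 4 ≤ n)
    {i : Fin n} {a b : Bool} (hab : a ≠ b) :
    (coverGraphOfHadamard H).dist (i,a) (i,b) = 3 := by
  obtain ⟨p, hp⟩ := walk_le_three hsymm hent hHad hdiag hne hn (i := i) (a := a) (b := b)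
  have hle := (SimpleGraph.dist_le p).trans hp
  have h0 : (coverGraphOfHadamard H).dist (i,a) (i,b) ≠ 0 := fun h =>
    hab (congrArg Prod.snd ((reach_all hsymm hent hHad hdiag hne hn _ _).dist_eq_zero_iff.mp h))
  have h1 : (coverGraphOfHadamard H).dist (i,a) (i,b) ≠ 1 := fun h =>
    ((adj_iff hsymm _ _).mp (SimpleGraph.dist_eq_one_iff_adj.mp h)).1 rfl
  have h2 : (coverGraphOfHadamard H).dist (i,a) (i,b) ≠ 2 := by
    intro h2
    obtain ⟨p, hp⟩ :=
      (reach_all hsymm hent hHad hdiag hne hn ((i,a) : Fin n × Bool) (i,b)).exists_walk_length_eq_dist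
    rw [h2] at hp
    cases p with
    | nil => simp at hp
    | cons h q =>
      cases q with
      | nil => simp at hp
      | cons h' r =>
        cases r with
        | nil => exact hab (fibre_eq_of_adj_adj hsymm h h'.symm)
        | cons h'' s => simp [SimpleGraph.Walk.length_cons] at hp
  omega

lemma dist_zero_iff (hsymm : H.IsSymm) (hent : ∀ i j, H i j = 1 ∨ H i j = -1)
    (hHad : H * Hᵀ = (n:ℝ) • 1) (hdiag : ∀ i, H i i = 1) (hne : Even n) (hn : 4 ≤ n)
    (u v : Fin n × Bool) :
    (coverGraphOfHadamard H).dist u v = 0 ↔ u = v :=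
  (reach_all hsymm hent hHad hdiag hne hn u v).dist_eq_zero_iff

lemma dist_two_iff (hsymm : H.IsSymm) (hent : ∀ i j, H i j = 1 ∨ H i j = -1)
    (hHad : H * Hᵀ = (n:ℝ) • 1) (hdiag : ∀ i, H i i = 1) (hne : Even n) (hn : 4 ≤ n)
    (u v : Fin n × Bool) :
    (coverGraphOfHadamard H).dist u v = 2 ↔
      u.1 ≠ v.1 ∧ ¬ (coverGraphOfHadamard H).Adj u v := by
  obtain ⟨i, a⟩ := u; obtain ⟨j, b⟩ := v
  constructor
  · intro h
    by_cases hij : i = j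
    · subst hij
      by_cases hab : a = b
      · subst hab
        rw [(dist_zero_iff hsymm hent hHad hdiag hne hn _ _).mpr rfl] at h; omega
      · rw [dist_three hsymm hent hHad hdiag hne hn hab] at h; omega
    · by_cases hadj : (coverGraphOfHadamard H).Adj (i,a) (j,b)
      · rw [SimpleGraph.dist_eq_one_iff_adj.mpr hadj] at h; omega
      · exact ⟨hij, hadj⟩
  · rintro ⟨hij, hadj⟩
    exact dist_two hsymm hent hHad hdiag hne hn hij hadj

lemma dist_three_iff (hsymm : H.IsSymm) (hent : ∀ i j, H i j = 1 ∨ H i j = -1)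
    (hHad : H * Hᵀ = (n:ℝ) • 1) (hdiag : ∀ i, H i i = 1) (hne : Even n) (hn : 4 ≤ n)
    (u v : Fin n × Bool) :
    (coverGraphOfHadamard H).dist u v = 3 ↔ u.1 = v.1 ∧ u.2 ≠ v.2 := by
  obtain ⟨i, a⟩ := u; obtain ⟨j, b⟩ := v
  constructor
  · intro h
    by_cases hij : i = j
    · subst hij
      by_cases hab : a = b
      · subst hab
        rw [(dist_zero_iff hsymm hent hHad hdiag hne hn _ _).mpr rfl] at h; omega
      · exact ⟨rfl, hab⟩
    · by_cases hadj : (coverGraphOfHadamard H).Adj (i,a) (j,b)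
      · rw [SimpleGraph.dist_eq_one_iff_adj.mpr hadj] at h; omega
      · rw [dist_two hsymm hent hHad hdiag hne hn hij hadj] at h; omega
  · rintro ⟨hij, hab⟩
    simp only at hij hab
    subst hij
    exact dist_three hsymm hent hHad hdiag hne hn hab

lemma dist_le_three (hsymm : H.IsSymm) (hent : ∀ i j, H i j = 1 ∨ H i j = -1)
    (hHad : H * Hᵀ = (n:ℝ) • 1) (hdiag : ∀ i, H i i = 1) (hne : Even n) (hn : 4 ≤ n)
    (u v : Fin n × Bool) : (coverGraphOfHadamard H).dist u v ≤ 3 := by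
  obtain ⟨i, a⟩ := u; obtain ⟨j, b⟩ := v
  by_cases hij : i = j
  · subst hij
    obtain ⟨p, hp⟩ := walk_le_three hsymm hent hHad hdiag hne hn (i := i) (a := a) (b := b)
    exact (SimpleGraph.dist_le p).trans hp
  · obtain ⟨p, hp⟩ := walk_le_two hsymm hent hHad hdiag hne hn hij (a := a) (b := b)
    exact (SimpleGraph.dist_le p).trans (by omega)


/-- the neighbourhood of `(j,b)` is in bijection with `{k // k ≠ j}`. -/
noncomputable def nbhdEquiv (hsymm : H.IsSymm) (hent : ∀ i j, H i j = 1 ∨ H i j = -1)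
    (j : Fin n) (b : Bool) :
    {w : Fin n × Bool // (coverGraphOfHadamard H).Adj (j,b) w} ≃ {k : Fin n // k ≠ j} where
  toFun w := ⟨w.1.1, fun h => ((adj_iff hsymm _ _).mp w.2).1 h.symm⟩
  invFun k := ⟨(k.1, theSign b (H j k.1)),
    (adj_iff hsymm _ _).mpr ⟨Ne.symm k.2, theSign_spec b (hent j k.1)⟩⟩
  left_inv := by
    rintro ⟨⟨k, c⟩, hw⟩
    have hc : c = theSign b (H j k) := theSign_unique (hent j k) ((adj_iff hsymm _ _).mp hw).2
    exact Subtype.ext (Prod.ext rfl hc.symm)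
  right_inv := by rintro ⟨k, hk⟩; rfl

lemma card_adj (hsymm : H.IsSymm) (hent : ∀ i j, H i j = 1 ∨ H i j = -1)
    (hn : 4 ≤ n) (j : Fin n) (b : Bool) :
    Nat.card {w : Fin n × Bool // (coverGraphOfHadamard H).Adj (j,b) w} = n - 1 := by
  rw [Nat.card_congr (nbhdEquiv hsymm hent j b), Nat.card_eq_fintype_card]
  simpa using Set.card_ne_eq j

lemma card_filter_subtype (hent : ∀ i j, H i j = 1 ∨ H i j = -1)
    (hHad : H * Hᵀ = (n:ℝ) • 1) (hne : Even n) {i j : Fin n} (hij : i ≠ j) :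
    Nat.card {k : Fin n // H i k * H j k = -H i j} = n / 2 := by
  rw [Nat.card_eq_fintype_card, Fintype.card_subtype]
  exact card_filter_eps hent hHad hne hij
    (by rcases hent i j with h|h <;> rw [h] <;> norm_num)

/-- Common neighbours of non-adjacent `(i,a)`, `(j,b)` in distinct fibres. -/
lemma card_common (hsymm : H.IsSymm) (hent : ∀ i j, H i j = 1 ∨ H i j = -1)
    (hHad : H * Hᵀ = (n:ℝ) • 1) (hdiag : ∀ i, H i i = 1) (hne : Even n)
    {i j : Fin n} {a b : Bool} (hij : i ≠ j) (hab : signB a * signB b = -H i j) :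
    Nat.card {w : Fin n × Bool //
      (coverGraphOfHadamard H).Adj (j,b) w ∧ (coverGraphOfHadamard H).Adj (i,a) w}
      = n / 2 := by
  have e : {w : Fin n × Bool //
      (coverGraphOfHadamard H).Adj (j,b) w ∧ (coverGraphOfHadamard H).Adj (i,a) w}
      ≃ {k : Fin n // H i k * H j k = -H i j} :=
  { toFun := fun w => ⟨w.1.1, by
      obtain ⟨⟨k, c⟩, h1, h2⟩ := w
      have h1' : signB b * signB c = H j k := ((adj_iff hsymm _ _).mp h1).2
      have h2' : signB a * signB c = H i k := ((adj_iff hsymm _ _).mp h2).2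
      calc H i k * H j k = (signB a * signB c) * (signB b * signB c) := by rw [h1', h2']
        _ = (signB a * signB b) * (signB c * signB c) := by ring
        _ = -H i j := by rw [signB_mul_self, mul_one, hab]⟩
    invFun := fun k => ⟨(k.1, theSign b (H j k.1)), by
      obtain ⟨k, hk⟩ := k
      obtain ⟨hki, hkj⟩ := mem_filter_ne hsymm hent hdiag hk
      refine ⟨(adj_iff hsymm _ _).mpr ⟨Ne.symm hkj, theSign_spec b (hent j k)⟩,
        (adj_iff hsymm _ _).mpr ⟨Ne.symm hki, ?_⟩⟩
      have hs : signB b * signB (theSign b (H j k)) = H j k := theSign_spec b (hent j k)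
      calc signB a * signB (theSign b (H j k))
          = (signB b * signB b) * (signB a * signB (theSign b (H j k))) := by
            rw [signB_mul_self, one_mul]
        _ = (signB a * signB b) * (signB b * signB (theSign b (H j k))) := by ring
        _ = -H i j * H j k := by rw [hab, hs]
        _ = (H i k * H j k) * H j k := by rw [hk]
        _ = H i k * (H j k * H j k) := by ring
        _ = H i k := by rw [entry_sq hent j k, mul_one]⟩
    left_inv := by
      rintro ⟨⟨k, c⟩, h1, h2⟩
      have hc : c = theSign b (H j k) :=
        theSign_unique (hent j k) ((adj_iff hsymm _ _).mp h1).2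
      exact Subtype.ext (Prod.ext rfl hc.symm)
    right_inv := by rintro ⟨k, hk⟩; rfl }
  rw [Nat.card_congr e]
  exact card_filter_subtype hent hHad hne hij

/-- The `b₁` count: neighbours of `(j,b)` at distance 2 from an adjacent vertex `(i,a)`. -/
lemma card_b1 (hsymm : H.IsSymm) (hent : ∀ i j, H i j = 1 ∨ H i j = -1)
    (hHad : H * Hᵀ = (n:ℝ) • 1) (hdiag : ∀ i, H i i = 1) (hne : Even n) (hn : 4 ≤ n)
    {i j : Fin n} {a b : Bool} (hij : i ≠ j) (hab : signB a * signB b = H i j) :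
    Nat.card {w : Fin n × Bool //
      (coverGraphOfHadamard H).Adj (j,b) w ∧ (coverGraphOfHadamard H).dist (i,a) w = 2}
      = n / 2 := by
  have e : {w : Fin n × Bool //
      (coverGraphOfHadamard H).Adj (j,b) w ∧ (coverGraphOfHadamard H).dist (i,a) w = 2}
      ≃ {k : Fin n // H i k * H j k = -H i j} :=
  { toFun := fun w => ⟨w.1.1, by
      obtain ⟨⟨k, c⟩, h1, h2⟩ := w
      rw [dist_two_iff hsymm hent hHad hdiag hne hn] at h2
      obtain ⟨hik, hnadj⟩ := h2
      have h1' : signB b * signB c = H j k := ((adj_iff hsymm _ _).mp h1).2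
      have h2' : signB a * signB c = -H i k := not_adj_prod hsymm hent hik hnadj
      calc H i k * H j k = (-(signB a * signB c)) * (signB b * signB c) := by
            rw [h1', h2']; ring
        _ = -((signB a * signB b) * (signB c * signB c)) := by ring
        _ = -H i j := by rw [signB_mul_self, mul_one, hab]⟩
    invFun := fun k => ⟨(k.1, theSign b (H j k.1)), by
      obtain ⟨k, hk⟩ := k
      obtain ⟨hki, hkj⟩ := mem_filter_ne hsymm hent hdiag hk
      have hs : signB b * signB (theSign b (H j k)) = H j k := theSign_spec b (hent j k)
      have hval : signB a * signB (theSign b (H j k)) = -H i k := by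
        calc signB a * signB (theSign b (H j k))
            = (signB b * signB b) * (signB a * signB (theSign b (H j k))) := by
              rw [signB_mul_self, one_mul]
          _ = (signB a * signB b) * (signB b * signB (theSign b (H j k))) := by ring
          _ = H i j * H j k := by rw [hab, hs]
          _ = -((H i k * H j k) * H j k) := by rw [hk]; ring
          _ = -(H i k * (H j k * H j k)) := by ring
          _ = -H i k := by rw [entry_sq hent j k, mul_one]
      refine ⟨(adj_iff hsymm _ _).mpr ⟨Ne.symm hkj, hs⟩, ?_⟩
      rw [dist_two_iff hsymm hent hHad hdiag hne hn]
      refine ⟨Ne.symm hki, fun hadj => ?_⟩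
      have := ((adj_iff hsymm _ _).mp hadj).2
      rw [hval] at this
      have h0 : H i k ≠ 0 := by rcases hent i k with h|h <;> rw [h] <;> norm_num
      exact h0 (by linarith)⟩
    left_inv := by
      rintro ⟨⟨k, c⟩, h1, h2⟩
      have hc : c = theSign b (H j k) :=
        theSign_unique (hent j k) ((adj_iff hsymm _ _).mp h1).2
      exact Subtype.ext (Prod.ext rfl hc.symm)
    right_inv := by rintro ⟨k, hk⟩; rfl }
  rw [Nat.card_congr e]
  exact card_filter_subtype hent hHad hne hij


lemma bool_eq_not {a c : Bool} (h : a ≠ c) : c = !a := by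
  cases a <;> cases c <;> simp_all

lemma card_c1 (hsymm : H.IsSymm) (hent : ∀ i j, H i j = 1 ∨ H i j = -1)
    (hHad : H * Hᵀ = (n:ℝ) • 1) (hdiag : ∀ i, H i i = 1) (hne : Even n) (hn : 4 ≤ n)
    {u v : Fin n × Bool} (hadj : (coverGraphOfHadamard H).Adj u v) :
    Nat.card {w : Fin n × Bool //
      (coverGraphOfHadamard H).Adj v w ∧ (coverGraphOfHadamard H).dist u w = 0} = 1 := by
  have e : {w : Fin n × Bool //
      (coverGraphOfHadamard H).Adj v w ∧ (coverGraphOfHadamard H).dist u w = 0}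
      ≃ {w : Fin n × Bool // w = u} := Equiv.subtypeEquivRight (fun w => by
    constructor
    · rintro ⟨_, h⟩
      exact ((dist_zero_iff hsymm hent hHad hdiag hne hn u w).mp h).symm
    · rintro rfl
      exact ⟨hadj.symm, (dist_zero_iff hsymm hent hHad hdiag hne hn _ _).mpr rfl⟩)
  rw [Nat.card_congr e, Nat.card_eq_fintype_card, Fintype.card_subtype_eq]

lemma card_b0 (hsymm : H.IsSymm) (hent : ∀ i j, H i j = 1 ∨ H i j = -1)
    (hn : 4 ≤ n) (j : Fin n) (b : Bool) :
    Nat.card {w : Fin n × Bool //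
      (coverGraphOfHadamard H).Adj (j,b) w ∧ (coverGraphOfHadamard H).dist (j,b) w = 1}
      = n - 1 := by
  have e : {w : Fin n × Bool //
      (coverGraphOfHadamard H).Adj (j,b) w ∧ (coverGraphOfHadamard H).dist (j,b) w = 1}
      ≃ {w : Fin n × Bool // (coverGraphOfHadamard H).Adj (j,b) w} :=
    Equiv.subtypeEquivRight
      (fun w => and_iff_left_of_imp (fun h => SimpleGraph.dist_eq_one_iff_adj.mpr h))
  rw [Nat.card_congr e]
  exact card_adj hsymm hent hn j b

lemma card_c3 (hsymm : H.IsSymm) (hent : ∀ i j, H i j = 1 ∨ H i j = -1)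
    (hHad : H * Hᵀ = (n:ℝ) • 1) (hdiag : ∀ i, H i i = 1) (hne : Even n) (hn : 4 ≤ n)
    {i : Fin n} {a b : Bool} (hab : a ≠ b) :
    Nat.card {w : Fin n × Bool //
      (coverGraphOfHadamard H).Adj (i,b) w ∧ (coverGraphOfHadamard H).dist (i,a) w = 2}
      = n - 1 := by
  have e : {w : Fin n × Bool //
      (coverGraphOfHadamard H).Adj (i,b) w ∧ (coverGraphOfHadamard H).dist (i,a) w = 2}
      ≃ {w : Fin n × Bool // (coverGraphOfHadamard H).Adj (i,b) w} :=
    Equiv.subtypeEquivRight (fun w => and_iff_left_of_imp (fun h => by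
      rw [dist_two_iff hsymm hent hHad hdiag hne hn]
      exact ⟨((adj_iff hsymm _ _).mp h).1,
        fun h' => hab (fibre_eq_of_adj_adj hsymm h' h)⟩))
  rw [Nat.card_congr e]
  exact card_adj hsymm hent hn i b

lemma card_b2 (hsymm : H.IsSymm) (hent : ∀ i j, H i j = 1 ∨ H i j = -1)
    (hHad : H * Hᵀ = (n:ℝ) • 1) (hdiag : ∀ i, H i i = 1) (hne : Even n) (hn : 4 ≤ n)
    {i j : Fin n} {a b : Bool} (hij : i ≠ j)
    (hnadj : ¬ (coverGraphOfHadamard H).Adj (i,a) (j,b)) :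
    Nat.card {w : Fin n × Bool //
      (coverGraphOfHadamard H).Adj (j,b) w ∧ (coverGraphOfHadamard H).dist (i,a) w = 3}
      = 1 := by
  have hab : signB a * signB b = -H i j := not_adj_prod hsymm hent hij hnadj
  have e : {w : Fin n × Bool //
      (coverGraphOfHadamard H).Adj (j,b) w ∧ (coverGraphOfHadamard H).dist (i,a) w = 3}
      ≃ {w : Fin n × Bool // w = (i, !a)} := Equiv.subtypeEquivRight (fun w => by
    constructor
    · rintro ⟨_, h3⟩
      rw [dist_three_iff hsymm hent hHad hdiag hne hn] at h3
      obtain ⟨k, c⟩ := w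
      obtain ⟨h1, h2⟩ := h3
      simp only at h1 h2
      rw [Prod.mk.injEq]
      exact ⟨h1.symm, (bool_eq_not h2).symm ▸ rfl⟩
    · rintro rfl
      refine ⟨(adj_iff hsymm _ _).mpr ⟨Ne.symm hij, ?_⟩, ?_⟩
      · calc signB b * signB (!a) = signB b * (-(signB a)) := by rw [signB_not]
          _ = -(signB a * signB b) := by ring
          _ = H i j := by rw [hab]; ring
          _ = H j i := hsymm.apply j i
      · rw [dist_three_iff hsymm hent hHad hdiag hne hn]
        exact ⟨rfl, by simp⟩)
  rw [Nat.card_congr e, Nat.card_eq_fintype_card, Fintype.card_subtype_eq]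


lemma card_c2 (hsymm : H.IsSymm) (hent : ∀ i j, H i j = 1 ∨ H i j = -1)
    (hHad : H * Hᵀ = (n:ℝ) • 1) (hdiag : ∀ i, H i i = 1) (hne : Even n)
    {i j : Fin n} {a b : Bool} (hij : i ≠ j) (hab : signB a * signB b = -H i j) :
    Nat.card {w : Fin n × Bool //
      (coverGraphOfHadamard H).Adj (j,b) w ∧ (coverGraphOfHadamard H).dist (i,a) w = 1}
      = n / 2 := by
  have e : {w : Fin n × Bool //
      (coverGraphOfHadamard H).Adj (j,b) w ∧ (coverGraphOfHadamard H).dist (i,a) w = 1}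
      ≃ {w : Fin n × Bool //
      (coverGraphOfHadamard H).Adj (j,b) w ∧ (coverGraphOfHadamard H).Adj (i,a) w} :=
    Equiv.subtypeEquivRight
      (fun w => and_congr_right (fun _ => SimpleGraph.dist_eq_one_iff_adj))
  rw [Nat.card_congr e]
  exact card_common hsymm hent hHad hdiag hne hij hab

end HC

/-- For a symmetric `n × n` Hadamard matrix `H` with all diagonal
entries `1` (`n ≥ 4` even), the graph `Γ(H)` is a distance-regular 2-fold
antipodal cover of `K_n` with intersection array `{n-1, n/2, 1; 1, n/2, n-1}`. -/
theorem stmt_7 (n : ℕ) (hn : 4 ≤ n) (hne : Even n)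
    (H : Matrix (Fin n) (Fin n) ℝ)
    (hsymm : H.IsSymm)
    (hent : ∀ i j, H i j = 1 ∨ H i j = -1)
    (hHad : H * Hᵀ = (n : ℝ) • 1)
    (hdiag : ∀ i, H i i = 1) :
    IsCoverKn (coverGraphOfHadamard H) n (n / 2) := by
  classical
  refine ⟨fun m => if m = 0 then n - 1 else if m = 1 then n / 2 else 1,
    fun m => if m = 1 then 1 else if m = 2 then n / 2 else n - 1,
    ⟨?_, ?_, ?_, ?_, ?_⟩,
    by norm_num, by norm_num, by norm_num, by norm_num, by norm_num, by norm_num⟩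
  · exact HC.conn hsymm hent hHad hdiag hne hn
  · exact HC.dist_le_three hsymm hent hHad hdiag hne hn
  · exact ⟨(⟨0, by omega⟩, true), (⟨0, by omega⟩, false),
      HC.dist_three hsymm hent hHad hdiag hne hn (by simp)⟩
  · intro m h1 h3 u v hdist
    obtain _|_|_|_|m := m
    · omega
    pick_goal 4
    · omega
    · exact HC.card_c1 hsymm hent hHad hdiag hne hn
        (SimpleGraph.dist_eq_one_iff_adj.mp hdist)
    · obtain ⟨i, a⟩ := u; obtain ⟨j, b⟩ := v
      rw [HC.dist_two_iff hsymm hent hHad hdiag hne hn] at hdist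
      obtain ⟨hij, hnadj⟩ := hdist
      exact HC.card_c2 hsymm hent hHad hdiag hne hij
        (HC.not_adj_prod hsymm hent hij hnadj)
    · obtain ⟨i, a⟩ := u; obtain ⟨j, b⟩ := v
      rw [HC.dist_three_iff hsymm hent hHad hdiag hne hn] at hdist
      obtain ⟨h1', h2'⟩ := hdist
      simp only at h1' h2'
      subst h1'
      exact HC.card_c3 hsymm hent hHad hdiag hne hn h2'
  · intro m hm u v hdist
    obtain _|_|_|m := m
    pick_goal 4
    · omega
    · have huv : u = v := (HC.dist_zero_iff hsymm hent hHad hdiag hne hn u v).mp hdist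
      subst huv
      obtain ⟨j, b⟩ := u
      exact HC.card_b0 hsymm hent hn j b
    · have hadj := SimpleGraph.dist_eq_one_iff_adj.mp hdist
      obtain ⟨i, a⟩ := u; obtain ⟨j, b⟩ := v
      have h' := (HC.adj_iff hsymm _ _).mp hadj
      exact HC.card_b1 hsymm hent hHad hdiag hne hn h'.1 h'.2
    · obtain ⟨i, a⟩ := u; obtain ⟨j, b⟩ := v
      rw [HC.dist_two_iff hsymm hent hHad hdiag hne hn] at hdist
      obtain ⟨hij, hnadj⟩ := hdist
      exact HC.card_b2 hsymm hent hHad hdiag hne hn hij hnadj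
end

section
/- Let H be an n×n Hadamard matrix with n ≥ 2, and let X(H) be the Hadamard graph of H. Then X(H) admits perfect state transfer if and only if n is a perfect square; in that case, perfect state transfer occurs at time π/√n, from each vertex (row, r, +) to (row, r, −) and from each vertex (col, c, +) to (col, c, −). -/
open Matrix

/-- The Hadamard graph `X(H)` of an `n × n` Hadamard matrix `H`. Vertices are
triples `(k, i, s)` where `k = true` marks a row vertex and `k = false` a column
vertex, `i` is the row/column index and `s` the sign. A row vertex `(true, r, s)`
is adjacent to a column vertex `(false, c, s')` iff `H r c = sign s · sign s'`. -/
def hadamardGraph {n : ℕ} (H : Matrix (Fin n) (Fin n) ℝ) :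
    SimpleGraph (Bool × Fin n × Bool) :=
  SimpleGraph.fromRel (fun x y =>
    x.1 = true ∧ y.1 = false ∧ H x.2.1 y.2.1 = signB x.2.2 * signB y.2.2)



open Complex


section HadamardPSTAux


set_option maxHeartbeats 1000000 in

theorem exp_smul_of_idem {A : Type*} [NormedRing A] [NormedAlgebra ℂ A] [CompleteSpace A]
    (c : ℂ) (P : A) (hP : P * P = P) :
    NormedSpace.exp (c • P) = 1 + (Complex.exp c - 1) • P := by
  have hpow : ∀ k : ℕ, (c • P) ^ (k + 1) = c ^ (k + 1) • P := by
    intro k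
    induction k with
    | zero => simp
    | succ k ih => rw [pow_succ, ih, smul_mul_smul_comm, hP, ← pow_succ]
  have hs : Summable fun k : ℕ => ((Nat.factorial k : ℂ))⁻¹ • (c • P) ^ k :=
    NormedSpace.expSeries_summable' (𝕂 := ℂ) (c • P)
  have h2 : Summable fun k : ℕ => ((Nat.factorial k : ℂ))⁻¹ * c ^ k := by
    simpa [smul_eq_mul] using NormedSpace.expSeries_summable' (𝕂 := ℂ) (c : ℂ)
  have hscalar : Summable fun k : ℕ => ((Nat.factorial (k+1) : ℂ))⁻¹ * c ^ (k + 1) :=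
    (summable_nat_add_iff 1).2 h2
  simp only [NormedSpace.exp_eq_tsum ℂ]
  rw [Summable.tsum_eq_zero_add hs]
  have h1 : ∀ k : ℕ, ((Nat.factorial (k+1) : ℂ))⁻¹ • (c • P) ^ (k + 1)
      = (((Nat.factorial (k+1) : ℂ))⁻¹ * c ^ (k + 1)) • P := by
    intro k; rw [hpow, smul_smul]
  rw [tsum_congr h1, Summable.tsum_smul_const hscalar]
  have hexp : ∑' k : ℕ, (Nat.factorial (k+1) : ℂ)⁻¹ * c ^ (k + 1) = Complex.exp c - 1 := by
    have h3 : Complex.exp c = ∑' k : ℕ, (Nat.factorial k : ℂ)⁻¹ * c ^ k := by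
      rw [congrFun Complex.exp_eq_exp_ℂ c]
      simp only [NormedSpace.exp_eq_tsum ℂ, smul_eq_mul]
    rw [h3, Summable.tsum_eq_zero_add h2]
    simp
  rw [hexp]
  simp

theorem matrix_exp_smul_of_idem {m : Type*} [Fintype m] [DecidableEq m]
    (c : ℂ) (P : Matrix m m ℂ) (hP : P * P = P) :
    NormedSpace.exp (c • P) = 1 + (Complex.exp c - 1) • P := by
  letI : SeminormedRing (Matrix m m ℂ) := Matrix.linftyOpSemiNormedRing
  letI : NormedRing (Matrix m m ℂ) := Matrix.linftyOpNormedRing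
  letI : NormedAlgebra ℂ (Matrix m m ℂ) := Matrix.linftyOpNormedAlgebra
  exact exp_smul_of_idem c P hP

noncomputable section
def eps (b : Bool) : ℂ := if b then 1 else -1

@[simp] lemma eps_mul_self (b : Bool) : eps b * eps b = 1 := by cases b <;> simp [eps]

def Qm (n : ℕ) : Matrix (Bool × Fin n × Bool) (Bool × Fin n × Bool) ℂ :=
  fun x y => if x.1 = y.1 ∧ x.2.1 = y.2.1 then eps x.2.2 * eps y.2.2 / 2 else 0

def Rm (n : ℕ) : Matrix (Bool × Fin n × Bool) (Bool × Fin n × Bool) ℂ :=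
  fun x y => if x.1 = y.1 then 1 / (2 * n) else 0

def Sm (H : Matrix (Fin n) (Fin n) ℝ) : Matrix (Bool × Fin n × Bool) (Bool × Fin n × Bool) ℂ :=
  fun x y => if x.1 = y.1 then 0 else
    eps x.2.2 * eps y.2.2 * (if x.1 then (H x.2.1 y.2.1 : ℂ) else (H y.2.1 x.2.1 : ℂ)) / 2

def Tm (n : ℕ) : Matrix (Bool × Fin n × Bool) (Bool × Fin n × Bool) ℂ :=
  fun x y => if x.1 = y.1 then 0 else 1 / 2

@[simp] lemma Qm_apply (x y : Bool × Fin n × Bool) :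
    Qm n x y = if x.1 = y.1 ∧ x.2.1 = y.2.1 then eps x.2.2 * eps y.2.2 / 2 else 0 := rfl
@[simp] lemma Rm_apply (x y : Bool × Fin n × Bool) :
    Rm n x y = if x.1 = y.1 then (1:ℂ) / (2 * (n:ℂ)) else 0 := rfl
@[simp] lemma Sm_apply (H : Matrix (Fin n) (Fin n) ℝ) (x y : Bool × Fin n × Bool) :
    Sm H x y = if x.1 = y.1 then 0 else
      eps x.2.2 * eps y.2.2 * (if x.1 then (H x.2.1 y.2.1 : ℂ) else (H y.2.1 x.2.1 : ℂ)) / 2 := rfl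
@[simp] lemma Tm_apply (x y : Bool × Fin n × Bool) :
    Tm n x y = if x.1 = y.1 then 0 else 1 / 2 := rfl

lemma sumV (f : Bool × Fin n × Bool → ℂ) :
    ∑ z, f z = (∑ j, (f (true, j, true) + f (true, j, false)))
      + (∑ j, (f (false, j, true) + f (false, j, false))) := by
  rw [Fintype.sum_prod_type, Fintype.sum_bool]
  congr 1 <;> rw [Fintype.sum_prod_type] <;>
    exact Finset.sum_congr rfl fun j _ => by rw [Fintype.sum_bool]

end

noncomputable section
variable {n : ℕ} {H : Matrix (Fin n) (Fin n) ℝ}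

lemma hQQ : Qm n * Qm n = Qm n := by
  ext ⟨xb, xi, xs⟩ ⟨yb, yi, ys⟩
  rw [mul_apply, sumV]
  cases xb <;> cases yb <;>
    simp [Finset.sum_ite_eq, Finset.sum_ite_eq', mul_ite, ite_mul, eps] <;>
    by_cases h : xi = yi <;> cases xs <;> cases ys <;>
      simp [h, Finset.sum_add_distrib, Finset.sum_ite_eq', Finset.sum_ite_eq] <;> norm_num

lemma hQR : Qm n * Rm n = 0 := by
  ext ⟨xb, xi, xs⟩ ⟨yb, yi, ys⟩
  rw [mul_apply, sumV]
  cases xb <;> cases yb <;> cases xs <;>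
    simp [eps, Finset.sum_add_distrib, Finset.sum_ite_eq, Finset.sum_ite_eq'] <;> ring

lemma hRQ : Rm n * Qm n = 0 := by
  ext ⟨xb, xi, xs⟩ ⟨yb, yi, ys⟩
  rw [mul_apply, sumV]
  cases xb <;> cases yb <;> cases ys <;>
    simp [eps, Finset.sum_add_distrib, Finset.sum_ite_eq, Finset.sum_ite_eq'] <;> ring

lemma hQT : Qm n * Tm n = 0 := by
  ext ⟨xb, xi, xs⟩ ⟨yb, yi, ys⟩
  rw [mul_apply, sumV]
  cases xb <;> cases yb <;> cases xs <;>
    simp [eps, Finset.sum_add_distrib, Finset.sum_ite_eq, Finset.sum_ite_eq'] <;> ring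

lemma hTQ : Tm n * Qm n = 0 := by
  ext ⟨xb, xi, xs⟩ ⟨yb, yi, ys⟩
  rw [mul_apply, sumV]
  cases xb <;> cases yb <;> cases ys <;>
    simp [eps, Finset.sum_add_distrib, Finset.sum_ite_eq, Finset.sum_ite_eq'] <;> ring

lemma hSR : Sm H * Rm n = 0 := by
  ext ⟨xb, xi, xs⟩ ⟨yb, yi, ys⟩
  rw [mul_apply, sumV]
  cases xb <;> cases yb <;> cases xs <;> simp [eps] <;>
    exact Finset.sum_eq_zero fun j _ => by ring

lemma hRS : Rm n * Sm H = 0 := by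
  ext ⟨xb, xi, xs⟩ ⟨yb, yi, ys⟩
  rw [mul_apply, sumV]
  cases xb <;> cases yb <;> cases ys <;> simp [eps] <;>
    exact Finset.sum_eq_zero fun j _ => by ring

lemma hST : Sm H * Tm n = 0 := by
  ext ⟨xb, xi, xs⟩ ⟨yb, yi, ys⟩
  rw [mul_apply, sumV]
  cases xb <;> cases yb <;> cases xs <;> simp [eps] <;>
    exact Finset.sum_eq_zero fun j _ => by ring

lemma hTS : Tm n * Sm H = 0 := by
  ext ⟨xb, xi, xs⟩ ⟨yb, yi, ys⟩
  rw [mul_apply, sumV]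
  cases xb <;> cases yb <;> cases ys <;> simp [eps] <;>
    exact Finset.sum_eq_zero fun j _ => by ring

lemma hRR (hn0 : (n:ℂ) ≠ 0) : Rm n * Rm n = Rm n := by
  ext ⟨xb, xi, xs⟩ ⟨yb, yi, ys⟩
  rw [mul_apply, sumV]
  cases xb <;> cases yb <;> simp [eps] <;> field_simp <;> ring

lemma hTT (hn0 : (n:ℂ) ≠ 0) : Tm n * Tm n = ((n:ℂ)^2) • Rm n := by
  ext ⟨xb, xi, xs⟩ ⟨yb, yi, ys⟩
  rw [mul_apply, sumV]
  cases xb <;> cases yb <;> simp [eps] <;> field_simp <;> ring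

lemma hTR (hn0 : (n:ℂ) ≠ 0) : Tm n * Rm n = Tm n := by
  ext ⟨xb, xi, xs⟩ ⟨yb, yi, ys⟩
  rw [mul_apply, sumV]
  cases xb <;> cases yb <;> simp [eps] <;> field_simp <;> ring

lemma hRT (hn0 : (n:ℂ) ≠ 0) : Rm n * Tm n = Tm n := by
  ext ⟨xb, xi, xs⟩ ⟨yb, yi, ys⟩
  rw [mul_apply, sumV]
  cases xb <;> cases yb <;> simp [eps] <;> field_simp <;> ring

lemma hQS : Qm n * Sm H = Sm H := by
  ext ⟨xb, xi, xs⟩ ⟨yb, yi, ys⟩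
  rw [mul_apply, sumV]
  cases xb <;> cases yb <;> cases xs <;> cases ys <;>
    simp [eps, Finset.sum_add_distrib, Finset.sum_ite_eq', Finset.sum_ite_eq, mul_ite, ite_mul] <;> ring

lemma hSQ : Sm H * Qm n = Sm H := by
  ext ⟨xb, xi, xs⟩ ⟨yb, yi, ys⟩
  rw [mul_apply, sumV]
  cases xb <;> cases yb <;> cases xs <;> cases ys <;>
    simp [eps, Finset.sum_add_distrib, Finset.sum_ite_eq', Finset.sum_ite_eq, mul_ite, ite_mul] <;> ring

end

noncomputable section
variable {n : ℕ} {H : Matrix (Fin n) (Fin n) ℝ}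

lemma hSS (hrow : ∀ i j, (∑ c, (H i c : ℂ) * (H j c : ℂ)) = if i = j then (n:ℂ) else 0)
    (hcol : ∀ i j, (∑ r, (H r i : ℂ) * (H r j : ℂ)) = if i = j then (n:ℂ) else 0) :
    Sm H * Sm H = (n:ℂ) • Qm n := by
  ext ⟨xb, xi, xs⟩ ⟨yb, yi, ys⟩
  rw [mul_apply, sumV]
  cases xb <;> cases yb
  · -- false false
    have h1 : ∑ j : Fin n, (Sm H (false,xi,xs) (true,j,true) * Sm H (true,j,true) (false,yi,ys)
        + Sm H (false,xi,xs) (true,j,false) * Sm H (true,j,false) (false,yi,ys))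
        = (eps xs * eps ys / 2) * ∑ r, (H r xi : ℂ) * (H r yi : ℂ) := by
      rw [Finset.mul_sum]
      refine Finset.sum_congr rfl fun j _ => ?_
      simp [eps]
      cases xs <;> cases ys <;> simp [eps] <;> ring
    have h2 : ∑ j : Fin n, (Sm H (false,xi,xs) (false,j,true) * Sm H (false,j,true) (false,yi,ys)
        + Sm H (false,xi,xs) (false,j,false) * Sm H (false,j,false) (false,yi,ys)) = 0 :=
      Finset.sum_eq_zero fun j _ => by simp
    rw [h1, h2, hcol xi yi]
    by_cases h : xi = yi <;> simp [h] <;> ring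
  · -- false true : cross block, zero
    have h1 : ∑ j : Fin n, (Sm H (false,xi,xs) (true,j,true) * Sm H (true,j,true) (true,yi,ys)
        + Sm H (false,xi,xs) (true,j,false) * Sm H (true,j,false) (true,yi,ys)) = 0 :=
      Finset.sum_eq_zero fun j _ => by simp
    have h2 : ∑ j : Fin n, (Sm H (false,xi,xs) (false,j,true) * Sm H (false,j,true) (true,yi,ys)
        + Sm H (false,xi,xs) (false,j,false) * Sm H (false,j,false) (true,yi,ys)) = 0 :=
      Finset.sum_eq_zero fun j _ => by simp
    rw [h1, h2]; simp
  · -- true false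
    have h1 : ∑ j : Fin n, (Sm H (true,xi,xs) (true,j,true) * Sm H (true,j,true) (false,yi,ys)
        + Sm H (true,xi,xs) (true,j,false) * Sm H (true,j,false) (false,yi,ys)) = 0 :=
      Finset.sum_eq_zero fun j _ => by simp
    have h2 : ∑ j : Fin n, (Sm H (true,xi,xs) (false,j,true) * Sm H (false,j,true) (false,yi,ys)
        + Sm H (true,xi,xs) (false,j,false) * Sm H (false,j,false) (false,yi,ys)) = 0 :=
      Finset.sum_eq_zero fun j _ => by simp
    rw [h1, h2]; simp
  · -- true true
    have h1 : ∑ j : Fin n, (Sm H (true,xi,xs) (true,j,true) * Sm H (true,j,true) (true,yi,ys)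
        + Sm H (true,xi,xs) (true,j,false) * Sm H (true,j,false) (true,yi,ys)) = 0 :=
      Finset.sum_eq_zero fun j _ => by simp
    have h2 : ∑ j : Fin n, (Sm H (true,xi,xs) (false,j,true) * Sm H (false,j,true) (true,yi,ys)
        + Sm H (true,xi,xs) (false,j,false) * Sm H (false,j,false) (true,yi,ys))
        = (eps xs * eps ys / 2) * ∑ c, (H xi c : ℂ) * (H yi c : ℂ) := by
      rw [Finset.mul_sum]
      refine Finset.sum_congr rfl fun j _ => ?_
      cases xs <;> cases ys <;> simp [eps] <;> ring
    rw [h1, h2, hrow xi yi]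
    by_cases h : xi = yi <;> simp [h] <;> ring

lemma adj_eq (hent : ∀ i j, H i j = 1 ∨ H i j = -1)
    {inst : DecidableRel (hadamardGraph H).Adj} :
    (hadamardGraph H).adjMatrix ℂ = Sm H + Tm n := by
  ext ⟨xb, xi, xs⟩ ⟨yb, yi, ys⟩
  rw [SimpleGraph.adjMatrix_apply]
  cases xb <;> cases yb <;>
    rcases hent xi yi with h | h <;>
    rcases hent yi xi with h' | h' <;>
    cases xs <;> cases ys <;>
    simp [hadamardGraph, SimpleGraph.fromRel_adj, signB, eps, h, h', Prod.ext_iff] <;>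
    norm_num [h, h']

end

noncomputable section
variable {n : ℕ} {H : Matrix (Fin n) (Fin n) ℝ}

def rho (n : ℕ) : ℂ := (Real.sqrt n : ℂ)

def P1 (H : Matrix (Fin n) (Fin n) ℝ) := (2:ℂ)⁻¹ • (Qm n + (rho n)⁻¹ • Sm H)
def P2 (H : Matrix (Fin n) (Fin n) ℝ) := (2:ℂ)⁻¹ • (Qm n - (rho n)⁻¹ • Sm H)
def P3 (n : ℕ) := (2:ℂ)⁻¹ • (Rm n + ((n:ℂ))⁻¹ • Tm n)
def P4 (n : ℕ) := (2:ℂ)⁻¹ • (Rm n - ((n:ℂ))⁻¹ • Tm n)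

variable (hn : 2 ≤ n)
  (hrow : ∀ i j, (∑ c, (H i c : ℂ) * (H j c : ℂ)) = if i = j then (n:ℂ) else 0)
  (hcol : ∀ i j, (∑ r, (H r i : ℂ) * (H r j : ℂ)) = if i = j then (n:ℂ) else 0)

section
include hn
lemma hn0 : (n:ℂ) ≠ 0 := Nat.cast_ne_zero.2 (by omega)

lemma hrho : rho n * rho n = (n:ℂ) := by
  rw [rho, ← Complex.ofReal_mul, Real.mul_self_sqrt (by positivity)]
  norm_num

lemma hrho0 : rho n ≠ 0 := by
  have h := hrho (n := n) hn
  intro h0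
  rw [h0, mul_zero] at h
  exact hn0 hn h.symm
end

include hn hrow hcol

lemma P11 : P1 H * P1 H = P1 H := by
  have hρ := hrho (n := n) hn
  have hρ0 := hrho0 (n := n) hn
  simp only [P1, smul_mul_assoc, mul_smul_comm, mul_add, add_mul, smul_smul,
    hQQ, hQS, hSQ, hSS hrow hcol, smul_add]
  match_scalars <;> (try rw [← hρ]) <;> field_simp <;> ring

lemma P22 : P2 H * P2 H = P2 H := by
  have hρ := hrho (n := n) hn
  have hρ0 := hrho0 (n := n) hn
  simp only [P2, smul_mul_assoc, mul_smul_comm, mul_sub, sub_mul, smul_smul,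
    hQQ, hQS, hSQ, hSS hrow hcol, smul_add, smul_sub]
  match_scalars <;> (try rw [← hρ]) <;> field_simp <;> ring

lemma P12 : P1 H * P2 H = 0 := by
  have hρ := hrho (n := n) hn
  have hρ0 := hrho0 (n := n) hn
  simp only [P1, P2, smul_mul_assoc, mul_smul_comm, mul_sub, sub_mul, mul_add, add_mul, smul_smul,
    hQQ, hQS, hSQ, hSS hrow hcol, smul_add, smul_sub]
  match_scalars <;> (try rw [← hρ]) <;> field_simp <;> ring

lemma P21 : P2 H * P1 H = 0 := by
  have hρ := hrho (n := n) hn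
  have hρ0 := hrho0 (n := n) hn
  simp only [P1, P2, smul_mul_assoc, mul_smul_comm, mul_sub, sub_mul, mul_add, add_mul, smul_smul,
    hQQ, hQS, hSQ, hSS hrow hcol, smul_add, smul_sub]
  match_scalars <;> (try rw [← hρ]) <;> field_simp <;> ring

lemma P33 : P3 n * P3 n = P3 n := by
  have h0 := hn0 (n := n) hn
  simp only [P3, smul_mul_assoc, mul_smul_comm, mul_add, add_mul, smul_smul,
    hRR h0, hRT h0, hTR h0, hTT h0, smul_add]
  match_scalars <;> field_simp <;> ring

lemma P44 : P4 n * P4 n = P4 n := by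
  have h0 := hn0 (n := n) hn
  simp only [P4, smul_mul_assoc, mul_smul_comm, mul_sub, sub_mul, smul_smul,
    hRR h0, hRT h0, hTR h0, hTT h0, smul_add, smul_sub]
  match_scalars <;> field_simp <;> ring

lemma P34 : P3 n * P4 n = 0 := by
  have h0 := hn0 (n := n) hn
  simp only [P3, P4, smul_mul_assoc, mul_smul_comm, mul_sub, sub_mul, mul_add, add_mul, smul_smul,
    hRR h0, hRT h0, hTR h0, hTT h0, smul_add, smul_sub]
  match_scalars <;> field_simp <;> ring

lemma P43 : P4 n * P3 n = 0 := by
  have h0 := hn0 (n := n) hn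
  simp only [P3, P4, smul_mul_assoc, mul_smul_comm, mul_sub, sub_mul, mul_add, add_mul, smul_smul,
    hRR h0, hRT h0, hTR h0, hTT h0, smul_add, smul_sub]
  match_scalars <;> field_simp <;> ring

lemma P13 : P1 H * P3 n = 0 := by
  simp only [P1, P3, smul_mul_assoc, mul_smul_comm, mul_add, add_mul, smul_smul,
    hQR, hQT, (hSR : Sm H * Rm n = 0), hST]
  simp

lemma P14 : P1 H * P4 n = 0 := by
  simp only [P1, P4, smul_mul_assoc, mul_smul_comm, mul_add, add_mul, mul_sub, sub_mul, smul_smul,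
    hQR, hQT, (hSR : Sm H * Rm n = 0), hST]
  simp

lemma P23 : P2 H * P3 n = 0 := by
  simp only [P2, P3, smul_mul_assoc, mul_smul_comm, mul_add, add_mul, mul_sub, sub_mul, smul_smul,
    hQR, hQT, (hSR : Sm H * Rm n = 0), hST]
  simp

lemma P24 : P2 H * P4 n = 0 := by
  simp only [P2, P4, smul_mul_assoc, mul_smul_comm, mul_add, add_mul, mul_sub, sub_mul, smul_smul,
    hQR, hQT, (hSR : Sm H * Rm n = 0), hST]
  simp

lemma P31 : P3 n * P1 H = 0 := by
  simp only [P1, P3, smul_mul_assoc, mul_smul_comm, mul_add, add_mul, mul_sub, sub_mul, smul_smul,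
    hRQ, hTQ, (hRS : Rm n * Sm H = 0), (hTS : Tm n * Sm H = 0)]
  simp

lemma P41 : P4 n * P1 H = 0 := by
  simp only [P1, P4, smul_mul_assoc, mul_smul_comm, mul_add, add_mul, mul_sub, sub_mul, smul_smul,
    hRQ, hTQ, (hRS : Rm n * Sm H = 0), (hTS : Tm n * Sm H = 0)]
  simp

lemma P32 : P3 n * P2 H = 0 := by
  simp only [P2, P3, smul_mul_assoc, mul_smul_comm, mul_add, add_mul, mul_sub, sub_mul, smul_smul,
    hRQ, hTQ, (hRS : Rm n * Sm H = 0), (hTS : Tm n * Sm H = 0)]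
  simp

lemma P42 : P4 n * P2 H = 0 := by
  simp only [P2, P4, smul_mul_assoc, mul_smul_comm, mul_add, add_mul, mul_sub, sub_mul, smul_smul,
    hRQ, hTQ, (hRS : Rm n * Sm H = 0), (hTS : Tm n * Sm H = 0)]
  simp

lemma decomp (t : ℝ) :
    (Complex.I * (t:ℂ)) • (Sm H + Tm n)
      = (I*t*rho n) • P1 H + (-(I*t*rho n)) • P2 H + (I*t*n) • P3 n + (-(I*t*(n:ℂ))) • P4 n := by
  have hρ := hrho (n := n) hn
  have hρ0 := hrho0 (n := n) hn
  have h0 := hn0 (n := n) hn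
  simp only [P1, P2, P3, P4, smul_add, smul_sub, smul_smul]
  match_scalars <;> field_simp <;> ring

end

noncomputable section
variable {n : ℕ} {H : Matrix (Fin n) (Fin n) ℝ}

lemma comm_smul {m : Type*} [Fintype m] [DecidableEq m] (a b : ℂ) (P Q : Matrix m m ℂ)
    (h1 : P * Q = 0) (h2 : Q * P = 0) : Commute (a • P) (b • Q) := by
  unfold Commute SemiconjBy
  rw [smul_mul_smul_comm, smul_mul_smul_comm, h1, h2, smul_zero, smul_zero]

lemma U_eq (hn : 2 ≤ n)
    (hent : ∀ i j, H i j = 1 ∨ H i j = -1)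
    (hrow : ∀ i j, (∑ c, (H i c : ℂ) * (H j c : ℂ)) = if i = j then (n:ℂ) else 0)
    (hcol : ∀ i j, (∑ r, (H r i : ℂ) * (H r j : ℂ)) = if i = j then (n:ℂ) else 0)
    (t : ℝ) :
    transitionMatrix (hadamardGraph H) t
      = 1 + (cexp (I*t*rho n) - 1) • P1 H + (cexp (-(I*t*rho n)) - 1) • P2 H
        + (cexp (I*t*n) - 1) • P3 n + (cexp (-(I*t*(n:ℂ))) - 1) • P4 n := by
  have hstep : transitionMatrix (hadamardGraph H) t
      = NormedSpace.exp ((Complex.I * (t:ℂ)) • (Sm H + Tm n)) := by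
    unfold transitionMatrix
    congr 1
    rw [adj_eq hent]
  rw [hstep, decomp hn hrow hcol t]
  have c12 := comm_smul (I*t*rho n) (-(I*t*rho n)) _ _ (P12 hn hrow hcol) (P21 hn hrow hcol)
  have c13 := comm_smul (I*t*rho n) (I*t*(n:ℂ)) _ _ (P13 hn hrow hcol) (P31 hn hrow hcol)
  have c14 := comm_smul (I*t*rho n) (-(I*t*(n:ℂ))) _ _ (P14 hn hrow hcol) (P41 hn hrow hcol)
  have c23 := comm_smul (-(I*t*rho n)) (I*t*(n:ℂ)) _ _ (P23 hn hrow hcol) (P32 hn hrow hcol)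
  have c24 := comm_smul (-(I*t*rho n)) (-(I*t*(n:ℂ))) _ _ (P24 hn hrow hcol) (P42 hn hrow hcol)
  have c34 := comm_smul (I*t*(n:ℂ)) (-(I*t*(n:ℂ))) _ _ (P34 hn hrow hcol) (P43 hn hrow hcol)
  have e1 := Matrix.exp_add_of_commute _ _ ((c14.add_left c24).add_left c34)
  have e2 := Matrix.exp_add_of_commute _ _ (c13.add_left c23)
  have e3 := Matrix.exp_add_of_commute _ _ c12
  rw [e1, e2, e3]
  rw [matrix_exp_smul_of_idem _ _ (P11 hn hrow hcol),
      matrix_exp_smul_of_idem _ _ (P22 hn hrow hcol),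
      matrix_exp_smul_of_idem _ _ (P33 hn hrow hcol),
      matrix_exp_smul_of_idem _ _ (P44 hn hrow hcol)]
  set E1 := cexp (I*t*rho n) - 1
  set E2 := cexp (-(I*t*rho n)) - 1
  set E3 := cexp (I*t*(n:ℂ)) - 1
  set E4 := cexp (-(I*t*(n:ℂ))) - 1
  have z12 : (E1 • P1 H) * (E2 • P2 H) = 0 := by
    rw [smul_mul_smul_comm, P12 hn hrow hcol, smul_zero]
  have e12 : (1 + E1 • P1 H) * (1 + E2 • P2 H) = 1 + (E1 • P1 H + E2 • P2 H) := by
    rw [mul_add, mul_one, add_mul, one_mul, z12, add_zero, add_assoc]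
  have z3 : (E1 • P1 H + E2 • P2 H) * (E3 • P3 n) = 0 := by
    rw [add_mul, smul_mul_smul_comm, smul_mul_smul_comm, P13 hn hrow hcol, P23 hn hrow hcol,
      smul_zero, smul_zero, add_zero]
  have e123 : (1 + (E1 • P1 H + E2 • P2 H)) * (1 + E3 • P3 n)
      = 1 + (E1 • P1 H + E2 • P2 H + E3 • P3 n) := by
    rw [mul_add, mul_one, add_mul, one_mul, z3, add_zero, add_assoc]
  have z4 : (E1 • P1 H + E2 • P2 H + E3 • P3 n) * (E4 • P4 n) = 0 := by
    rw [add_mul, add_mul, smul_mul_smul_comm, smul_mul_smul_comm, smul_mul_smul_comm,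
      P14 hn hrow hcol, P24 hn hrow hcol, P34 hn hrow hcol]
    simp
  have e1234 : (1 + (E1 • P1 H + E2 • P2 H + E3 • P3 n)) * (1 + E4 • P4 n)
      = 1 + (E1 • P1 H + E2 • P2 H + E3 • P3 n + E4 • P4 n) := by
    rw [mul_add, mul_one, add_mul, one_mul, z4, add_zero, add_assoc]
  rw [e12, e123, e1234]
  abel

end

noncomputable section
variable {n : ℕ} {H : Matrix (Fin n) (Fin n) ℝ}

lemma n_even (hn : 2 ≤ n) (hent : ∀ i j, H i j = 1 ∨ H i j = -1)
    (hHad : H * Hᵀ = (n : ℝ) • 1) : Even n := by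
  set i : Fin n := ⟨0, by omega⟩
  set j : Fin n := ⟨1, by omega⟩
  have hij : i ≠ j := by simp [i, j, Fin.ext_iff]
  have h01 : ∑ c, H i c * H j c = 0 := by
    have h := congrFun (congrFun hHad i) j
    rw [Matrix.mul_apply] at h
    simpa [Matrix.transpose_apply, Matrix.smul_apply, Matrix.one_apply, hij] using h
  have hP : ∀ c, H i c * H j c = 1 ∨ H i c * H j c = -1 := by
    intro c
    rcases hent i c with h | h <;> rcases hent j c with h' | h' <;> simp [h, h'] <;> norm_num
  set Pset := Finset.univ.filter (fun c => H i c * H j c = 1) with hPset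
  have hsplit := Finset.sum_filter_add_sum_filter_not Finset.univ
    (fun c => H i c * H j c = 1) (fun c => H i c * H j c)
  have h1 : ∑ c ∈ Pset, H i c * H j c = (Pset.card : ℝ) := by
    rw [Finset.sum_congr rfl (fun c hc => (Finset.mem_filter.1 hc).2)]
    simp
    rfl
  have h2 : ∑ c ∈ Finset.univ.filter (fun c => ¬(H i c * H j c = 1)), H i c * H j c
      = -((Finset.univ.filter (fun c => ¬(H i c * H j c = 1))).card : ℝ) := by
    rw [Finset.sum_congr rfl (fun c hc => show H i c * H j c = -1 from
      (hP c).resolve_left (Finset.mem_filter.1 hc).2)]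
    simp
  rw [h1, h2, h01] at hsplit
  have hcard : Pset.card + (Finset.univ.filter (fun c => ¬(H i c * H j c = 1))).card = n := by
    rw [Finset.card_filter_add_card_filter_not]
    simp
  have : (Pset.card : ℝ) = ((Finset.univ.filter (fun c => ¬(H i c * H j c = 1))).card : ℝ) := by
    linarith
  have heq : Pset.card = (Finset.univ.filter (fun c => ¬(H i c * H j c = 1))).card := by
    exact_mod_cast this
  exact ⟨Pset.card, by omega⟩

lemma forward_pst (hn : 2 ≤ n)
    (hent : ∀ i j, H i j = 1 ∨ H i j = -1)
    (hHad : H * Hᵀ = (n : ℝ) • 1)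
    (hrow : ∀ i j, (∑ c, (H i c : ℂ) * (H j c : ℂ)) = if i = j then (n:ℂ) else 0)
    (hcol : ∀ i j, (∑ r, (H r i : ℂ) * (H r j : ℂ)) = if i = j then (n:ℂ) else 0)
    (s : ℕ) (hsq : n = s ^ 2) (k : Bool) (i : Fin n) :
    HasPST (hadamardGraph H) (k, i, true) (k, i, false) (Real.pi / Real.sqrt (n : ℝ)) := by
  set t : ℝ := Real.pi / Real.sqrt (n : ℝ) with htdef
  have hs0 : Real.sqrt (n : ℝ) > 0 := Real.sqrt_pos.2 (by positivity)
  have hsne : Real.sqrt (n : ℝ) ≠ 0 := ne_of_gt hs0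
  -- s is even
  have hne : Even n := n_even hn hent hHad
  have hseven : Even s := by
    rcases Nat.even_pow.mp (hsq ▸ hne) with ⟨h, _⟩
    exact h
  obtain ⟨m, hm⟩ := hseven
  -- sqrt n = s
  have hsqrt : Real.sqrt (n : ℝ) = (s : ℝ) := by
    rw [hsq]
    push_cast
    exact Real.sqrt_sq (by positivity)
  -- exponent values
  have hE1 : I * (t:ℂ) * rho n = (Real.pi : ℂ) * I := by
    have h' : t * Real.sqrt (n:ℝ) = Real.pi := by
      rw [htdef, div_mul_cancel₀ _ hsne]
    have h2 : ((t : ℝ) : ℂ) * ((Real.sqrt (n:ℝ) : ℝ) : ℂ) = ((Real.pi : ℝ) : ℂ) := by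
      rw [← Complex.ofReal_mul, h']
    rw [rho, mul_assoc, h2, mul_comm]
  have htn : t * (n : ℝ) = (m : ℝ) * (2 * Real.pi) := by
    have hsval : (s:ℝ) = 2 * m := by exact_mod_cast hm ▸ (by push_cast; ring : ((m + m : ℕ) : ℝ) = 2 * m)
    rw [htdef, hsqrt, hsq]
    push_cast
    rw [hsval]
    have hmne : (m:ℝ) ≠ 0 := by
      have : m ≠ 0 := by
        rintro rfl
        simp only [Nat.add_zero] at hm
        rw [hm] at hsq
        simp at hsq
        omega
      exact_mod_cast this
    field_simp
  have hE3 : I * (t:ℂ) * (n:ℂ) = ((m : ℤ) : ℂ) * (2 * (Real.pi:ℂ) * I) := by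
    rw [show I * (t:ℂ) * (n:ℂ) = ((t * (n:ℝ) : ℝ) : ℂ) * I by push_cast; ring, htn]
    push_cast
    ring
  have he1 : cexp (I * (t:ℂ) * rho n) = -1 := by rw [hE1, Complex.exp_pi_mul_I]
  have he2 : cexp (-(I * (t:ℂ) * rho n)) = -1 := by
    rw [Complex.exp_neg, he1]
    norm_num
  have he3 : cexp (I * (t:ℂ) * (n:ℂ)) = 1 := by rw [hE3, Complex.exp_int_mul_two_pi_mul_I (m : ℤ)]
  have he4 : cexp (-(I * (t:ℂ) * (n:ℂ))) = 1 := by rw [Complex.exp_neg, he3]; norm_num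
  have hU := U_eq hn hent hrow hcol t
  rw [he1, he2, he3, he4] at hU
  have hUQ : transitionMatrix (hadamardGraph H) t = 1 + (-2 : ℂ) • Qm n := by
    rw [hU]
    simp only [P1, P2, P3, P4]
    norm_num
    module
  refine ⟨by simp, 1, ?_⟩
  rw [hUQ]
  funext x
  obtain ⟨xb, xi, xs⟩ := x
  rw [Matrix.mulVec_single]
  simp only [Matrix.add_apply, Matrix.smul_apply, Matrix.one_apply, Qm_apply, one_smul]
  by_cases h1 : xb = k <;> by_cases h2 : xi = i <;>
    cases xs <;>
    simp [h1, h2, Pi.single_apply, Prod.ext_iff, eps] <;>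
    norm_num

end

noncomputable section
variable {n : ℕ} {H : Matrix (Fin n) (Fin n) ℝ}

lemma converse_pst (hn : 2 ≤ n)
    (hent : ∀ i j, H i j = 1 ∨ H i j = -1)
    (hrow : ∀ i j, (∑ c, (H i c : ℂ) * (H j c : ℂ)) = if i = j then (n:ℂ) else 0)
    (hcol : ∀ i j, (∑ r, (H r i : ℂ) * (H r j : ℂ)) = if i = j then (n:ℂ) else 0)
    (u v : Bool × Fin n × Bool) (t : ℝ) (ht : 0 < t)
    (h : HasPST (hadamardGraph H) u v t) : ∃ s : ℕ, n = s ^ 2 := by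
  obtain ⟨hne, μ, hμ⟩ := h
  have hU := U_eq hn hent hrow hcol t
  obtain ⟨k, i, si⟩ := u
  rw [Matrix.mulVec_single] at hμ
  have hent' : ∀ x, transitionMatrix (hadamardGraph H) t x (k,i,si)
      = μ * (if x = v then 1 else 0) := by
    intro x
    have hx := congrFun hμ x
    simpa [Pi.single_apply] using hx
  have hj : ∃ j : Fin n, j ≠ i := by
    by_cases h0 : i = ⟨0, by omega⟩
    · exact ⟨⟨1, by omega⟩, by simp [h0, Fin.ext_iff]⟩
    · exact ⟨⟨0, by omega⟩, fun hh => h0 hh.symm⟩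
  obtain ⟨j, hji⟩ := hj
  have hxv : ∃ s' : Bool, (k, j, s') ≠ v := by
    by_cases hv : v = (k, j, true)
    · exact ⟨false, by rw [hv]; simp⟩
    · exact ⟨true, fun hh => hv hh.symm⟩
  obtain ⟨s', hxv⟩ := hxv
  have e1 := hent' (k, j, s')
  rw [hU] at e1
  simp only [Matrix.add_apply, Matrix.smul_apply, Matrix.one_apply, P1, P2, P3, P4,
    Qm_apply, Rm_apply, Sm_apply, Tm_apply, Pi.smul_apply, smul_eq_mul] at e1
  rw [if_neg hxv] at e1
  simp [hji, Prod.ext_iff] at e1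
  have e2 := hent' (k, i, si)
  rw [hU] at e2
  simp only [Matrix.add_apply, Matrix.smul_apply, Matrix.one_apply, P1, P2, P3, P4,
    Qm_apply, Rm_apply, Sm_apply, Tm_apply, Pi.smul_apply, smul_eq_mul] at e2
  rw [if_neg (show ((k:Bool), i, si) ≠ v from hne)] at e2
  simp [Prod.ext_iff] at e2
  -- derive beta = 1
  have hn0' : (n:ℂ) ≠ 0 := Nat.cast_ne_zero.2 (by omega)
  have hbinv : cexp (-(Complex.I * ↑t * (n:ℂ))) = (cexp (Complex.I * ↑t * (n:ℂ)))⁻¹ :=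
    Complex.exp_neg _
  have hb0 : cexp (Complex.I * ↑t * (n:ℂ)) ≠ 0 := Complex.exp_ne_zero _
  rw [hbinv] at e1 e2
  have hquadb : (cexp (Complex.I * ↑t * (n:ℂ)) - 1) ^ 2 * (2 * ((n:ℂ) * 2)) = 0 := by
    field_simp at e1
    linear_combination (4 * (n:ℂ)) * e1
  have hβ : cexp (Complex.I * ↑t * (n:ℂ)) = 1 := by
    rcases mul_eq_zero.1 hquadb with hq | hq
    · exact sub_eq_zero.1 ((pow_eq_zero_iff (by norm_num : 2 ≠ 0)).mp hq)
    · exact absurd hq (by simp [hn0'])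
  -- derive alpha = -1
  have hainv : cexp (-(Complex.I * ↑t * rho n)) = (cexp (Complex.I * ↑t * rho n))⁻¹ :=
    Complex.exp_neg _
  have ha0 : cexp (Complex.I * ↑t * rho n) ≠ 0 := Complex.exp_ne_zero _
  rw [hainv, hβ] at e2
  have hquada : (cexp (Complex.I * ↑t * rho n) + 1) ^ 2 * 4 = 0 := by
    field_simp at e2
    have h' : (cexp (Complex.I * ↑t * rho n) + 1) ^ 2 * (n:ℂ) = 0 := by linear_combination e2
    rcases mul_eq_zero.1 h' with h'' | h''
    · rw [h'']; ring
    · exact absurd h'' hn0'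
  have hα : cexp (Complex.I * ↑t * rho n) = -1 := by
    rcases mul_eq_zero.1 hquada with hq | hq
    · have h := (pow_eq_zero_iff (by norm_num : 2 ≠ 0)).mp hq
      linear_combination h
    · exact absurd hq (by norm_num)
  -- turn into real equations
  obtain ⟨mz, hmz⟩ := Complex.exp_eq_one_iff.1 hβ
  have htn : t * (n:ℝ) = (mz:ℝ) * (2 * Real.pi) := by
    have h' : ((t * (n:ℝ) : ℝ) : ℂ) = (((mz:ℝ) * (2 * Real.pi) : ℝ) : ℂ) := by
      apply mul_right_cancel₀ Complex.I_ne_zero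
      push_cast
      linear_combination hmz
    exact_mod_cast h'
  have hsq2 : cexp (Complex.I * ↑t * rho n + Complex.I * ↑t * rho n) = 1 := by
    rw [Complex.exp_add, hα]
    norm_num
  obtain ⟨mw, hmw⟩ := Complex.exp_eq_one_iff.1 hsq2
  have hts : 2 * (t * Real.sqrt (n:ℝ)) = (mw:ℝ) * (2 * Real.pi) := by
    have h' : ((2 * (t * Real.sqrt (n:ℝ)) : ℝ) : ℂ) = (((mw:ℝ) * (2 * Real.pi) : ℝ) : ℂ) := by
      apply mul_right_cancel₀ Complex.I_ne_zero
      rw [rho] at hmw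
      push_cast
      linear_combination hmw
    exact_mod_cast h'
  have hsroot : Real.sqrt (n:ℝ) * Real.sqrt (n:ℝ) = (n:ℝ) :=
    Real.mul_self_sqrt (by positivity)
  have hs0 : (0:ℝ) < Real.sqrt (n:ℝ) := Real.sqrt_pos.2 (by positivity)
  have hmw0 : (mw:ℝ) ≠ 0 := by
    intro h0
    rw [h0] at hts
    nlinarith [Real.pi_pos]
  -- sqrt n * mw = 2 * mz
  have hkey : Real.sqrt (n:ℝ) * (mw:ℝ) = 2 * (mz:ℝ) := by
    have hpi := Real.pi_ne_zero
    apply mul_right_cancel₀ hpi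
    nlinarith [hts, htn, hsroot]
  have hrat : Real.sqrt (n:ℝ) = ((2 * mz : ℤ):ℝ) / ((mw:ℤ):ℝ) := by
    rw [eq_div_iff hmw0]
    push_cast
    linarith [hkey]
  have hnotirr : ¬ Irrational (Real.sqrt (n:ℝ)) := fun hirr =>
    hirr ⟨(2 * mz : ℚ) / (mw : ℚ), by rw [hrat]; push_cast; ring⟩
  have hsqn : IsSquare n := by
    by_contra hns
    exact hnotirr (irrational_sqrt_natCast_iff.mpr hns)
  obtain ⟨r, hr⟩ := hsqn
  exact ⟨r, by rw [hr]; ring⟩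

end
end HadamardPSTAux


/-- A Hadamard graph `X(H)` (for an `n × n` Hadamard matrix `H`,
`n ≥ 2`) admits perfect state transfer iff `n` is a perfect square, and in that
case it occurs at time `π/√n` between the two vertices of each row pair and each
column pair. -/
theorem stmt_11 (n : ℕ) (hn : 2 ≤ n)
    (H : Matrix (Fin n) (Fin n) ℝ)
    (hent : ∀ i j, H i j = 1 ∨ H i j = -1)
    (hHad : H * Hᵀ = (n : ℝ) • 1) :
    ((∃ (u v : Bool × Fin n × Bool) (t : ℝ), 0 < t ∧ HasPST (hadamardGraph H) u v t) ↔
      ∃ s : ℕ, n = s ^ 2) ∧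
    ((∃ s : ℕ, n = s ^ 2) → ∀ (k : Bool) (i : Fin n),
      HasPST (hadamardGraph H) (k, i, true) (k, i, false)
        (Real.pi / Real.sqrt (n : ℝ))) := by
  have hn0R : (n:ℝ) ≠ 0 := Nat.cast_ne_zero.2 (by omega)
  have hrowR : ∀ i j, (∑ c, H i c * H j c) = if i = j then (n:ℝ) else 0 := by
    intro i j
    have h := congrFun (congrFun hHad i) j
    rw [Matrix.mul_apply] at h
    simpa [Matrix.transpose_apply, Matrix.smul_apply, Matrix.one_apply, mul_ite] using h
  have hHadT : Hᵀ * H = (n:ℝ) • 1 := by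
    have h1 : H * ((n:ℝ)⁻¹ • Hᵀ) = 1 := by
      rw [Matrix.mul_smul, hHad, smul_smul, inv_mul_cancel₀ hn0R, one_smul]
    have h2 := mul_eq_one_comm.mp h1
    have h3 : (n:ℝ) • (((n:ℝ)⁻¹ • Hᵀ) * H) = (n:ℝ) • (1 : Matrix (Fin n) (Fin n) ℝ) := by
      rw [h2]
    rwa [Matrix.smul_mul, smul_smul, mul_inv_cancel₀ hn0R, one_smul] at h3
  have hcolR : ∀ i j, (∑ r, H r i * H r j) = if i = j then (n:ℝ) else 0 := by
    intro i j
    have h := congrFun (congrFun hHadT i) j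
    rw [Matrix.mul_apply] at h
    simpa [Matrix.transpose_apply, Matrix.smul_apply, Matrix.one_apply, mul_ite,
      mul_comm] using h
  have hrow : ∀ i j, (∑ c, (H i c : ℂ) * (H j c : ℂ)) = if i = j then (n:ℂ) else 0 := by
    intro i j
    have : (∑ c, (H i c : ℂ) * (H j c : ℂ)) = (((∑ c, H i c * H j c : ℝ)) : ℂ) := by
      push_cast
      rfl
    rw [this, hrowR i j]
    split_ifs <;> push_cast <;> rfl
  have hcol : ∀ i j, (∑ r, (H r i : ℂ) * (H r j : ℂ)) = if i = j then (n:ℂ) else 0 := by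
    intro i j
    have : (∑ r, (H r i : ℂ) * (H r j : ℂ)) = (((∑ r, H r i * H r j : ℝ)) : ℂ) := by
      push_cast
      rfl
    rw [this, hcolR i j]
    split_ifs <;> push_cast <;> rfl
  constructor
  · constructor
    · rintro ⟨u, v, t, ht, hPST⟩
      exact converse_pst hn hent hrow hcol u v t ht hPST
    · rintro ⟨s, hs⟩
      refine ⟨(true, ⟨0, by omega⟩, true), (true, ⟨0, by omega⟩, false),
        Real.pi / Real.sqrt (n:ℝ), ?_,
        forward_pst hn hent hHad hrow hcol s hs true ⟨0, by omega⟩⟩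
      have : (0:ℝ) < Real.sqrt (n:ℝ) := Real.sqrt_pos.2 (by positivity)
      exact div_pos Real.pi_pos this
  · rintro ⟨s, hs⟩ k i
    exact forward_pst hn hent hHad hrow hcol s hs k i
end
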